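/- arXiv:2003.13771 — 8 statements merged into one kernel-verified Lean document; each statement's English description precedes it below -/
import Mathlib

section
/- For every bounded measurable f : ℝ × 𝒲 → ℝ, E[H₀(A, W) f(A, W)] = E[f(A + δ(W), W)], where H₀(a, w) = q₀(a − δ(w), w)/q₀(a, w) is the shifted-to-natural density ratio. -/
open MeasureTheory

private lemma iSup_ofReal_min_mul {h c : ℝ} (_hh : 0 ≤ h) (hc : 0 ≤ c) :
    ⨆ n : ℕ, ENNReal.ofReal (min h (n : ℝ) * c) = ENNReal.ofReal (h * c) := by
  apply le_antisymm
  · exact iSup_le fun n => ENNReal.ofReal_le_ofReal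
      (mul_le_mul_of_nonneg_right (min_le_left _ _) hc)
  · calc ENNReal.ofReal (h * c)
        = ENNReal.ofReal (min h ((⌈h⌉₊ : ℕ) : ℝ) * c) := by
          rw [min_eq_left (Nat.le_ceil h)]
      _ ≤ ⨆ n : ℕ, ENNReal.ofReal (min h (n : ℝ) * c) :=
          le_iSup (fun n : ℕ => ENNReal.ofReal (min h (n : ℝ) * c)) ⌈h⌉₊

/-- Lebesgue-integral (nonnegative) upgrade of the density hypothesis. -/
private lemma density_lintegral_aux
    {Ω 𝒲 : Type*} [MeasurableSpace Ω] [MeasurableSpace 𝒲]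
    (P : Measure Ω) [IsProbabilityMeasure P]
    (W : Ω → 𝒲) (hW : Measurable W)
    (A : Ω → ℝ) (hA : Measurable A)
    (q₀ : ℝ × 𝒲 → ℝ) (hq₀_meas : Measurable q₀)
    (hq₀_nonneg : ∀ x, 0 ≤ q₀ x)
    (hq₀_density : ∀ f : ℝ × 𝒲 → ℝ, Measurable f → (∃ M : ℝ, ∀ x, |f x| ≤ M) →
      ∫ ω, f (A ω, W ω) ∂P = ∫ ω, (∫ a : ℝ, f (a, W ω) * q₀ (a, W ω)) ∂P)
    (g : ℝ × 𝒲 → ℝ) (hg : Measurable g) (hg0 : ∀ x, 0 ≤ g x)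
    (M : ℝ) (hgM : ∀ x, g x ≤ M) :
    ∫⁻ ω, ENNReal.ofReal (g (A ω, W ω)) ∂P
      = ∫⁻ ω, (∫⁻ a, ENNReal.ofReal (g (a, W ω)) * ENNReal.ofReal (q₀ (a, W ω))) ∂P := by
  set M' : ℝ := max M 0 with hM'
  have hM'0 : 0 ≤ M' := le_max_right _ _
  have hgM' : ∀ x, g x ≤ M' := fun x => le_trans (hgM x) (le_max_left _ _)
  set s : ℕ → Set (ℝ × 𝒲) := fun n => {x | q₀ x ≤ (n : ℝ) ∧ |x.1| ≤ (n : ℝ)} with hs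
  have hsmeas : ∀ n, MeasurableSet (s n) := fun n =>
    (measurableSet_le hq₀_meas measurable_const).inter
      (measurableSet_le measurable_fst.abs measurable_const)
  set gN : ℕ → ℝ × 𝒲 → ℝ := fun n => (s n).indicator g with hgNdef
  have hgNmeas : ∀ n, Measurable (gN n) := fun n => hg.indicator (hsmeas n)
  have hgN0 : ∀ n x, 0 ≤ gN n x := fun n x => Set.indicator_nonneg (fun y _ => hg0 y) x
  have hgNle : ∀ n x, gN n x ≤ g x := fun n x => Set.indicator_le_self' (fun y _ => hg0 y) x
  have hT : Measurable fun ω => (A ω, W ω) := hA.prodMk hW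
  set F : ℕ → ℝ × 𝒲 → ENNReal :=
    fun n x => ENNReal.ofReal (gN n x) * ENNReal.ofReal (q₀ x) with hF
  have hFmeas : ∀ n, Measurable (F n) := fun n =>
    ((hgNmeas n).ennreal_ofReal).mul hq₀_meas.ennreal_ofReal
  set J : ℕ → Ω → ENNReal := fun n ω => ∫⁻ a, F n (a, W ω) with hJ
  have hJmeas : ∀ n, Measurable (J n) := fun n =>
    ((hFmeas n).lintegral_prod_left').comp hW
  -- pointwise bound on J
  have hJle : ∀ n ω, J n ω ≤ ENNReal.ofReal (M' * n) * volume (Set.Icc (-(n : ℝ)) n) := by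
    intro n ω
    calc J n ω ≤ ∫⁻ a, (Set.Icc (-(n : ℝ)) (n : ℝ)).indicator
          (fun _ => ENNReal.ofReal (M' * n)) a := by
          apply lintegral_mono
          intro a
          by_cases hx : (a, W ω) ∈ s n
          · have ha : a ∈ Set.Icc (-(n : ℝ)) (n : ℝ) := by
              rcases abs_le.mp hx.2 with ⟨h1, h2⟩
              exact ⟨h1, h2⟩
            rw [Set.indicator_of_mem ha]
            have h1 : gN n (a, W ω) = g (a, W ω) := Set.indicator_of_mem hx g
            rw [hF]
            simp only
            rw [h1, ← ENNReal.ofReal_mul (hg0 _)]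
            exact ENNReal.ofReal_le_ofReal
              (mul_le_mul (hgM' _) hx.1 (hq₀_nonneg _) hM'0)
          · have h0 : gN n (a, W ω) = 0 := Set.indicator_of_notMem hx g
            rw [hF]
            simp only
            rw [h0, ENNReal.ofReal_zero, zero_mul]
            exact zero_le
      _ = ENNReal.ofReal (M' * n) * volume (Set.Icc (-(n : ℝ)) n) :=
          lintegral_indicator_const measurableSet_Icc _
  have hC : ∀ n : ℕ, ENNReal.ofReal (M' * n) * volume (Set.Icc (-(n : ℝ)) n) < ⊤ := by
    intro n
    rw [Real.volume_Icc]
    exact ENNReal.mul_lt_top ENNReal.ofReal_lt_top ENNReal.ofReal_lt_top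
  -- the key identity for each n
  have key : ∀ n : ℕ, ∫⁻ ω, ENNReal.ofReal (gN n (A ω, W ω)) ∂P = ∫⁻ ω, J n ω ∂P := by
    intro n
    have hbd : ∀ x, |gN n x| ≤ M' := fun x => by
      rw [abs_of_nonneg (hgN0 n x)]
      exact le_trans (hgNle n x) (hgM' x)
    have h1 := hq₀_density (gN n) (hgNmeas n) ⟨M', hbd⟩
    have hint : Integrable (fun ω => gN n (A ω, W ω)) P :=
      ⟨((hgNmeas n).comp hT).aestronglyMeasurable,
        HasFiniteIntegral.of_bounded (C := M') (ae_of_all _ fun ω => by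
          rw [Real.norm_eq_abs]; exact hbd _)⟩
    have hL : ENNReal.ofReal (∫ ω, gN n (A ω, W ω) ∂P)
        = ∫⁻ ω, ENNReal.ofReal (gN n (A ω, W ω)) ∂P :=
      ofReal_integral_eq_lintegral_ofReal hint (ae_of_all _ fun ω => hgN0 n _)
    have hInner : ∀ ω, (∫ a : ℝ, gN n (a, W ω) * q₀ (a, W ω)) = (J n ω).toReal := by
      intro ω
      rw [integral_eq_lintegral_of_nonneg_ae
        (ae_of_all _ fun a => mul_nonneg (hgN0 n _) (hq₀_nonneg _))
        (((hgNmeas n).comp (measurable_prodMk_right)).mul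
          (hq₀_meas.comp (measurable_prodMk_right))).aestronglyMeasurable]
      congr 1
      apply lintegral_congr
      intro a
      simp only [hF]
      rw [ENNReal.ofReal_mul (hgN0 n _)]
    have hJfin : ∀ ω, J n ω < ⊤ := fun ω => lt_of_le_of_lt (hJle n ω) (hC n)
    have hRfin : ∫⁻ ω, J n ω ∂P ≠ ⊤ := by
      refine ne_of_lt (lt_of_le_of_lt (lintegral_mono fun ω => hJle n ω) ?_)
      rw [lintegral_const]
      exact ENNReal.mul_lt_top (hC n) (measure_lt_top _ _)
    have hR : ∫ ω, (J n ω).toReal ∂P = (∫⁻ ω, J n ω ∂P).toReal :=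
      integral_toReal ((hJmeas n).aemeasurable) (ae_of_all _ hJfin)
    calc ∫⁻ ω, ENNReal.ofReal (gN n (A ω, W ω)) ∂P
        = ENNReal.ofReal (∫ ω, gN n (A ω, W ω) ∂P) := hL.symm
      _ = ENNReal.ofReal (∫ ω, (∫ a : ℝ, gN n (a, W ω) * q₀ (a, W ω)) ∂P) := by rw [h1]
      _ = ENNReal.ofReal ((∫⁻ ω, J n ω ∂P).toReal) := by
          simp only [hInner]
          rw [hR]
      _ = ∫⁻ ω, J n ω ∂P := ENNReal.ofReal_toReal hRfin
  -- pointwise sup of gN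
  have hptL : ∀ x : ℝ × 𝒲, (⨆ n : ℕ, ENNReal.ofReal (gN n x)) = ENNReal.ofReal (g x) := by
    intro x
    apply le_antisymm (iSup_le fun n => ENNReal.ofReal_le_ofReal (hgNle n x))
    have hn : x ∈ s ⌈max (q₀ x) |x.1|⌉₊ :=
      ⟨le_trans (le_max_left _ _) (Nat.le_ceil _),
        le_trans (le_max_right _ _) (Nat.le_ceil _)⟩
    calc ENNReal.ofReal (g x)
        = ENNReal.ofReal (gN ⌈max (q₀ x) |x.1|⌉₊ x) := by
          rw [hgNdef]; simp only; rw [Set.indicator_of_mem hn]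
      _ ≤ ⨆ n : ℕ, ENNReal.ofReal (gN n x) :=
          le_iSup (fun n : ℕ => ENNReal.ofReal (gN n x)) _
  have hmonoGN : ∀ x : ℝ × 𝒲, Monotone fun n : ℕ => gN n x := by
    intro x n m hnm
    by_cases hx : x ∈ s n
    · have hx' : x ∈ s m :=
        ⟨le_trans hx.1 (Nat.cast_le.mpr hnm), le_trans hx.2 (Nat.cast_le.mpr hnm)⟩
      simp only [hgNdef, Set.indicator_of_mem hx, Set.indicator_of_mem hx', le_refl]
    · simp only [hgNdef, Set.indicator_of_notMem hx]
      exact hgN0 m x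
  -- LHS via monotone convergence
  have hLHS : ∫⁻ ω, ENNReal.ofReal (g (A ω, W ω)) ∂P
      = ⨆ n : ℕ, ∫⁻ ω, ENNReal.ofReal (gN n (A ω, W ω)) ∂P := by
    rw [← lintegral_iSup (f := fun (n : ℕ) (ω : Ω) => ENNReal.ofReal (gN n (A ω, W ω)))
      (fun n => ((hgNmeas n).comp hT).ennreal_ofReal)
      (fun n m hnm ω => ENNReal.ofReal_le_ofReal (hmonoGN _ hnm))]
    exact lintegral_congr fun ω => (hptL _).symm
  -- RHS via monotone convergence (twice)
  have hRHSinner : ∀ ω, ∫⁻ a, ENNReal.ofReal (g (a, W ω)) * ENNReal.ofReal (q₀ (a, W ω))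
      = ⨆ n : ℕ, J n ω := by
    intro ω
    rw [hJ]
    simp only
    rw [← lintegral_iSup (f := fun (n : ℕ) (a : ℝ) => F n (a, W ω))
      (fun n => (hFmeas n).comp (measurable_prodMk_right))
      (fun n m hnm a => mul_le_mul_left
        (ENNReal.ofReal_le_ofReal (hmonoGN _ hnm)) _)]
    apply lintegral_congr
    intro a
    rw [← ENNReal.iSup_mul, hptL (a, W ω)]
  have hJmono : Monotone J := by
    intro n m hnm ω
    exact lintegral_mono fun a => mul_le_mul_left
      (ENNReal.ofReal_le_ofReal (hmonoGN _ hnm)) _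
  calc ∫⁻ ω, ENNReal.ofReal (g (A ω, W ω)) ∂P
      = ⨆ n : ℕ, ∫⁻ ω, ENNReal.ofReal (gN n (A ω, W ω)) ∂P := hLHS
    _ = ⨆ n : ℕ, ∫⁻ ω, J n ω ∂P := by exact iSup_congr key
    _ = ∫⁻ ω, ⨆ n : ℕ, J n ω ∂P := (lintegral_iSup hJmeas hJmono).symm
    _ = ∫⁻ ω, (∫⁻ a, ENNReal.ofReal (g (a, W ω)) * ENNReal.ofReal (q₀ (a, W ω))) ∂P :=
        lintegral_congr fun ω => (hRHSinner ω).symm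

/-- Reweighting identity: `E[H₀(A,W) f(A,W)] = E[f(A + δ(W), W)]` where
`H₀(a,w) = q₀(a - δ(w), w) / q₀(a, w)` is the shifted-to-natural density ratio. -/
theorem density_ratio_reweighting
    {Ω 𝒲 : Type*} [MeasurableSpace Ω] [MeasurableSpace 𝒲]
    (P : Measure Ω) [IsProbabilityMeasure P]
    (W : Ω → 𝒲) (hW : Measurable W)
    (A : Ω → ℝ) (hA : Measurable A)
    (q₀ : ℝ × 𝒲 → ℝ) (hq₀_meas : Measurable q₀)
    (hq₀_nonneg : ∀ x, 0 ≤ q₀ x)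
    (hq₀_density : ∀ f : ℝ × 𝒲 → ℝ, Measurable f → (∃ M : ℝ, ∀ x, |f x| ≤ M) →
      ∫ ω, f (A ω, W ω) ∂P = ∫ ω, (∫ a : ℝ, f (a, W ω) * q₀ (a, W ω)) ∂P)
    (δ : 𝒲 → ℝ) (hδ : Measurable δ)
    (hq₀_pos : ∀ x, 0 < q₀ x)
    (H₀ : ℝ × 𝒲 → ℝ)
    (hH₀ : ∀ a w, H₀ (a, w) = q₀ (a - δ w, w) / q₀ (a, w))
    (f : ℝ × 𝒲 → ℝ) (hf_meas : Measurable f) (hf_bd : ∃ M : ℝ, ∀ x, |f x| ≤ M) :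
    ∫ ω, H₀ (A ω, W ω) * f (A ω, W ω) ∂P
      = ∫ ω, f (A ω + δ (W ω), W ω) ∂P := by
  obtain ⟨M, hM⟩ := hf_bd
  have hT : Measurable fun ω => (A ω, W ω) := hA.prodMk hW
  have hH₀_eq : H₀ = fun x : ℝ × 𝒲 => q₀ (x.1 - δ x.2, x.2) / q₀ x :=
    funext fun x => hH₀ x.1 x.2
  have hH₀_meas : Measurable H₀ := by
    rw [hH₀_eq]
    exact (hq₀_meas.comp
      ((measurable_fst.sub (hδ.comp measurable_snd)).prodMk measurable_snd)).div hq₀_meas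
  have hH₀_nonneg : ∀ x : ℝ × 𝒲, 0 ≤ H₀ x := fun x => by
    rw [hH₀ x.1 x.2]
    exact div_nonneg (hq₀_nonneg _) (hq₀_nonneg _)
  -- main lintegral identity for nonnegative bounded g
  have main_nonneg : ∀ g : ℝ × 𝒲 → ℝ, Measurable g → (∀ x, 0 ≤ g x) →
      ∀ N : ℝ, (∀ x, g x ≤ N) →
      ∫⁻ ω, ENNReal.ofReal (H₀ (A ω, W ω) * g (A ω, W ω)) ∂P
        = ∫⁻ ω, ENNReal.ofReal (g (A ω + δ (W ω), W ω)) ∂P := by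
    intro g hg hg0 N hgN
    have hN' : ∀ x, g x ≤ max N 0 := fun x => le_trans (hgN x) (le_max_left _ _)
    -- truncated identity for each n
    have hhn_meas : ∀ n : ℕ, Measurable fun x : ℝ × 𝒲 => min (H₀ x) (n : ℝ) * g x :=
      fun n => (hH₀_meas.min measurable_const).mul hg
    have hhn0 : ∀ (n : ℕ) (x : ℝ × 𝒲), 0 ≤ min (H₀ x) (n : ℝ) * g x := fun n x =>
      mul_nonneg (le_min (hH₀_nonneg x) n.cast_nonneg) (hg0 x)
    have step1 : ∀ n : ℕ,
        ∫⁻ ω, ENNReal.ofReal (min (H₀ (A ω, W ω)) (n : ℝ) * g (A ω, W ω)) ∂P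
          = ∫⁻ ω, (∫⁻ a, ENNReal.ofReal (min (H₀ (a, W ω)) (n : ℝ) * g (a, W ω))
              * ENNReal.ofReal (q₀ (a, W ω))) ∂P := by
      intro n
      refine density_lintegral_aux P W hW A hA q₀ hq₀_meas hq₀_nonneg hq₀_density
        (fun x => min (H₀ x) (n : ℝ) * g x) (hhn_meas n) (hhn0 n) ((n : ℝ) * max N 0)
        (fun x => by
          have h1 : |min (H₀ x) (n : ℝ) * g x| ≤ (n : ℝ) * max N 0 := by
            rw [abs_of_nonneg (hhn0 n x)]
            exact mul_le_mul (min_le_right _ _) (hN' x) (hg0 x) n.cast_nonneg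
          exact (abs_le.mp h1).2)
    -- LHS monotone convergence
    have supL : ∫⁻ ω, ENNReal.ofReal (H₀ (A ω, W ω) * g (A ω, W ω)) ∂P
        = ⨆ n : ℕ, ∫⁻ ω, ENNReal.ofReal (min (H₀ (A ω, W ω)) (n : ℝ) * g (A ω, W ω)) ∂P := by
      rw [← lintegral_iSup
        (f := fun (n : ℕ) (ω : Ω) => ENNReal.ofReal (min (H₀ (A ω, W ω)) (n : ℝ) * g (A ω, W ω)))
        (fun n => ((hhn_meas n).comp hT).ennreal_ofReal)
        (fun n m hnm ω => ENNReal.ofReal_le_ofReal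
          (mul_le_mul_of_nonneg_right
            (min_le_min le_rfl (Nat.cast_le.mpr hnm)) (hg0 _)))]
      exact lintegral_congr fun ω =>
        (iSup_ofReal_min_mul (hH₀_nonneg _) (hg0 _)).symm
    -- RHS inner monotone convergence
    have supR : ∀ ω, (⨆ n : ℕ, ∫⁻ a, ENNReal.ofReal (min (H₀ (a, W ω)) (n : ℝ) * g (a, W ω))
          * ENNReal.ofReal (q₀ (a, W ω)))
        = ∫⁻ a, ENNReal.ofReal (g (a, W ω) * q₀ (a - δ (W ω), W ω)) := by
      intro ω
      rw [← lintegral_iSup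
        (f := fun (n : ℕ) (a : ℝ) => ENNReal.ofReal (min (H₀ (a, W ω)) (n : ℝ) * g (a, W ω))
          * ENNReal.ofReal (q₀ (a, W ω)))
        (fun n => (((hhn_meas n).comp
            (measurable_prodMk_right)).ennreal_ofReal).mul
          ((hq₀_meas.comp (measurable_prodMk_right)).ennreal_ofReal))
        (fun n m hnm a => mul_le_mul_left
          (ENNReal.ofReal_le_ofReal (mul_le_mul_of_nonneg_right
            (min_le_min le_rfl (Nat.cast_le.mpr hnm)) (hg0 _))) _)]
      apply lintegral_congr
      intro a
      calc (⨆ n : ℕ, ENNReal.ofReal (min (H₀ (a, W ω)) (n : ℝ) * g (a, W ω))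
            * ENNReal.ofReal (q₀ (a, W ω)))
          = (⨆ n : ℕ, ENNReal.ofReal (min (H₀ (a, W ω)) (n : ℝ) * g (a, W ω)))
              * ENNReal.ofReal (q₀ (a, W ω)) := (ENNReal.iSup_mul _ _).symm
        _ = ENNReal.ofReal (H₀ (a, W ω) * g (a, W ω)) * ENNReal.ofReal (q₀ (a, W ω)) := by
            rw [iSup_ofReal_min_mul (hH₀_nonneg _) (hg0 _)]
        _ = ENNReal.ofReal (H₀ (a, W ω) * g (a, W ω) * q₀ (a, W ω)) :=
            (ENNReal.ofReal_mul (mul_nonneg (hH₀_nonneg _) (hg0 _))).symm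
        _ = ENNReal.ofReal (g (a, W ω) * q₀ (a - δ (W ω), W ω)) := by
            congr 1
            rw [hH₀ a (W ω), div_mul_eq_mul_div, div_mul_eq_mul_div, mul_div_assoc,
              div_self (hq₀_pos (a, W ω)).ne', mul_one, mul_comm]
    -- translation invariance
    have htrans : ∀ ω, (∫⁻ a, ENNReal.ofReal (g (a, W ω) * q₀ (a - δ (W ω), W ω)))
        = ∫⁻ a, ENNReal.ofReal (g (a + δ (W ω), W ω) * q₀ (a, W ω)) := by
      intro ω
      have h := lintegral_add_right_eq_self (μ := volume)
        (fun a => ENNReal.ofReal (g (a, W ω) * q₀ (a - δ (W ω), W ω))) (δ (W ω))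
      rw [← h]
      apply lintegral_congr
      intro a
      simp [add_sub_cancel_right]
    -- density identity applied to the shifted function
    have final := density_lintegral_aux P W hW A hA q₀ hq₀_meas hq₀_nonneg hq₀_density
      (fun x : ℝ × 𝒲 => g (x.1 + δ x.2, x.2))
      (hg.comp ((measurable_fst.add (hδ.comp measurable_snd)).prodMk measurable_snd))
      (fun x => hg0 _) (max N 0) (fun x => hN' _)
    -- measurability of the truncated inner integrals as functions of ω
    have hJmeas : ∀ n : ℕ, Measurable fun ω =>
        ∫⁻ a, ENNReal.ofReal (min (H₀ (a, W ω)) (n : ℝ) * g (a, W ω))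
          * ENNReal.ofReal (q₀ (a, W ω)) := by
      intro n
      exact (Measurable.lintegral_prod_left'
        ((((hhn_meas n).ennreal_ofReal).mul hq₀_meas.ennreal_ofReal))).comp hW
    have hJmono : Monotone fun (n : ℕ) (ω : Ω) =>
        ∫⁻ a, ENNReal.ofReal (min (H₀ (a, W ω)) (n : ℝ) * g (a, W ω))
          * ENNReal.ofReal (q₀ (a, W ω)) := by
      intro n m hnm ω
      exact lintegral_mono fun a => mul_le_mul_left
        (ENNReal.ofReal_le_ofReal (mul_le_mul_of_nonneg_right
          (min_le_min le_rfl (Nat.cast_le.mpr hnm)) (hg0 _))) _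
    calc ∫⁻ ω, ENNReal.ofReal (H₀ (A ω, W ω) * g (A ω, W ω)) ∂P
        = ⨆ n : ℕ, ∫⁻ ω, ENNReal.ofReal (min (H₀ (A ω, W ω)) (n : ℝ) * g (A ω, W ω)) ∂P :=
          supL
      _ = ⨆ n : ℕ, ∫⁻ ω, (∫⁻ a, ENNReal.ofReal (min (H₀ (a, W ω)) (n : ℝ) * g (a, W ω))
            * ENNReal.ofReal (q₀ (a, W ω))) ∂P := iSup_congr step1
      _ = ∫⁻ ω, (⨆ n : ℕ, ∫⁻ a, ENNReal.ofReal (min (H₀ (a, W ω)) (n : ℝ) * g (a, W ω))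
            * ENNReal.ofReal (q₀ (a, W ω))) ∂P := (lintegral_iSup hJmeas hJmono).symm
      _ = ∫⁻ ω, (∫⁻ a, ENNReal.ofReal (g (a, W ω) * q₀ (a - δ (W ω), W ω))) ∂P :=
          lintegral_congr fun ω => supR ω
      _ = ∫⁻ ω, (∫⁻ a, ENNReal.ofReal (g (a + δ (W ω), W ω) * q₀ (a, W ω))) ∂P :=
          lintegral_congr fun ω => htrans ω
      _ = ∫⁻ ω, (∫⁻ a, ENNReal.ofReal (g (a + δ (W ω), W ω)) * ENNReal.ofReal (q₀ (a, W ω))) ∂P := by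
          refine lintegral_congr fun ω => lintegral_congr fun a => ?_
          rw [ENNReal.ofReal_mul (hg0 _)]
      _ = ∫⁻ ω, ENNReal.ofReal (g (A ω + δ (W ω), W ω)) ∂P := final.symm
  -- decompose f into positive and negative parts
  set g₁ : ℝ × 𝒲 → ℝ := fun x => max (f x) 0 with hg₁
  set g₂ : ℝ × 𝒲 → ℝ := fun x => max (-f x) 0 with hg₂
  have hg₁meas : Measurable g₁ := hf_meas.max measurable_const
  have hg₂meas : Measurable g₂ := hf_meas.neg.max measurable_const
  have hg₁0 : ∀ x, 0 ≤ g₁ x := fun x => le_max_right _ _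
  have hg₂0 : ∀ x, 0 ≤ g₂ x := fun x => le_max_right _ _
  have hg₁M : ∀ x, g₁ x ≤ max M 0 := fun x =>
    max_le_max (le_trans (le_abs_self _) (hM x)) le_rfl
  have hg₂M : ∀ x, g₂ x ≤ max M 0 := fun x =>
    max_le_max (le_trans (neg_le_abs _) (hM x)) le_rfl
  have hfsplit : ∀ x, f x = g₁ x - g₂ x := fun x =>
    (max_zero_sub_max_neg_zero_eq_self (f x)).symm
  -- lintegral identities
  have hli1 := main_nonneg g₁ hg₁meas hg₁0 (max M 0) hg₁M
  have hli2 := main_nonneg g₂ hg₂meas hg₂0 (max M 0) hg₂M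
  -- finiteness of the shifted lintegrals
  have hshift_meas : ∀ (g : ℝ × 𝒲 → ℝ), Measurable g →
      Measurable fun ω => g (A ω + δ (W ω), W ω) := fun g hg =>
    hg.comp ((hA.add (hδ.comp hW)).prodMk hW)
  have hfin : ∀ (g : ℝ × 𝒲 → ℝ), (∀ x, 0 ≤ g x) → (∀ x, g x ≤ max M 0) →
      ∫⁻ ω, ENNReal.ofReal (g (A ω + δ (W ω), W ω)) ∂P ≠ ⊤ := by
    intro g hg0 hgM
    refine ne_of_lt (lt_of_le_of_lt
      (lintegral_mono fun ω => ENNReal.ofReal_le_ofReal (hgM _)) ?_)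
    rw [lintegral_const]
    exact ENNReal.mul_lt_top ENNReal.ofReal_lt_top (measure_lt_top _ _)
  -- integrability of all four pieces
  have hint_shift : ∀ (g : ℝ × 𝒲 → ℝ), Measurable g → (∀ x, |g x| ≤ max M 0) →
      Integrable (fun ω => g (A ω + δ (W ω), W ω)) P := by
    intro g hg hgb
    exact ⟨(hshift_meas g hg).aestronglyMeasurable,
      HasFiniteIntegral.of_bounded (C := max M 0) (ae_of_all _ fun ω => by
        rw [Real.norm_eq_abs]; exact hgb _)⟩
  have hint1 : Integrable (fun ω => H₀ (A ω, W ω) * g₁ (A ω, W ω)) P := by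
    refine ⟨((hH₀_meas.mul hg₁meas).comp hT).aestronglyMeasurable, ?_⟩
    rw [HasFiniteIntegral]
    have heq : ∀ ω : Ω, ‖H₀ (A ω, W ω) * g₁ (A ω, W ω)‖ₑ
        = ENNReal.ofReal (H₀ (A ω, W ω) * g₁ (A ω, W ω)) := fun ω =>
      Real.enorm_eq_ofReal (mul_nonneg (hH₀_nonneg _) (hg₁0 _))
    simp only [heq]
    rw [hli1]
    exact lt_of_le_of_lt (le_of_eq rfl) (lt_of_le_of_ne le_top (hfin g₁ hg₁0 hg₁M)).lt_top
  have hint2 : Integrable (fun ω => H₀ (A ω, W ω) * g₂ (A ω, W ω)) P := by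
    refine ⟨((hH₀_meas.mul hg₂meas).comp hT).aestronglyMeasurable, ?_⟩
    rw [HasFiniteIntegral]
    have heq : ∀ ω : Ω, ‖H₀ (A ω, W ω) * g₂ (A ω, W ω)‖ₑ
        = ENNReal.ofReal (H₀ (A ω, W ω) * g₂ (A ω, W ω)) := fun ω =>
      Real.enorm_eq_ofReal (mul_nonneg (hH₀_nonneg _) (hg₂0 _))
    simp only [heq]
    rw [hli2]
    exact (lt_of_le_of_ne le_top (hfin g₂ hg₂0 hg₂M)).lt_top
  -- Bochner identities for each nonneg piece
  have hB : ∀ (g : ℝ × 𝒲 → ℝ), Measurable g → (∀ x, 0 ≤ g x) → (∀ x, g x ≤ max M 0) →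
      (∫⁻ ω, ENNReal.ofReal (H₀ (A ω, W ω) * g (A ω, W ω)) ∂P
        = ∫⁻ ω, ENNReal.ofReal (g (A ω + δ (W ω), W ω)) ∂P) →
      ∫ ω, H₀ (A ω, W ω) * g (A ω, W ω) ∂P = ∫ ω, g (A ω + δ (W ω), W ω) ∂P := by
    intro g hg hg0 hgM hli
    rw [integral_eq_lintegral_of_nonneg_ae
        (ae_of_all _ fun ω => mul_nonneg (hH₀_nonneg _) (hg0 _))
        (((hH₀_meas.mul hg).comp hT).aestronglyMeasurable),
      integral_eq_lintegral_of_nonneg_ae (ae_of_all _ fun ω => hg0 _)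
        ((hshift_meas g hg).aestronglyMeasurable),
      hli]
  have hB1 := hB g₁ hg₁meas hg₁0 hg₁M hli1
  have hB2 := hB g₂ hg₂meas hg₂0 hg₂M hli2
  -- assemble
  have e1 : (fun ω => H₀ (A ω, W ω) * f (A ω, W ω))
      = fun ω => H₀ (A ω, W ω) * g₁ (A ω, W ω) - H₀ (A ω, W ω) * g₂ (A ω, W ω) := by
    funext ω
    rw [← mul_sub, ← hfsplit]
  have e2 : (fun ω => f (A ω + δ (W ω), W ω))
      = fun ω => g₁ (A ω + δ (W ω), W ω) - g₂ (A ω + δ (W ω), W ω) := by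
    funext ω
    rw [← hfsplit]
  rw [e1, e2, integral_sub hint1 hint2,
    integral_sub
      (hint_shift g₁ hg₁meas fun x => by rw [abs_of_nonneg (hg₁0 x)]; exact hg₁M x)
      (hint_shift g₂ hg₂meas fun x => by rw [abs_of_nonneg (hg₂0 x)]; exact hg₂M x),
    hB1, hB2]
end

section
/- The full-data efficient influence function has mean zero at the truth: E[H₀(A, W)(Y − Q̄₀(A, W)) + Q̄₀(A + δ(W), W) − ψ₀] = 0. -/
open MeasureTheory

/-- The full-data efficient influence function has mean zero at the truth:
`E[H₀(A,W)(Y − Q̄₀(A,W)) + Q̄₀(A + δ(W), W) − ψ₀] = 0`. -/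
theorem full_data_eif_mean_zero
    {Ω 𝒲 : Type*} [MeasurableSpace Ω] [MeasurableSpace 𝒲]
    (P : Measure Ω) [IsProbabilityMeasure P]
    (W : Ω → 𝒲) (hW : Measurable W)
    (A : Ω → ℝ) (hA : Measurable A)
    (Y : Ω → ℝ) (hY : Measurable Y) (hY_int : Integrable Y P)
    (q₀ : ℝ × 𝒲 → ℝ) (hq₀_meas : Measurable q₀)
    (hq₀_nonneg : ∀ x, 0 ≤ q₀ x)
    (hq₀_density : ∀ f : ℝ × 𝒲 → ℝ, Measurable f → (∃ M : ℝ, ∀ x, |f x| ≤ M) →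
      ∫ ω, f (A ω, W ω) ∂P = ∫ ω, (∫ a : ℝ, f (a, W ω) * q₀ (a, W ω)) ∂P)
    (Qbar₀ : ℝ × 𝒲 → ℝ) (hQbar₀_meas : Measurable Qbar₀)
    (hQbar₀_bd : ∃ M : ℝ, ∀ x, |Qbar₀ x| ≤ M)
    (hQbar₀_condexp :
      P[Y | MeasurableSpace.comap (fun ω => (A ω, W ω)) inferInstance]
        =ᵐ[P] fun ω => Qbar₀ (A ω, W ω))
    (δ : 𝒲 → ℝ) (hδ : Measurable δ)
    (ψ₀ : ℝ) (hψ₀ : ψ₀ = ∫ ω, Qbar₀ (A ω + δ (W ω), W ω) ∂P)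
    (hq₀_pos : ∀ x, 0 < q₀ x)
    (H₀ : ℝ × 𝒲 → ℝ)
    (hH₀ : ∀ a w, H₀ (a, w) = q₀ (a - δ w, w) / q₀ (a, w))
    (hH₀Y_int : Integrable (fun ω => H₀ (A ω, W ω) * Y ω) P) :
    ∫ ω, (H₀ (A ω, W ω) * (Y ω - Qbar₀ (A ω, W ω))
        + Qbar₀ (A ω + δ (W ω), W ω) - ψ₀) ∂P = 0 := by
  have hAW : Measurable (fun ω => (A ω, W ω)) := hA.prodMk hW
  have hm := hAW.comap_le
  -- measurability of H₀
  have hH₀_eq : H₀ = fun p => q₀ (p.1 - δ p.2, p.2) / q₀ p := by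
    funext p; rcases p with ⟨a, w⟩; exact hH₀ a w
  have hH₀_meas : Measurable H₀ := by
    rw [hH₀_eq]
    exact (hq₀_meas.comp ((measurable_fst.sub (hδ.comp measurable_snd)).prodMk
      measurable_snd)).div hq₀_meas
  have hAW_m : @Measurable Ω (ℝ × 𝒲)
      (MeasurableSpace.comap (fun ω => (A ω, W ω)) inferInstance) _
      (fun ω => (A ω, W ω)) := Measurable.of_comap_le le_rfl
  have hHm : @StronglyMeasurable Ω ℝ _
      (MeasurableSpace.comap (fun ω => (A ω, W ω)) inferInstance)
      (fun ω => H₀ (A ω, W ω)) :=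
    Measurable.stronglyMeasurable (hH₀_meas.comp hAW_m)
  have hfg : Integrable ((fun ω => H₀ (A ω, W ω)) * Y) P := hH₀Y_int
  have hpull : P[(fun ω => H₀ (A ω, W ω)) * Y
        | MeasurableSpace.comap (fun ω => (A ω, W ω)) inferInstance]
      =ᵐ[P] (fun ω => H₀ (A ω, W ω))
        * P[Y | MeasurableSpace.comap (fun ω => (A ω, W ω)) inferInstance] :=
    condExp_mul_of_stronglyMeasurable_left hHm hfg hY_int
  have hHQ_ae : (fun ω => H₀ (A ω, W ω) * Qbar₀ (A ω, W ω))
      =ᵐ[P] P[(fun ω => H₀ (A ω, W ω)) * Y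
        | MeasurableSpace.comap (fun ω => (A ω, W ω)) inferInstance] := by
    filter_upwards [hpull, hQbar₀_condexp] with ω h1 h2
    simp only [Pi.mul_apply] at h1 ⊢
    rw [h1, h2]
  have hHQ_int : Integrable (fun ω => H₀ (A ω, W ω) * Qbar₀ (A ω, W ω)) P :=
    integrable_condExp.congr hHQ_ae.symm
  have hEq1 : ∫ ω, H₀ (A ω, W ω) * Y ω ∂P
      = ∫ ω, H₀ (A ω, W ω) * Qbar₀ (A ω, W ω) ∂P := by
    rw [integral_congr_ae hHQ_ae]
    exact (integral_condExp (f := (fun ω => H₀ (A ω, W ω)) * Y) hm).symm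
  -- integrability of shifted Qbar₀
  obtain ⟨M, hM⟩ := hQbar₀_bd
  have hQδ_meas : Measurable (fun ω => Qbar₀ (A ω + δ (W ω), W ω)) :=
    hQbar₀_meas.comp ((hA.add (hδ.comp hW)).prodMk hW)
  have hQδ_int : Integrable (fun ω => Qbar₀ (A ω + δ (W ω), W ω)) P := by
    refine (integrable_const M).mono' hQδ_meas.aestronglyMeasurable ?_
    filter_upwards with ω
    simpa [Real.norm_eq_abs] using hM (A ω + δ (W ω), W ω)
  -- put everything together
  have hrw : (fun ω => H₀ (A ω, W ω) * (Y ω - Qbar₀ (A ω, W ω))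
        + Qbar₀ (A ω + δ (W ω), W ω) - ψ₀)
      = fun ω => (H₀ (A ω, W ω) * Y ω - H₀ (A ω, W ω) * Qbar₀ (A ω, W ω))
        + (Qbar₀ (A ω + δ (W ω), W ω) - ψ₀) := by
    funext ω; ring
  have i1 : Integrable (fun ω => H₀ (A ω, W ω) * Y ω
      - H₀ (A ω, W ω) * Qbar₀ (A ω, W ω)) P := hH₀Y_int.sub hHQ_int
  have i2 : Integrable (fun ω => Qbar₀ (A ω + δ (W ω), W ω) - ψ₀) P :=
    hQδ_int.sub (integrable_const ψ₀)
  rw [hrw, integral_add i1 i2, integral_sub hH₀Y_int hHQ_int,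
    integral_sub hQδ_int (integrable_const ψ₀), integral_const]
  simp only [measure_univ, probReal_univ, ENNReal.toReal_one, smul_eq_mul, one_mul]
  rw [hEq1, hψ₀]
  ring
end

section
/- Robustness of the full-data efficient influence function to misspecification of the exposure density: for every measurable H' : ℝ × 𝒲 → ℝ such that H'(A, W)·Y and H'(A, W) are integrable, E[H'(A, W)(Y − Q̄₀(A, W)) + Q̄₀(A + δ(W), W)] = ψ₀. That is, when the outcome regression Q̄₀ is correct, the mean of the full-data efficient influence function recovers ψ₀ for an arbitrary (possibly incorrect) density-ratio weight H'. -/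
open MeasureTheory

/-- Robustness of the full-data EIF to misspecification of the exposure density:
when the outcome regression `Q̄₀` is correct, the mean of the full-data EIF recovers
`ψ₀` for an arbitrary weight `H'`. -/
theorem full_data_eif_robust_outcome_correct
    {Ω 𝒲 : Type*} [MeasurableSpace Ω] [MeasurableSpace 𝒲]
    (P : Measure Ω) [IsProbabilityMeasure P]
    (W : Ω → 𝒲) (hW : Measurable W)
    (A : Ω → ℝ) (hA : Measurable A)
    (Y : Ω → ℝ) (hY : Measurable Y) (hY_int : Integrable Y P)
    (Qbar₀ : ℝ × 𝒲 → ℝ) (hQbar₀_meas : Measurable Qbar₀)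
    (hQbar₀_bd : ∃ M : ℝ, ∀ x, |Qbar₀ x| ≤ M)
    (hQbar₀_condexp :
      P[Y | MeasurableSpace.comap (fun ω => (A ω, W ω)) inferInstance]
        =ᵐ[P] fun ω => Qbar₀ (A ω, W ω))
    (δ : 𝒲 → ℝ) (hδ : Measurable δ)
    (ψ₀ : ℝ) (hψ₀ : ψ₀ = ∫ ω, Qbar₀ (A ω + δ (W ω), W ω) ∂P)
    (H' : ℝ × 𝒲 → ℝ) (hH'_meas : Measurable H')
    (hH'Y_int : Integrable (fun ω => H' (A ω, W ω) * Y ω) P)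
    (hH'_int : Integrable (fun ω => H' (A ω, W ω)) P) :
    ∫ ω, (H' (A ω, W ω) * (Y ω - Qbar₀ (A ω, W ω))
        + Qbar₀ (A ω + δ (W ω), W ω)) ∂P = ψ₀ := by
  obtain ⟨M, hM⟩ := hQbar₀_bd
  have hm : MeasurableSpace.comap (fun ω => (A ω, W ω)) inferInstance
      ≤ ‹MeasurableSpace Ω› := (hA.prodMk hW).comap_le
  have hpair : Measurable[MeasurableSpace.comap (fun ω => (A ω, W ω)) inferInstance]
      (fun ω => (A ω, W ω)) := Measurable.of_comap_le le_rfl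
  have hH'm : StronglyMeasurable[MeasurableSpace.comap (fun ω => (A ω, W ω)) inferInstance]
      (fun ω => H' (A ω, W ω)) := (hH'_meas.comp hpair).stronglyMeasurable
  -- integrability facts
  have hHQ_int : Integrable (fun ω => H' (A ω, W ω) * Qbar₀ (A ω, W ω)) P := by
    have := hH'_int.bdd_mul
      ((hQbar₀_meas.comp (hA.prodMk hW)).aestronglyMeasurable)
      (Filter.Eventually.of_forall fun ω => by simpa [Real.norm_eq_abs] using hM (A ω, W ω))
    simpa [mul_comm] using this
  have hQs_int : Integrable (fun ω => Qbar₀ (A ω + δ (W ω), W ω)) P := by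
    have hmeas : Measurable (fun ω => Qbar₀ (A ω + δ (W ω), W ω)) :=
      hQbar₀_meas.comp ((hA.add (hδ.comp hW)).prodMk hW)
    refine ⟨hmeas.aestronglyMeasurable, ?_⟩
    apply HasFiniteIntegral.mono' (g := fun _ => M) (integrable_const M).2
    exact Filter.Eventually.of_forall fun ω => by
      simpa [Real.norm_eq_abs] using hM (A ω + δ (W ω), W ω)
  -- key: E[H'·Y] = E[H'·Q̄₀(A,W)]
  have key : ∫ ω, H' (A ω, W ω) * Y ω ∂P = ∫ ω, H' (A ω, W ω) * Qbar₀ (A ω, W ω) ∂P := by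
    have h1 : P[(fun ω => H' (A ω, W ω)) * Y |
          MeasurableSpace.comap (fun ω => (A ω, W ω)) inferInstance]
        =ᵐ[P] (fun ω => H' (A ω, W ω)) *
          P[Y | MeasurableSpace.comap (fun ω => (A ω, W ω)) inferInstance] :=
      condExp_mul_of_stronglyMeasurable_left hH'm hH'Y_int hY_int
    calc ∫ ω, H' (A ω, W ω) * Y ω ∂P
        = ∫ ω, ((fun ω => H' (A ω, W ω)) * Y) ω ∂P := rfl
      _ = ∫ ω, (P[(fun ω => H' (A ω, W ω)) * Y |
            MeasurableSpace.comap (fun ω => (A ω, W ω)) inferInstance]) ω ∂P :=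
          (integral_condExp hm).symm
      _ = ∫ ω, H' (A ω, W ω) * Qbar₀ (A ω, W ω) ∂P := by
          refine integral_congr_ae ?_
          filter_upwards [h1, hQbar₀_condexp] with ω h1ω h2ω
          simp [h1ω, Pi.mul_apply, h2ω]
  have hdiff : Integrable (fun ω => H' (A ω, W ω) * (Y ω - Qbar₀ (A ω, W ω))) P := by
    have := hH'Y_int.sub hHQ_int
    simpa [mul_sub, Pi.sub_def] using this
  rw [integral_add hdiff hQs_int, hψ₀]
  have hzero : ∫ ω, H' (A ω, W ω) * (Y ω - Qbar₀ (A ω, W ω)) ∂P = 0 := by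
    have heq : ∫ ω, H' (A ω, W ω) * (Y ω - Qbar₀ (A ω, W ω)) ∂P
        = ∫ ω, H' (A ω, W ω) * Y ω ∂P - ∫ ω, H' (A ω, W ω) * Qbar₀ (A ω, W ω) ∂P := by
      rw [← integral_sub hH'Y_int hHQ_int]
      exact integral_congr_ae (Filter.Eventually.of_forall fun ω => by ring)
    rw [heq, key, sub_self]
  rw [hzero, zero_add]
end

section
/- Robustness of the full-data efficient influence function to misspecification of the outcome regression: for every bounded measurable Q̄ : ℝ × 𝒲 → ℝ, E[H₀(A, W)(Y − Q̄(A, W)) + Q̄(A + δ(W), W)] = ψ₀. That is, when the density ratio H₀ is correct, the mean of the full-data efficient influence function recovers ψ₀ for an arbitrary (possibly incorrect) outcome regression Q̄. -/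
open MeasureTheory Set
open scoped ENNReal

namespace EIFRobustAux

variable {Ω 𝒲 : Type*} [MeasurableSpace Ω] [MeasurableSpace 𝒲]

/-- truncated lintegral of the density in the first variable -/
noncomputable def Lfun (q₀ : ℝ × 𝒲 → ℝ) (n : ℕ) (w : 𝒲) : ℝ≥0∞ :=
  ∫⁻ a in Icc (-(n : ℝ)) n, ENNReal.ofReal (q₀ (a, w))

lemma measurable_Lfun {q₀ : ℝ × 𝒲 → ℝ} (hq : Measurable q₀) (n : ℕ) :
    Measurable (Lfun q₀ n) := by
  have hF : Measurable fun p : ℝ × 𝒲 =>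
      (Icc (-(n : ℝ)) n).indicator (fun a => ENNReal.ofReal (q₀ (a, p.2))) p.1 := by
    rw [show (fun p : ℝ × 𝒲 =>
        (Icc (-(n : ℝ)) n).indicator (fun a => ENNReal.ofReal (q₀ (a, p.2))) p.1)
      = fun p : ℝ × 𝒲 => if p.1 ∈ Icc (-(n : ℝ)) n then ENNReal.ofReal (q₀ p) else 0 by
        ext p; simp [Set.indicator_apply]]
    exact Measurable.ite (measurable_fst measurableSet_Icc)
      (ENNReal.measurable_ofReal.comp hq) measurable_const
  have : Lfun q₀ n = fun w => ∫⁻ a,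
      (Icc (-(n : ℝ)) n).indicator (fun a => ENNReal.ofReal (q₀ (a, w))) a := by
    ext w
    rw [lintegral_indicator measurableSet_Icc]
    rfl
  rw [this]
  exact Measurable.lintegral_prod_left' hF

end EIFRobustAux

/-- Robustness of the full-data EIF to misspecification of the outcome regression:
when the density ratio `H₀` is correct, the mean of the full-data EIF recovers `ψ₀`
for an arbitrary bounded outcome regression `Q̄`. -/
theorem full_data_eif_robust_density_correct
    {Ω 𝒲 : Type*} [MeasurableSpace Ω] [MeasurableSpace 𝒲]
    (P : Measure Ω) [IsProbabilityMeasure P]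
    (W : Ω → 𝒲) (hW : Measurable W)
    (A : Ω → ℝ) (hA : Measurable A)
    (Y : Ω → ℝ) (hY : Measurable Y) (hY_int : Integrable Y P)
    (q₀ : ℝ × 𝒲 → ℝ) (hq₀_meas : Measurable q₀)
    (hq₀_nonneg : ∀ x, 0 ≤ q₀ x)
    (hq₀_density : ∀ f : ℝ × 𝒲 → ℝ, Measurable f → (∃ M : ℝ, ∀ x, |f x| ≤ M) →
      ∫ ω, f (A ω, W ω) ∂P = ∫ ω, (∫ a : ℝ, f (a, W ω) * q₀ (a, W ω)) ∂P)
    (Qbar₀ : ℝ × 𝒲 → ℝ) (hQbar₀_meas : Measurable Qbar₀)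
    (hQbar₀_bd : ∃ M : ℝ, ∀ x, |Qbar₀ x| ≤ M)
    (hQbar₀_condexp :
      P[Y | MeasurableSpace.comap (fun ω => (A ω, W ω)) inferInstance]
        =ᵐ[P] fun ω => Qbar₀ (A ω, W ω))
    (δ : 𝒲 → ℝ) (hδ : Measurable δ)
    (ψ₀ : ℝ) (hψ₀ : ψ₀ = ∫ ω, Qbar₀ (A ω + δ (W ω), W ω) ∂P)
    (hq₀_pos : ∀ x, 0 < q₀ x)
    (H₀ : ℝ × 𝒲 → ℝ)
    (hH₀ : ∀ a w, H₀ (a, w) = q₀ (a - δ w, w) / q₀ (a, w))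
    (hH₀Y_int : Integrable (fun ω => H₀ (A ω, W ω) * Y ω) P)
    (Qbar : ℝ × 𝒲 → ℝ) (hQbar_meas : Measurable Qbar)
    (hQbar_bd : ∃ M : ℝ, ∀ x, |Qbar x| ≤ M) :
    ∫ ω, (H₀ (A ω, W ω) * (Y ω - Qbar (A ω, W ω))
        + Qbar (A ω + δ (W ω), W ω)) ∂P = ψ₀ := by
  classical
  open EIFRobustAux in
  -- basic measurability
  have hΦ : Measurable fun ω => (A ω, W ω) := hA.prodMk hW
  have hH₀_eq : H₀ = fun p : ℝ × 𝒲 => q₀ (p.1 - δ p.2, p.2) / q₀ p := by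
    ext ⟨a, w⟩; exact hH₀ a w
  have hH₀_meas : Measurable H₀ := by
    rw [hH₀_eq]
    exact (hq₀_meas.comp ((measurable_fst.sub (hδ.comp measurable_snd)).prodMk
      measurable_snd)).div hq₀_meas
  have hH₀_nonneg : ∀ p, 0 ≤ H₀ p := by
    rintro ⟨a, w⟩
    rw [hH₀ a w]
    exact div_nonneg (hq₀_nonneg _) (hq₀_nonneg _)
  -- integrability of bounded measurable functions
  have int_of_bdd : ∀ (f : Ω → ℝ), Measurable f → (∃ M, ∀ ω, |f ω| ≤ M) → Integrable f P := by
    rintro f hf ⟨M, hM⟩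
    exact (integrable_const M).mono' hf.aestronglyMeasurable
      (Filter.Eventually.of_forall fun ω => by simpa [Real.norm_eq_abs] using hM ω)
  -- Stage 1 : for each n, a.e. ω the density is integrable on [-n, n]
  have stage1 : ∀ n : ℕ, P (W ⁻¹' {w | Lfun q₀ n w = ⊤}) = 0 := by
    intro n
    set Bn : Set 𝒲 := {w | Lfun q₀ n w = ⊤} with hBn_def
    have hBn : MeasurableSet Bn := by
      have := (measurable_Lfun hq₀_meas n) (measurableSet_singleton (⊤ : ℝ≥0∞))
      simpa [Bn, Set.preimage, Set.mem_singleton_iff] using this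
    have key : ∀ m : ℕ,
        P ((fun ω => (A ω, W ω)) ⁻¹' (Icc (-(n + m : ℝ)) (n + m) ×ˢ Bn)) = 0 := by
      intro m
      set s : Set ℝ := Icc (-(n + m : ℝ)) (n + m) with hs_def
      have hs : MeasurableSet s := measurableSet_Icc
      set f : ℝ × 𝒲 → ℝ := (s ×ˢ Bn).indicator (fun _ => (1 : ℝ)) with hf_def
      have hf_meas : Measurable f := measurable_const.indicator (hs.prod hBn)
      have hf_bd : ∀ x, |f x| ≤ 1 := by
        intro x
        by_cases h : x ∈ s ×ˢ Bn <;> simp [f, Set.indicator_apply, h]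
      have hd := hq₀_density f hf_meas ⟨1, hf_bd⟩
      have hL : (fun ω => f (A ω, W ω))
          = ((fun ω => (A ω, W ω)) ⁻¹' (s ×ˢ Bn)).indicator (fun _ => (1 : ℝ)) := by
        ext ω
        simp [f, Set.indicator_apply, Set.mem_preimage]
      have hR : ∀ ω, (∫ a : ℝ, f (a, W ω) * q₀ (a, W ω)) = 0 := by
        intro ω
        by_cases hw : W ω ∈ Bn
        · have hie : (fun a : ℝ => f (a, W ω) * q₀ (a, W ω))
              = s.indicator (fun a => q₀ (a, W ω)) := by
            ext a
            by_cases ha : a ∈ s <;>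
              simp [f, Set.indicator_apply, ha, hw, Set.mem_prod]
          rw [hie, integral_indicator hs]
          apply integral_undef
          intro hint
          have h1 : Lfun q₀ n (W ω) ≤ ∫⁻ a in s, ENNReal.ofReal (q₀ (a, W ω)) := by
            apply lintegral_mono_set
            apply Icc_subset_Icc <;> push_cast <;> simp [neg_le_neg_iff] <;> positivity
          have h2 : ∫⁻ a in s, ENNReal.ofReal (q₀ (a, W ω)) < ⊤ := by
            have := hint.2
            rw [hasFiniteIntegral_iff_norm] at this
            refine lt_of_le_of_lt (le_of_eq ?_) this
            apply lintegral_congr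
            intro a
            rw [ENNReal.ofReal_eq_ofReal_iff] <;>
              simp [abs_of_nonneg (hq₀_nonneg (a, W ω)), hq₀_nonneg (a, W ω)]
          have := hw
          rw [hBn_def, Set.mem_setOf_eq] at this
          rw [this] at h1
          exact absurd (lt_of_le_of_lt h1 h2) (lt_irrefl ⊤)
        · have hie : ∀ a : ℝ, f (a, W ω) * q₀ (a, W ω) = 0 := by
            intro a
            have : f (a, W ω) = 0 := by
              apply Set.indicator_of_notMem
              simp [Set.mem_prod, hw]
            rw [this, zero_mul]
          simp [hie]
      rw [hL, integral_indicator_const (1 : ℝ) ((hΦ) (hs.prod hBn))] at hd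
      rw [integral_congr_ae (Filter.Eventually.of_forall hR), integral_zero] at hd
      have := hd
      simp only [smul_eq_mul, mul_one] at this
      exact (ENNReal.toReal_eq_zero_iff _).mp this |>.resolve_right (measure_ne_top P _)
    have hsub : W ⁻¹' Bn ⊆
        ⋃ m : ℕ, (fun ω => (A ω, W ω)) ⁻¹' (Icc (-(n + m : ℝ)) (n + m) ×ˢ Bn) := by
      intro ω hω
      obtain ⟨m, hm⟩ := exists_nat_ge |A ω|
      refine Set.mem_iUnion.2 ⟨m, ?_⟩
      have h' := abs_le.mp hm
      have hn0 : (0 : ℝ) ≤ n := Nat.cast_nonneg n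
      exact ⟨⟨by simp only; linarith [h'.1], by simp only; linarith [h'.2]⟩, hω⟩
    exact measure_mono_null hsub (measure_iUnion_null key)
  -- Stage 2 : the truncated density masses are uniformly integrable over P
  have stage2 : ∀ n : ℕ, ∫⁻ ω, Lfun q₀ n (W ω) ∂P ≤ 2 := by
    intro n
    set L : 𝒲 → ℝ≥0∞ := Lfun q₀ n with hL_def
    have hLmeas : Measurable L := measurable_Lfun hq₀_meas n
    set D : ℕ → Set 𝒲 := fun j => {w | (j : ℝ≥0∞) ≤ L w ∧ L w < (j : ℝ≥0∞) + 1} with hD_def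
    have hD : ∀ j, MeasurableSet (D j) := by
      intro j
      have : D j = L ⁻¹' Set.Ico (j : ℝ≥0∞) ((j : ℝ≥0∞) + 1) := by
        ext w; simp [D, Set.mem_Ico]
      rw [this]
      exact hLmeas measurableSet_Ico
    set S : ℕ → Set Ω := fun j => W ⁻¹' (D j) with hS_def
    have hSmeas : ∀ j, MeasurableSet (S j) := fun j => hW (hD j)
    set s : Set ℝ := Icc (-(n : ℝ)) n with hs_def
    have hs : MeasurableSet s := measurableSet_Icc
    set E : ℕ → Set Ω := fun j => (fun ω => (A ω, W ω)) ⁻¹' (s ×ˢ D j) with hE_def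
    have hEmeas : ∀ j, MeasurableSet (E j) := fun j => hΦ (hs.prod (hD j))
    have hDdisj : ∀ i j : ℕ, i < j → Disjoint (D i) (D j) := by
      intro i j hij
      rw [Set.disjoint_left]
      intro w hwi hwj
      have h1 : L w < (i : ℝ≥0∞) + 1 := hwi.2
      have h2 : (j : ℝ≥0∞) ≤ L w := hwj.1
      have : ((i : ℝ≥0∞) + 1) ≤ (j : ℝ≥0∞) := by
        have : (i + 1 : ℕ) ≤ j := hij
        exact_mod_cast Nat.cast_le.mpr this
      exact absurd (lt_of_lt_of_le h1 (le_trans this h2)) (lt_irrefl _)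
    have hDdisj' : Pairwise (Function.onFun Disjoint D) := by
      intro i j hij
      rcases hij.lt_or_gt with h | h
      · exact hDdisj i j h
      · exact (hDdisj j i h).symm
    have hSdisj : Pairwise (Function.onFun Disjoint S) := fun i j hij =>
      (hDdisj' hij).preimage W
    have hEdisj : Pairwise (Function.onFun Disjoint E) := by
      intro i j hij
      exact (Set.disjoint_prod.2 (Or.inr (hDdisj' hij))).preimage _
    -- key inequality from the density identity
    have key : ∀ j : ℕ, (j : ℝ≥0∞) * P (S j) ≤ P (E j) := by
      intro j
      set f : ℝ × 𝒲 → ℝ := (s ×ˢ D j).indicator (fun _ => (1 : ℝ)) with hf_def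
      have hf_meas : Measurable f := measurable_const.indicator (hs.prod (hD j))
      have hf_bd : ∀ x, |f x| ≤ 1 := by
        intro x; by_cases h : x ∈ s ×ˢ D j <;> simp [f, Set.indicator_apply, h]
      have hd := hq₀_density f hf_meas ⟨1, hf_bd⟩
      have hL1 : (fun ω => f (A ω, W ω)) = (E j).indicator (fun _ => (1 : ℝ)) := by
        ext ω; simp [f, E, Set.indicator_apply, Set.mem_preimage]
      -- inner integral computation
      have hinner : ∀ ω, (∫ a : ℝ, f (a, W ω) * q₀ (a, W ω))
          = (S j).indicator (fun ω => (L (W ω)).toReal) ω := by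
        intro ω
        by_cases hw : W ω ∈ D j
        · have hie : (fun a : ℝ => f (a, W ω) * q₀ (a, W ω))
              = s.indicator (fun a => q₀ (a, W ω)) := by
            ext a
            by_cases ha : a ∈ s <;> simp [f, Set.indicator_apply, ha, hw, Set.mem_prod]
          have hfin : L (W ω) < ⊤ := lt_of_lt_of_le hw.2 le_top
          have hint : IntegrableOn (fun a => q₀ (a, W ω)) s := by
            refine ⟨(hq₀_meas.comp (measurable_id.prodMk measurable_const)).aestronglyMeasurable, ?_⟩
            rw [hasFiniteIntegral_iff_norm]
            refine lt_of_le_of_lt (le_of_eq ?_) (lt_of_lt_of_le hw.2 le_top |> lt_of_le_of_lt (le_refl _) |> fun _ => hw.2.trans_le le_top)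
            apply lintegral_congr
            intro a
            rw [ENNReal.ofReal_eq_ofReal_iff] <;>
              simp [abs_of_nonneg (hq₀_nonneg (a, W ω)), hq₀_nonneg (a, W ω)]
          rw [hie, integral_indicator hs]
          rw [Set.indicator_of_mem (by exact hw : ω ∈ S j)]
          rw [integral_eq_lintegral_of_nonneg_ae
            (Filter.Eventually.of_forall fun a => hq₀_nonneg (a, W ω))
            ((hq₀_meas.comp (measurable_id.prodMk measurable_const)).aestronglyMeasurable)]
          rfl
        · have hie : ∀ a : ℝ, f (a, W ω) * q₀ (a, W ω) = 0 := by
            intro a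
            have : f (a, W ω) = 0 := Set.indicator_of_notMem (by simp [Set.mem_prod, hw]) _
            rw [this, zero_mul]
          rw [Set.indicator_of_notMem (by exact hw : ω ∉ S j)]
          simp [hie]
      -- the indicator toReal function is integrable (bounded by j+1)
      have hbd : ∀ ω, |(S j).indicator (fun ω => (L (W ω)).toReal) ω| ≤ (j : ℝ) + 1 := by
        intro ω
        by_cases hw : ω ∈ S j
        · rw [Set.indicator_of_mem hw]
          have hlt : L (W ω) ≤ (j : ℝ≥0∞) + 1 := le_of_lt hw.2
          have : (L (W ω)).toReal ≤ ((j : ℝ≥0∞) + 1).toReal :=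
            ENNReal.toReal_mono (by simp) hlt
          rw [abs_of_nonneg ENNReal.toReal_nonneg]
          rw [ENNReal.toReal_add (ENNReal.natCast_ne_top j) ENNReal.one_ne_top] at this
          simpa using this
        · rw [Set.indicator_of_notMem hw]; simp; positivity
      have hmeas2 : Measurable ((S j).indicator (fun ω => (L (W ω)).toReal)) :=
        ((hLmeas.comp hW).ennreal_toReal).indicator (hSmeas j)
      have hint2 : Integrable ((S j).indicator (fun ω => (L (W ω)).toReal)) P :=
        int_of_bdd _ hmeas2 ⟨(j : ℝ) + 1, hbd⟩
      -- lower bound pointwise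
      have hlow : ∀ ω, (S j).indicator (fun _ => (j : ℝ)) ω
          ≤ (S j).indicator (fun ω => (L (W ω)).toReal) ω := by
        intro ω
        by_cases hw : ω ∈ S j
        · rw [Set.indicator_of_mem hw, Set.indicator_of_mem hw]
          have h1 : (j : ℝ≥0∞) ≤ L (W ω) := hw.1
          have h2 : L (W ω) ≠ ⊤ := (lt_of_lt_of_le hw.2 le_top).ne
          have := ENNReal.toReal_mono h2 h1
          simpa using this
        · rw [Set.indicator_of_notMem hw, Set.indicator_of_notMem hw]
      have hint1 : Integrable ((S j).indicator (fun _ => (j : ℝ))) P :=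
        int_of_bdd _ (measurable_const.indicator (hSmeas j))
          ⟨(j : ℝ), fun ω => by
            by_cases hw : ω ∈ S j <;>
              simp [Set.indicator_apply, hw, abs_of_nonneg, Nat.cast_nonneg]⟩
      have hreal : (j : ℝ) * (P (S j)).toReal ≤ (P (E j)).toReal := by
        have e1 : ∫ ω, (S j).indicator (fun _ => (j : ℝ)) ω ∂P = (P (S j)).toReal * j := by
          rw [integral_indicator_const (j : ℝ) (hSmeas j)]; simp [smul_eq_mul, measureReal_def]
        have e2 : ∫ ω, f (A ω, W ω) ∂P = (P (E j)).toReal := by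
          rw [hL1, integral_indicator_const (1 : ℝ) (hEmeas j)]; simp [measureReal_def]
        have e3 : ∫ ω, (∫ a : ℝ, f (a, W ω) * q₀ (a, W ω)) ∂P
            = ∫ ω, (S j).indicator (fun ω => (L (W ω)).toReal) ω ∂P :=
          integral_congr_ae (Filter.Eventually.of_forall hinner)
        have := integral_mono hint1 hint2 hlow
        rw [e1] at this
        rw [hd, e3] at e2
        rw [← e2]
        linarith [this]
      -- lift to ℝ≥0∞
      calc (j : ℝ≥0∞) * P (S j)
          = ENNReal.ofReal ((j : ℝ) * (P (S j)).toReal) := by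
            rw [ENNReal.ofReal_mul (Nat.cast_nonneg j)]
            rw [ENNReal.ofReal_natCast, ENNReal.ofReal_toReal (measure_ne_top P _)]
        _ ≤ ENNReal.ofReal ((P (E j)).toReal) := ENNReal.ofReal_le_ofReal hreal
        _ = P (E j) := ENNReal.ofReal_toReal (measure_ne_top P _)
    -- decompose the lintegral over the partition
    have hae : ∀ᵐ ω ∂P, L (W ω) ≠ ⊤ := by
      rw [ae_iff]
      refine measure_mono_null ?_ (stage1 n)
      intro ω hω
      simp only [Set.mem_setOf_eq, not_not] at hω
      exact hω
    have hmem : ∀ ω, L (W ω) ≠ ⊤ → ω ∈ ⋃ j : ℕ, S j := by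
      intro ω hω
      set x := L (W ω) with hx
      refine Set.mem_iUnion.2 ⟨⌊x.toReal⌋₊, ?_, ?_⟩
      · have h1 : (⌊x.toReal⌋₊ : ℝ) ≤ x.toReal := Nat.floor_le ENNReal.toReal_nonneg
        have := ENNReal.ofReal_le_ofReal h1
        rwa [ENNReal.ofReal_natCast, ENNReal.ofReal_toReal hω] at this
      · have h2 : x.toReal < ⌊x.toReal⌋₊ + 1 := Nat.lt_floor_add_one _
        have := ENNReal.ofReal_lt_ofReal_iff_of_nonneg ENNReal.toReal_nonneg |>.mpr h2
        rw [ENNReal.ofReal_toReal hω] at this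
        refine lt_of_lt_of_le this ?_
        rw [ENNReal.ofReal_add (by positivity) zero_le_one]
        simp [ENNReal.ofReal_natCast]
    have hdecomp : ∫⁻ ω, L (W ω) ∂P = ∑' j : ℕ, ∫⁻ ω in S j, L (W ω) ∂P := by
      rw [← lintegral_iUnion hSmeas hSdisj]
      have : ∫⁻ ω, L (W ω) ∂P = ∫⁻ ω, (⋃ j : ℕ, S j).indicator (fun ω => L (W ω)) ω ∂P := by
        apply lintegral_congr_ae
        filter_upwards [hae] with ω hω
        rw [Set.indicator_of_mem (hmem ω hω)]
      rw [this, lintegral_indicator (MeasurableSet.iUnion hSmeas)]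
    calc ∫⁻ ω, L (W ω) ∂P = ∑' j : ℕ, ∫⁻ ω in S j, L (W ω) ∂P := hdecomp
      _ ≤ ∑' j : ℕ, (P (E j) + P (S j)) := by
          apply ENNReal.tsum_le_tsum
          intro j
          calc ∫⁻ ω in S j, L (W ω) ∂P ≤ ∫⁻ _ in S j, ((j : ℝ≥0∞) + 1) ∂P := by
                apply setLIntegral_mono measurable_const
                intro ω hω
                exact le_of_lt hω.2
            _ = ((j : ℝ≥0∞) + 1) * P (S j) := setLIntegral_const _ _
            _ = (j : ℝ≥0∞) * P (S j) + P (S j) := by rw [add_mul, one_mul]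
            _ ≤ P (E j) + P (S j) := add_le_add (key j) le_rfl
      _ = (∑' j : ℕ, P (E j)) + ∑' j : ℕ, P (S j) := ENNReal.tsum_add
      _ ≤ 1 + 1 := by
          apply add_le_add
          · rw [← measure_iUnion hEdisj hEmeas]; exact prob_le_one
          · rw [← measure_iUnion hSdisj hSmeas]; exact prob_le_one
      _ = 2 := one_add_one_eq_two
  -- the lintegral version of the density identity, for arbitrary nonnegative measurable h
  have density_lintegral : ∀ h : ℝ × 𝒲 → ℝ, Measurable h → (∀ p, 0 ≤ h p) →
      ∫⁻ ω, ENNReal.ofReal (h (A ω, W ω)) ∂P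
        = ∫⁻ ω, (∫⁻ a : ℝ, ENNReal.ofReal (h (a, W ω) * q₀ (a, W ω))) ∂P := by
    intro h hh_meas hh_nonneg
    set hn : ℕ → ℝ × 𝒲 → ℝ :=
      fun n p => if p.1 ∈ Icc (-(n : ℝ)) n then min (h p) n else 0 with hhn_def
    have hn_meas : ∀ n, Measurable (hn n) := by
      intro n
      exact Measurable.ite (measurable_fst measurableSet_Icc)
        (hh_meas.min measurable_const) measurable_const
    have hn_nonneg : ∀ n p, 0 ≤ hn n p := by
      intro n p
      simp only [hn]
      split_ifs
      · exact le_min (hh_nonneg p) (Nat.cast_nonneg n)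
      · exact le_refl 0
    have hn_le : ∀ n p, hn n p ≤ h p := by
      intro n p
      simp only [hn]
      split_ifs
      · exact min_le_left _ _
      · exact hh_nonneg p
    have hn_bd : ∀ n p, |hn n p| ≤ (n : ℝ) := by
      intro n p
      rw [abs_of_nonneg (hn_nonneg n p)]
      simp only [hn]
      split_ifs
      · exact min_le_right _ _
      · exact Nat.cast_nonneg n
    have hn_mono : ∀ p, Monotone fun n => hn n p := by
      intro p n m hnm
      have hcast : (n : ℝ) ≤ m := Nat.cast_le.mpr hnm
      simp only [hn, Set.mem_Icc]
      split_ifs with hp hq hq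
      · exact min_le_min (le_refl _) hcast
      · exact absurd ⟨by linarith [hp.1], by linarith [hp.2]⟩ hq
      · exact le_min (hh_nonneg p) (Nat.cast_nonneg m)
      · exact le_refl 0
    have hn_sup : ∀ p, (⨆ n : ℕ, ENNReal.ofReal (hn n p)) = ENNReal.ofReal (h p) := by
      intro p
      apply le_antisymm
      · exact iSup_le fun n => ENNReal.ofReal_le_ofReal (hn_le n p)
      · obtain ⟨n₁, hn₁⟩ := exists_nat_ge |p.1|
        obtain ⟨n₂, hn₂⟩ := exists_nat_ge (h p)
        set n := max n₁ n₂ with hn_def2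
        have hp : p.1 ∈ Icc (-(n : ℝ)) n := by
          have h1 := abs_le.mp hn₁
          have : (n₁ : ℝ) ≤ n := Nat.cast_le.mpr (le_max_left _ _)
          exact ⟨by linarith [h1.1], by linarith [h1.2]⟩
        have hval : hn n p = h p := by
          have : (n₂ : ℝ) ≤ n := Nat.cast_le.mpr (le_max_right _ _)
          simp only [hn, if_pos hp]
          exact min_eq_left (by linarith)
        exact le_iSup_of_le n (le_of_eq (by rw [hval]))
    -- the key identity for each truncation level
    have step : ∀ n : ℕ,
        ∫⁻ ω, ENNReal.ofReal (hn n (A ω, W ω)) ∂P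
          = ∫⁻ ω, (∫⁻ a : ℝ, ENNReal.ofReal (hn n (a, W ω) * q₀ (a, W ω))) ∂P := by
      intro n
      set G : ℝ × 𝒲 → ℝ≥0∞ := fun p => ENNReal.ofReal (hn n p * q₀ p) with hG_def
      have hG_meas : Measurable G :=
        ENNReal.measurable_ofReal.comp ((hn_meas n).mul hq₀_meas)
      set ℓ : Ω → ℝ≥0∞ := fun ω => ∫⁻ a : ℝ, G (a, W ω) with hℓ_def
      have hℓmeas : Measurable ℓ :=
        (Measurable.lintegral_prod_left' hG_meas).comp hW
      have hℓle : ∀ ω, ℓ ω ≤ (n : ℝ≥0∞) * Lfun q₀ n (W ω) := by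
        intro ω
        have hpt : ∀ a : ℝ, G (a, W ω)
            ≤ (Icc (-(n : ℝ)) n).indicator
                (fun a => (n : ℝ≥0∞) * ENNReal.ofReal (q₀ (a, W ω))) a := by
          intro a
          by_cases ha : a ∈ Icc (-(n : ℝ)) n
          · rw [Set.indicator_of_mem ha]
            have : hn n (a, W ω) * q₀ (a, W ω) ≤ (n : ℝ) * q₀ (a, W ω) :=
              mul_le_mul_of_nonneg_right
                (le_trans (le_abs_self _) (hn_bd n (a, W ω)))
                (hq₀_nonneg _)
            calc G (a, W ω) ≤ ENNReal.ofReal ((n : ℝ) * q₀ (a, W ω)) :=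
                  ENNReal.ofReal_le_ofReal this
              _ = (n : ℝ≥0∞) * ENNReal.ofReal (q₀ (a, W ω)) := by
                  rw [ENNReal.ofReal_mul (Nat.cast_nonneg n), ENNReal.ofReal_natCast]
          · rw [Set.indicator_of_notMem ha]
            have : hn n (a, W ω) = 0 := by simp only [hn]; exact if_neg ha
            simp [G, this]
        calc ℓ ω ≤ ∫⁻ a, (Icc (-(n : ℝ)) n).indicator
              (fun a => (n : ℝ≥0∞) * ENNReal.ofReal (q₀ (a, W ω))) a := lintegral_mono hpt
          _ = ∫⁻ a in Icc (-(n : ℝ)) n, (n : ℝ≥0∞) * ENNReal.ofReal (q₀ (a, W ω)) :=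
              lintegral_indicator measurableSet_Icc _
          _ = (n : ℝ≥0∞) * Lfun q₀ n (W ω) := by
              rw [lintegral_const_mul _ (by
                exact (ENNReal.measurable_ofReal.comp
                  (hq₀_meas.comp (measurable_id.prodMk measurable_const))))]
              rfl
      have hℓlint : ∫⁻ ω, ℓ ω ∂P ≤ (n : ℝ≥0∞) * 2 := by
        calc ∫⁻ ω, ℓ ω ∂P ≤ ∫⁻ ω, (n : ℝ≥0∞) * Lfun q₀ n (W ω) ∂P := lintegral_mono hℓle
          _ = (n : ℝ≥0∞) * ∫⁻ ω, Lfun q₀ n (W ω) ∂P :=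
              lintegral_const_mul _ ((measurable_Lfun hq₀_meas n).comp hW)
          _ ≤ (n : ℝ≥0∞) * 2 := mul_le_mul_right (stage2 n) _
      have hℓlint_ne : ∫⁻ ω, ℓ ω ∂P ≠ ⊤ :=
        (lt_of_le_of_lt hℓlint (by simp [ENNReal.mul_lt_top, ENNReal.natCast_lt_top])).ne
      have hae_fin : ∀ᵐ ω ∂P, ℓ ω ≠ ⊤ := by
        have h1 : ∀ᵐ ω ∂P, Lfun q₀ n (W ω) ≠ ⊤ := by
          rw [ae_iff]
          refine measure_mono_null ?_ (stage1 n)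
          intro ω hω
          simpa using hω
        filter_upwards [h1] with ω hω
        exact (lt_of_le_of_lt (hℓle ω)
          (ENNReal.mul_lt_top (ENNReal.natCast_lt_top n) (lt_top_iff_ne_top.mpr hω))).ne
      have hae_int : ∀ᵐ ω ∂P, Integrable (fun a => hn n (a, W ω) * q₀ (a, W ω)) (volume) := by
        filter_upwards [hae_fin] with ω hω
        refine ⟨((hn_meas n).mul hq₀_meas).comp
          (measurable_id.prodMk measurable_const) |>.aestronglyMeasurable, ?_⟩
        rw [hasFiniteIntegral_iff_norm]
        refine lt_of_le_of_lt (le_of_eq ?_) (lt_top_iff_ne_top.mpr hω)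
        apply lintegral_congr
        intro a
        rw [Real.norm_eq_abs, abs_of_nonneg (mul_nonneg (hn_nonneg n _) (hq₀_nonneg _))]
      have key_ae : ∀ᵐ ω ∂P,
          (∫ a : ℝ, hn n (a, W ω) * q₀ (a, W ω)) = (ℓ ω).toReal := by
        filter_upwards [hae_int, hae_fin] with ω hint hfin
        have := ofReal_integral_eq_lintegral_ofReal hint
          (Filter.Eventually.of_forall fun a => mul_nonneg (hn_nonneg n _) (hq₀_nonneg _))
        have h2 : ENNReal.ofReal (∫ a : ℝ, hn n (a, W ω) * q₀ (a, W ω)) = ℓ ω := this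
        rw [← h2, ENNReal.toReal_ofReal
          (integral_nonneg fun a => mul_nonneg (hn_nonneg n _) (hq₀_nonneg _))]
      have hint1 : Integrable (fun ω => hn n (A ω, W ω)) P :=
        int_of_bdd _ ((hn_meas n).comp hΦ) ⟨n, fun ω => hn_bd n _⟩
      calc ∫⁻ ω, ENNReal.ofReal (hn n (A ω, W ω)) ∂P
          = ENNReal.ofReal (∫ ω, hn n (A ω, W ω) ∂P) :=
            (ofReal_integral_eq_lintegral_ofReal hint1
              (Filter.Eventually.of_forall fun ω => hn_nonneg n _)).symm
        _ = ENNReal.ofReal (∫ ω, (∫ a : ℝ, hn n (a, W ω) * q₀ (a, W ω)) ∂P) := by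
            rw [hq₀_density (hn n) (hn_meas n) ⟨n, fun p => hn_bd n p⟩]
        _ = ENNReal.ofReal (∫ ω, (ℓ ω).toReal ∂P) := by
            rw [integral_congr_ae key_ae]
        _ = ENNReal.ofReal ((∫⁻ ω, ℓ ω ∂P).toReal) := by
            rw [integral_toReal hℓmeas.aemeasurable
              (by filter_upwards [hae_fin] with ω hω; exact lt_top_iff_ne_top.mpr hω)]
        _ = ∫⁻ ω, ℓ ω ∂P := ENNReal.ofReal_toReal hℓlint_ne
        _ = ∫⁻ ω, (∫⁻ a : ℝ, ENNReal.ofReal (hn n (a, W ω) * q₀ (a, W ω))) ∂P := rfl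
    -- pass to the supremum using monotone convergence on both sides
    have lhs_eq : ∫⁻ ω, ENNReal.ofReal (h (A ω, W ω)) ∂P
        = ⨆ n : ℕ, ∫⁻ ω, ENNReal.ofReal (hn n (A ω, W ω)) ∂P := by
      calc ∫⁻ ω, ENNReal.ofReal (h (A ω, W ω)) ∂P
          = ∫⁻ ω, ⨆ n : ℕ, ENNReal.ofReal (hn n (A ω, W ω)) ∂P :=
            lintegral_congr fun ω => (hn_sup (A ω, W ω)).symm
        _ = ⨆ n : ℕ, ∫⁻ ω, ENNReal.ofReal (hn n (A ω, W ω)) ∂P :=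
            lintegral_iSup (fun n => (ENNReal.measurable_ofReal.comp
              ((hn_meas n).comp hΦ))) (fun n m hnm ω =>
                ENNReal.ofReal_le_ofReal (hn_mono _ hnm))
    have rhs_inner : ∀ w : 𝒲, (∫⁻ a : ℝ, ENNReal.ofReal (h (a, w) * q₀ (a, w)))
        = ⨆ n : ℕ, ∫⁻ a : ℝ, ENNReal.ofReal (hn n (a, w) * q₀ (a, w)) := by
      intro w
      have hpt : ∀ a : ℝ, ENNReal.ofReal (h (a, w) * q₀ (a, w))
          = ⨆ n : ℕ, ENNReal.ofReal (hn n (a, w) * q₀ (a, w)) := by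
        intro a
        have e : ∀ n : ℕ, ENNReal.ofReal (hn n (a, w) * q₀ (a, w))
            = ENNReal.ofReal (hn n (a, w)) * ENNReal.ofReal (q₀ (a, w)) :=
          fun n => ENNReal.ofReal_mul (hn_nonneg n _)
        rw [ENNReal.ofReal_mul (hh_nonneg _), ← hn_sup (a, w), ENNReal.iSup_mul]
        exact iSup_congr fun n => (e n).symm
      calc (∫⁻ a : ℝ, ENNReal.ofReal (h (a, w) * q₀ (a, w)))
          = ∫⁻ a : ℝ, ⨆ n : ℕ, ENNReal.ofReal (hn n (a, w) * q₀ (a, w)) :=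
            lintegral_congr hpt
        _ = ⨆ n : ℕ, ∫⁻ a : ℝ, ENNReal.ofReal (hn n (a, w) * q₀ (a, w)) :=
            lintegral_iSup
              (fun n => ENNReal.measurable_ofReal.comp (((hn_meas n).mul hq₀_meas).comp
                (measurable_id.prodMk measurable_const)))
              (fun n m hnm a => ENNReal.ofReal_le_ofReal
                (mul_le_mul_of_nonneg_right (hn_mono _ hnm) (hq₀_nonneg _)))
    have rhs_eq : ∫⁻ ω, (∫⁻ a : ℝ, ENNReal.ofReal (h (a, W ω) * q₀ (a, W ω))) ∂P
        = ⨆ n : ℕ, ∫⁻ ω, (∫⁻ a : ℝ, ENNReal.ofReal (hn n (a, W ω) * q₀ (a, W ω))) ∂P := by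
      calc ∫⁻ ω, (∫⁻ a : ℝ, ENNReal.ofReal (h (a, W ω) * q₀ (a, W ω))) ∂P
          = ∫⁻ ω, ⨆ n : ℕ, (∫⁻ a : ℝ, ENNReal.ofReal (hn n (a, W ω) * q₀ (a, W ω))) ∂P :=
            lintegral_congr fun ω => rhs_inner (W ω)
        _ = ⨆ n : ℕ, ∫⁻ ω, (∫⁻ a : ℝ, ENNReal.ofReal (hn n (a, W ω) * q₀ (a, W ω))) ∂P :=
            lintegral_iSup
              (fun n => (Measurable.lintegral_prod_left'
                (ENNReal.measurable_ofReal.comp ((hn_meas n).mul hq₀_meas))).comp hW)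
              (fun n m hnm ω => lintegral_mono fun a => ENNReal.ofReal_le_ofReal
                (mul_le_mul_of_nonneg_right (hn_mono _ hnm) (hq₀_nonneg _)))
    rw [lhs_eq, rhs_eq]
    exact iSup_congr step
  -- the total mass of H₀ under P is 1
  have H_one : ∫⁻ ω, ENNReal.ofReal (H₀ (A ω, W ω)) ∂P = 1 := by
    have h1 := density_lintegral H₀ hH₀_meas hH₀_nonneg
    have h2 := density_lintegral (fun _ => (1 : ℝ)) measurable_const (fun _ => zero_le_one)
    have e1 : ∀ w : 𝒲, (∫⁻ a : ℝ, ENNReal.ofReal (H₀ (a, w) * q₀ (a, w)))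
        = ∫⁻ a : ℝ, ENNReal.ofReal (q₀ (a, w)) := by
      intro w
      have hpt : ∀ a : ℝ, H₀ (a, w) * q₀ (a, w) = q₀ (a - δ w, w) := by
        intro a
        rw [hH₀ a w, div_mul_cancel₀ _ (ne_of_gt (hq₀_pos (a, w)))]
      calc (∫⁻ a : ℝ, ENNReal.ofReal (H₀ (a, w) * q₀ (a, w)))
          = ∫⁻ a : ℝ, ENNReal.ofReal (q₀ (a - δ w, w)) :=
            lintegral_congr fun a => by rw [hpt a]
        _ = ∫⁻ a : ℝ, ENNReal.ofReal (q₀ (a, w)) :=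
            lintegral_sub_right_eq_self (fun a => ENNReal.ofReal (q₀ (a, w))) (δ w)
    have e2 : ∀ w : 𝒲, (∫⁻ a : ℝ, ENNReal.ofReal ((1 : ℝ) * q₀ (a, w)))
        = ∫⁻ a : ℝ, ENNReal.ofReal (q₀ (a, w)) :=
      fun w => lintegral_congr fun a => by rw [one_mul]
    rw [h1, lintegral_congr fun ω => e1 (W ω), ← lintegral_congr fun ω => e2 (W ω), ← h2]
    simp
  have H_int : Integrable (fun ω => H₀ (A ω, W ω)) P := by
    refine ⟨(hH₀_meas.comp hΦ).aestronglyMeasurable, ?_⟩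
    rw [hasFiniteIntegral_iff_norm]
    have : ∀ ω, ENNReal.ofReal ‖H₀ (A ω, W ω)‖ = ENNReal.ofReal (H₀ (A ω, W ω)) := by
      intro ω
      rw [Real.norm_eq_abs, abs_of_nonneg (hH₀_nonneg _)]
    rw [lintegral_congr this, H_one]
    exact ENNReal.one_lt_top
  -- shift identity for nonnegative bounded g
  have shift_nn : ∀ g : ℝ × 𝒲 → ℝ, Measurable g → (∀ p, 0 ≤ g p) → (∃ M, ∀ p, |g p| ≤ M) →
      ∫ ω, H₀ (A ω, W ω) * g (A ω, W ω) ∂P = ∫ ω, g (A ω + δ (W ω), W ω) ∂P := by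
    rintro g hg_meas hg_nonneg ⟨M, hg_bd⟩
    have hshift_meas : Measurable fun ω => g (A ω + δ (W ω), W ω) :=
      hg_meas.comp ((hA.add (hδ.comp hW)).prodMk hW)
    have int_rhs : Integrable (fun ω => g (A ω + δ (W ω), W ω)) P :=
      int_of_bdd _ hshift_meas ⟨M, fun ω => hg_bd _⟩
    have int_lhs : Integrable (fun ω => H₀ (A ω, W ω) * g (A ω, W ω)) P := by
      have := H_int.bdd_mul ((hg_meas.comp hΦ).aestronglyMeasurable)
        (Filter.Eventually.of_forall fun ω => by rw [Real.norm_eq_abs]; exact hg_bd _)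
      refine this.congr (Filter.Eventually.of_forall fun ω => mul_comm _ _)
    have e1 : ENNReal.ofReal (∫ ω, H₀ (A ω, W ω) * g (A ω, W ω) ∂P)
        = ∫⁻ ω, ENNReal.ofReal (H₀ (A ω, W ω) * g (A ω, W ω)) ∂P :=
      ofReal_integral_eq_lintegral_ofReal int_lhs
        (Filter.Eventually.of_forall fun ω => mul_nonneg (hH₀_nonneg _) (hg_nonneg _))
    have e3 : ENNReal.ofReal (∫ ω, g (A ω + δ (W ω), W ω) ∂P)
        = ∫⁻ ω, ENNReal.ofReal (g (A ω + δ (W ω), W ω)) ∂P :=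
      ofReal_integral_eq_lintegral_ofReal int_rhs
        (Filter.Eventually.of_forall fun ω => hg_nonneg _)
    have e2 : ∫⁻ ω, ENNReal.ofReal (H₀ (A ω, W ω) * g (A ω, W ω)) ∂P
        = ∫⁻ ω, ENNReal.ofReal (g (A ω + δ (W ω), W ω)) ∂P := by
      have d1 := density_lintegral (fun p => H₀ p * g p) (hH₀_meas.mul hg_meas)
        (fun p => mul_nonneg (hH₀_nonneg p) (hg_nonneg p))
      have d2 := density_lintegral (fun p => g (p.1 + δ p.2, p.2))
        (hg_meas.comp ((measurable_fst.add (hδ.comp measurable_snd)).prodMk measurable_snd))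
        (fun p => hg_nonneg _)
      have inner_eq : ∀ w : 𝒲,
          (∫⁻ a : ℝ, ENNReal.ofReal (H₀ (a, w) * g (a, w) * q₀ (a, w)))
            = ∫⁻ a : ℝ, ENNReal.ofReal (g (a + δ w, w) * q₀ (a, w)) := by
        intro w
        have hpt : ∀ a : ℝ, H₀ (a, w) * g (a, w) * q₀ (a, w)
            = g (a, w) * q₀ (a - δ w, w) := by
          intro a
          have hq : q₀ (a, w) ≠ 0 := ne_of_gt (hq₀_pos (a, w))
          rw [hH₀ a w]
          field_simp
        calc (∫⁻ a : ℝ, ENNReal.ofReal (H₀ (a, w) * g (a, w) * q₀ (a, w)))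
            = ∫⁻ a : ℝ, ENNReal.ofReal (g (a, w) * q₀ (a - δ w, w)) :=
              lintegral_congr fun a => by rw [hpt a]
          _ = ∫⁻ a : ℝ, (fun c : ℝ => ENNReal.ofReal (g (c + δ w, w) * q₀ (c, w))) (a - δ w) :=
              lintegral_congr fun a => by
                show ENNReal.ofReal (g (a, w) * q₀ (a - δ w, w))
                  = ENNReal.ofReal (g (a - δ w + δ w, w) * q₀ (a - δ w, w))
                rw [show a - δ w + δ w = a by ring]
          _ = ∫⁻ a : ℝ, ENNReal.ofReal (g (a + δ w, w) * q₀ (a, w)) :=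
              lintegral_sub_right_eq_self (fun c => ENNReal.ofReal (g (c + δ w, w) * q₀ (c, w)))
                (δ w)
      rw [d1, d2]
      exact lintegral_congr fun ω => inner_eq (W ω)
    have := e1.trans (e2.trans e3.symm)
    have h1 : 0 ≤ ∫ ω, H₀ (A ω, W ω) * g (A ω, W ω) ∂P :=
      integral_nonneg fun ω => mul_nonneg (hH₀_nonneg _) (hg_nonneg _)
    have h2 : 0 ≤ ∫ ω, g (A ω + δ (W ω), W ω) ∂P :=
      integral_nonneg fun ω => hg_nonneg _
    exact (ENNReal.ofReal_eq_ofReal_iff h1 h2).mp this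
  -- integrability helpers
  have int_mulH : ∀ g : ℝ × 𝒲 → ℝ, Measurable g → (∃ M, ∀ p, |g p| ≤ M) →
      Integrable (fun ω => H₀ (A ω, W ω) * g (A ω, W ω)) P := by
    rintro g hg_meas ⟨M, hg_bd⟩
    have := H_int.bdd_mul ((hg_meas.comp hΦ).aestronglyMeasurable)
      (Filter.Eventually.of_forall fun ω => by rw [Real.norm_eq_abs]; exact hg_bd _)
    exact this.congr (Filter.Eventually.of_forall fun ω => mul_comm _ _)
  have int_shift : ∀ g : ℝ × 𝒲 → ℝ, Measurable g → (∃ M, ∀ p, |g p| ≤ M) →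
      Integrable (fun ω => g (A ω + δ (W ω), W ω)) P := by
    rintro g hg_meas ⟨M, hg_bd⟩
    exact int_of_bdd _ (hg_meas.comp ((hA.add (hδ.comp hW)).prodMk hW))
      ⟨M, fun ω => hg_bd _⟩
  -- shift identity for general bounded g
  have shift : ∀ g : ℝ × 𝒲 → ℝ, Measurable g → (∃ M, ∀ p, |g p| ≤ M) →
      ∫ ω, H₀ (A ω, W ω) * g (A ω, W ω) ∂P = ∫ ω, g (A ω + δ (W ω), W ω) ∂P := by
    rintro g hg_meas ⟨M, hg_bd⟩
    set M' : ℝ := max M 0 with hM'_def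
    have hM' : 0 ≤ M' := le_max_right _ _
    have hg_bd' : ∀ p, |g p| ≤ M' := fun p => le_trans (hg_bd p) (le_max_left _ _)
    set g' : ℝ × 𝒲 → ℝ := fun p => g p + M' with hg'_def
    have hg'_meas : Measurable g' := hg_meas.add measurable_const
    have hg'_nonneg : ∀ p, 0 ≤ g' p := by
      intro p
      have := (abs_le.mp (hg_bd' p)).1
      simp only [g']
      linarith
    have hg'_bd : ∀ p, |g' p| ≤ 2 * M' := by
      intro p
      have h1 := abs_le.mp (hg_bd' p)
      rw [abs_le]
      constructor <;> simp only [g'] <;> linarith [h1.1, h1.2]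
    have S1 := shift_nn g' hg'_meas hg'_nonneg ⟨2 * M', hg'_bd⟩
    have S2 := shift_nn (fun _ => M') measurable_const (fun _ => hM')
      ⟨M', fun p => by rw [abs_of_nonneg hM']⟩
    have S2' : ∫ ω, H₀ (A ω, W ω) * M' ∂P = M' := by
      rw [S2, integral_const]
      simp
    have Ig' : Integrable (fun ω => H₀ (A ω, W ω) * g' (A ω, W ω)) P :=
      int_mulH g' hg'_meas ⟨2 * M', hg'_bd⟩
    have IM : Integrable (fun ω => H₀ (A ω, W ω) * M') P :=
      int_mulH (fun _ => M') measurable_const ⟨M', fun p => by rw [abs_of_nonneg hM']⟩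
    have Ishift : Integrable (fun ω => g (A ω + δ (W ω), W ω)) P :=
      int_shift g hg_meas ⟨M, hg_bd⟩
    have lhs_split : (fun ω => H₀ (A ω, W ω) * g (A ω, W ω))
        = fun ω => H₀ (A ω, W ω) * g' (A ω, W ω) - H₀ (A ω, W ω) * M' := by
      ext ω
      simp only [g']
      ring
    have rhs_split : ∀ ω, g' (A ω + δ (W ω), W ω) = g (A ω + δ (W ω), W ω) + M' := by
      intro ω
      simp [g']
    calc ∫ ω, H₀ (A ω, W ω) * g (A ω, W ω) ∂P
        = ∫ ω, (H₀ (A ω, W ω) * g' (A ω, W ω) - H₀ (A ω, W ω) * M') ∂P := by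
          rw [lhs_split]
      _ = (∫ ω, H₀ (A ω, W ω) * g' (A ω, W ω) ∂P) - ∫ ω, H₀ (A ω, W ω) * M' ∂P :=
          integral_sub Ig' IM
      _ = (∫ ω, g' (A ω + δ (W ω), W ω) ∂P) - M' := by rw [S1, S2']
      _ = ((∫ ω, g (A ω + δ (W ω), W ω) ∂P) + M') - M' := by
          rw [integral_congr_ae (Filter.Eventually.of_forall rhs_split),
            integral_add Ishift (integrable_const M'), integral_const]
          simp
      _ = ∫ ω, g (A ω + δ (W ω), W ω) ∂P := by ring
  -- conditional expectation step : E[H₀ Y] = E[H₀ Q̄₀]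
  have hm : MeasurableSpace.comap (fun ω => (A ω, W ω)) inferInstance
      ≤ (inferInstance : MeasurableSpace Ω) := by exact hΦ.comap_le
  haveI : SigmaFinite (P.trim hm) := by
    have : IsFiniteMeasure (P.trim hm) := isFiniteMeasure_trim hm
    infer_instance
  have hΦm : Measurable[MeasurableSpace.comap (fun ω => (A ω, W ω)) inferInstance]
      (fun ω => (A ω, W ω)) := fun s hs => ⟨s, hs, rfl⟩
  have hsm : StronglyMeasurable[MeasurableSpace.comap (fun ω => (A ω, W ω)) inferInstance]
      (fun ω => H₀ (A ω, W ω)) :=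
    (hH₀_meas.comp hΦm).stronglyMeasurable
  have hmul_int : Integrable ((fun ω => H₀ (A ω, W ω)) * Y) P := hH₀Y_int
  have hpull := condExp_mul_of_stronglyMeasurable_left hsm hmul_int hY_int
  have hEY : ∫ ω, H₀ (A ω, W ω) * Y ω ∂P
      = ∫ ω, H₀ (A ω, W ω) * Qbar₀ (A ω, W ω) ∂P := by
    calc ∫ ω, H₀ (A ω, W ω) * Y ω ∂P
        = ∫ ω, ((fun ω => H₀ (A ω, W ω)) * Y) ω ∂P := rfl
      _ = ∫ ω, (P[(fun ω => H₀ (A ω, W ω)) * Y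
            | MeasurableSpace.comap (fun ω => (A ω, W ω)) inferInstance]) ω ∂P :=
          (integral_condExp hm).symm
      _ = ∫ ω, ((fun ω => H₀ (A ω, W ω))
            * P[Y | MeasurableSpace.comap (fun ω => (A ω, W ω)) inferInstance]) ω ∂P :=
          integral_congr_ae hpull
      _ = ∫ ω, H₀ (A ω, W ω) * Qbar₀ (A ω, W ω) ∂P := by
          apply integral_congr_ae
          filter_upwards [hQbar₀_condexp] with ω hω
          simp only [Pi.mul_apply]
          rw [hω]
  -- final assembly
  have I2 : Integrable (fun ω => H₀ (A ω, W ω) * Qbar (A ω, W ω)) P :=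
    int_mulH Qbar hQbar_meas hQbar_bd
  have I3 : Integrable (fun ω => Qbar (A ω + δ (W ω), W ω)) P :=
    int_shift Qbar hQbar_meas hQbar_bd
  have split : (fun ω => H₀ (A ω, W ω) * (Y ω - Qbar (A ω, W ω))
      + Qbar (A ω + δ (W ω), W ω))
      = fun ω => (H₀ (A ω, W ω) * Y ω - H₀ (A ω, W ω) * Qbar (A ω, W ω))
          + Qbar (A ω + δ (W ω), W ω) := by
    ext ω
    ring
  have I12 : Integrable
      (fun ω => H₀ (A ω, W ω) * Y ω - H₀ (A ω, W ω) * Qbar (A ω, W ω)) P :=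
    hH₀Y_int.sub I2
  rw [split]
  rw [integral_add I12 I3]
  rw [integral_sub hH₀Y_int I2]
  rw [shift Qbar hQbar_meas hQbar_bd, hEY, shift Qbar₀ hQbar₀_meas hQbar₀_bd, ← hψ₀]
  ring
end

section
/- Exact second-order remainder of the full-data efficient influence function: for every bounded measurable Q̄ : ℝ × 𝒲 → ℝ and every measurable H' : ℝ × 𝒲 → ℝ with H'(A, W)·Y and H'(A, W) integrable, E[H'(A, W)(Y − Q̄(A, W)) + Q̄(A + δ(W), W)] − ψ₀ = E[(H'(A, W) − H₀(A, W))(Q̄₀(A, W) − Q̄(A, W))]. In particular the bias of the (uncentered) influence-function functional is a product of the errors in the density ratio and in the outcome regression. -/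
open MeasureTheory Filter

private lemma aux_ae {Ω 𝒲 : Type*} [MeasurableSpace Ω] [MeasurableSpace 𝒲]
    (P : Measure Ω) [IsProbabilityMeasure P]
    (W : Ω → 𝒲) (hW : Measurable W) (A : Ω → ℝ)
    (q₀ : ℝ × 𝒲 → ℝ) (hq₀_meas : Measurable q₀) (hq₀_nonneg : ∀ x, 0 ≤ q₀ x)
    (hq₀_density : ∀ f : ℝ × 𝒲 → ℝ, Measurable f → (∃ M : ℝ, ∀ x, |f x| ≤ M) →
      ∫ ω, f (A ω, W ω) ∂P = ∫ ω, (∫ a : ℝ, f (a, W ω) * q₀ (a, W ω)) ∂P) :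
    ∀ᵐ ω ∂P, Integrable (fun a => q₀ (a, W ω)) ∧ (∫ a, q₀ (a, W ω)) = 1 := by
  set g : 𝒲 → ℝ := fun w => ∫ a, q₀ (a, w) with hg_def
  have hg_sm : StronglyMeasurable g := by
    have h : StronglyMeasurable fun p : 𝒲 × ℝ => q₀ (p.2, p.1) :=
      (hq₀_meas.comp (measurable_snd.prodMk measurable_fst)).stronglyMeasurable
    exact h.integral_prod_right'
  have h1 : ∫ ω, g (W ω) ∂P = 1 := by
    have h := hq₀_density (fun _ => 1) measurable_const ⟨1, fun x => by norm_num⟩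
    simp only [one_mul] at h
    rw [integral_const] at h
    simpa using h.symm
  have hgW_int : Integrable (fun ω => g (W ω)) P := by
    by_contra h
    rw [integral_undef h] at h1; norm_num at h1
  have hmap : IsProbabilityMeasure (P.map W) := Measure.isProbabilityMeasure_map hW.aemeasurable
  have hg_int : Integrable g (P.map W) :=
    (integrable_map_measure hg_sm.aestronglyMeasurable hW.aemeasurable).mpr hgW_int
  have hsets : ∀ S : Set 𝒲, MeasurableSet S →
      ∫ w in S, g w ∂(P.map W) = ∫ w in S, (1:ℝ) ∂(P.map W) := by
    intro S hS
    have hfm : Measurable fun x : ℝ × 𝒲 => S.indicator (fun _ => (1:ℝ)) x.2 :=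
      (measurable_const.indicator hS).comp measurable_snd
    have hbd : ∀ x : ℝ × 𝒲, |S.indicator (fun _ => (1:ℝ)) x.2| ≤ 1 := by
      intro x; by_cases h : x.2 ∈ S <;> simp [Set.indicator, h]
    have hd := hq₀_density _ hfm ⟨1, hbd⟩
    have hR : ∀ ω, (∫ a, S.indicator (fun _ => (1:ℝ)) (W ω) * q₀ (a, W ω))
        = S.indicator (fun _ => (1:ℝ)) (W ω) * g (W ω) :=
      fun ω => integral_const_mul _ _
    rw [integral_congr_ae (Eventually.of_forall hR)] at hd
    have hind1 : ∀ ω, S.indicator (fun _ => (1:ℝ)) (W ω)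
        = (W ⁻¹' S).indicator (fun _ => (1:ℝ)) ω := by
      intro ω; by_cases h : W ω ∈ S <;> simp [Set.indicator, h]
    have hind2 : ∀ ω, S.indicator (fun _ => (1:ℝ)) (W ω) * g (W ω)
        = (W ⁻¹' S).indicator (fun ω => g (W ω)) ω := by
      intro ω; by_cases h : W ω ∈ S <;> simp [Set.indicator, h]
    rw [integral_congr_ae (Eventually.of_forall hind1),
      integral_congr_ae (Eventually.of_forall hind2),
      integral_indicator (hW hS), integral_indicator (hW hS)] at hd
    rw [setIntegral_map hS hg_sm.aestronglyMeasurable hW.aemeasurable,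
      setIntegral_map hS aestronglyMeasurable_const hW.aemeasurable]
    exact hd.symm
  have hae_map : ∀ᵐ w ∂(P.map W), g w = 1 := by
    have h := Integrable.ae_eq_of_forall_setIntegral_eq g (fun _ => (1:ℝ)) hg_int
      (integrable_const 1) (fun s hs _ => hsets s hs)
    exact h
  have hmeasset : MeasurableSet {w : 𝒲 | g w = 1} :=
    hg_sm.measurable (measurableSet_singleton (1:ℝ))
  have hae : ∀ᵐ ω ∂P, g (W ω) = 1 :=
    (ae_map_iff hW.aemeasurable hmeasset).mp hae_map
  filter_upwards [hae] with ω hgw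
  have hint : Integrable (fun a => q₀ (a, W ω)) := by
    by_contra h
    have h0 : g (W ω) = 0 := integral_undef h
    rw [h0] at hgw; norm_num at hgw
  exact ⟨hint, hgw⟩

private lemma aux_H0int {Ω 𝒲 : Type*} [MeasurableSpace Ω] [MeasurableSpace 𝒲]
    (P : Measure Ω) [IsProbabilityMeasure P]
    (W : Ω → 𝒲) (hW : Measurable W) (A : Ω → ℝ) (hA : Measurable A)
    (q₀ : ℝ × 𝒲 → ℝ) (hq₀_meas : Measurable q₀) (hq₀_nonneg : ∀ x, 0 ≤ q₀ x)
    (hq₀_pos : ∀ x, 0 < q₀ x)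
    (hq₀_density : ∀ f : ℝ × 𝒲 → ℝ, Measurable f → (∃ M : ℝ, ∀ x, |f x| ≤ M) →
      ∫ ω, f (A ω, W ω) ∂P = ∫ ω, (∫ a : ℝ, f (a, W ω) * q₀ (a, W ω)) ∂P)
    (δ : 𝒲 → ℝ)
    (H₀ : ℝ × 𝒲 → ℝ) (hH₀_meas : Measurable H₀)
    (hH₀_nonneg : ∀ x, 0 ≤ H₀ x)
    (hH₀q : ∀ a w, H₀ (a, w) * q₀ (a, w) = q₀ (a - δ w, w))
    (hae : ∀ᵐ ω ∂P, Integrable (fun a => q₀ (a, W ω)) ∧ (∫ a, q₀ (a, W ω)) = 1) :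
    Integrable (fun ω => H₀ (A ω, W ω)) P := by
  have haeW : Measurable fun ω => (A ω, W ω) := hA.prodMk hW
  have hminmeas : ∀ n : ℕ, Measurable fun x => min (H₀ x) (n:ℝ) :=
    fun n => hH₀_meas.min measurable_const
  have hminnonneg : ∀ (n : ℕ) x, 0 ≤ min (H₀ x) (n:ℝ) :=
    fun n x => le_min (hH₀_nonneg x) (Nat.cast_nonneg n)
  have hEn : ∀ n : ℕ, ∫ ω, min (H₀ (A ω, W ω)) (n:ℝ) ∂P ≤ 1 := by
    intro n
    have hd := hq₀_density (fun x => min (H₀ x) (n:ℝ)) (hminmeas n)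
      ⟨n, fun x => by rw [abs_of_nonneg (hminnonneg n x)]; exact min_le_right _ _⟩
    rw [hd]
    have h1 : (1:ℝ) = ∫ _ω : Ω, (1:ℝ) ∂P := by simp
    rw [h1]
    apply integral_mono_of_nonneg
    · exact Eventually.of_forall fun ω => integral_nonneg
        fun a => mul_nonneg (hminnonneg n _) (hq₀_nonneg _)
    · exact integrable_const 1
    · filter_upwards [hae] with ω hω
      calc (∫ a, min (H₀ (a, W ω)) (n:ℝ) * q₀ (a, W ω))
          ≤ ∫ a, q₀ (a - δ (W ω), W ω) := by
            apply integral_mono_of_nonneg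
            · exact Eventually.of_forall fun a =>
                mul_nonneg (hminnonneg n _) (hq₀_nonneg _)
            · exact hω.1.comp_sub_right (δ (W ω))
            · refine Eventually.of_forall fun a => ?_
              calc min (H₀ (a, W ω)) (n:ℝ) * q₀ (a, W ω)
                  ≤ H₀ (a, W ω) * q₀ (a, W ω) :=
                    mul_le_mul_of_nonneg_right (min_le_left _ _) (hq₀_nonneg _)
                _ = q₀ (a - δ (W ω), W ω) := hH₀q _ _
        _ = ∫ a, q₀ (a, W ω) :=
            integral_sub_right_eq_self (fun a => q₀ (a, W ω)) (δ (W ω))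
        _ = 1 := hω.2
  have hMinInt : ∀ n : ℕ, Integrable (fun ω => min (H₀ (A ω, W ω)) (n:ℝ)) P := by
    intro n
    refine (integrable_const (n:ℝ)).mono'
      (((hminmeas n).comp haeW).aestronglyMeasurable) ?_
    refine Eventually.of_forall fun ω => ?_
    rw [Real.norm_eq_abs, abs_of_nonneg (hminnonneg n _)]
    exact min_le_right _ _
  have hsup : ∀ ω : Ω, (⨆ n : ℕ, ENNReal.ofReal (min (H₀ (A ω, W ω)) (n:ℝ)))
      = ENNReal.ofReal (H₀ (A ω, W ω)) := by
    intro ω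
    apply le_antisymm
    · exact iSup_le fun n => ENNReal.ofReal_le_ofReal (min_le_left _ _)
    · have h : ENNReal.ofReal (H₀ (A ω, W ω))
          = ENNReal.ofReal (min (H₀ (A ω, W ω)) (⌈H₀ (A ω, W ω)⌉₊ : ℝ)) := by
        rw [min_eq_left (Nat.le_ceil _)]
      rw [h]
      exact le_iSup (fun n : ℕ => ENNReal.ofReal (min (H₀ (A ω, W ω)) (n:ℝ))) _
  have hkey : ∫⁻ ω, ENNReal.ofReal (H₀ (A ω, W ω)) ∂P ≤ 1 := by
    have hmono : Monotone fun (n:ℕ) (ω:Ω) => ENNReal.ofReal (min (H₀ (A ω, W ω)) (n:ℝ)) :=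
      fun n m hnm ω => ENNReal.ofReal_le_ofReal
        (min_le_min le_rfl (Nat.cast_le.2 hnm))
    have hls := lintegral_iSup (μ := P)
      (fun n => ENNReal.measurable_ofReal.comp ((hminmeas n).comp haeW)) hmono
    calc ∫⁻ ω, ENNReal.ofReal (H₀ (A ω, W ω)) ∂P
        = ∫⁻ ω, ⨆ n : ℕ, ENNReal.ofReal (min (H₀ (A ω, W ω)) (n:ℝ)) ∂P :=
          lintegral_congr fun ω => (hsup ω).symm
      _ = ⨆ n : ℕ, ∫⁻ ω, ENNReal.ofReal (min (H₀ (A ω, W ω)) (n:ℝ)) ∂P := hls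
      _ ≤ 1 := by
          refine iSup_le fun n => ?_
          rw [← ofReal_integral_eq_lintegral_ofReal (hMinInt n)
            (Eventually.of_forall fun ω => hminnonneg n _)]
          calc ENNReal.ofReal (∫ ω, min (H₀ (A ω, W ω)) (n:ℝ) ∂P)
              ≤ ENNReal.ofReal 1 := ENNReal.ofReal_le_ofReal (hEn n)
            _ = 1 := ENNReal.ofReal_one
  refine ⟨((hH₀_meas.comp haeW)).aestronglyMeasurable, ?_⟩
  have heq : ∫⁻ ω, ‖H₀ (A ω, W ω)‖ₑ ∂P
      = ∫⁻ ω, ENNReal.ofReal (H₀ (A ω, W ω)) ∂P :=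
    lintegral_congr fun ω => Real.enorm_eq_ofReal (hH₀_nonneg _)
  rw [HasFiniteIntegral, heq]
  exact lt_of_le_of_lt hkey ENNReal.one_lt_top

private lemma aux_shift {Ω 𝒲 : Type*} [MeasurableSpace Ω] [MeasurableSpace 𝒲]
    (P : Measure Ω) [IsProbabilityMeasure P]
    (W : Ω → 𝒲) (hW : Measurable W) (A : Ω → ℝ) (hA : Measurable A)
    (q₀ : ℝ × 𝒲 → ℝ) (hq₀_meas : Measurable q₀) (hq₀_nonneg : ∀ x, 0 ≤ q₀ x)
    (hq₀_pos : ∀ x, 0 < q₀ x)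
    (hq₀_density : ∀ f : ℝ × 𝒲 → ℝ, Measurable f → (∃ M : ℝ, ∀ x, |f x| ≤ M) →
      ∫ ω, f (A ω, W ω) ∂P = ∫ ω, (∫ a : ℝ, f (a, W ω) * q₀ (a, W ω)) ∂P)
    (δ : 𝒲 → ℝ) (hδ : Measurable δ)
    (H₀ : ℝ × 𝒲 → ℝ) (hH₀_meas : Measurable H₀)
    (hH₀_nonneg : ∀ x, 0 ≤ H₀ x)
    (hH₀q : ∀ a w, H₀ (a, w) * q₀ (a, w) = q₀ (a - δ w, w))
    (hae : ∀ᵐ ω ∂P, Integrable (fun a => q₀ (a, W ω)) ∧ (∫ a, q₀ (a, W ω)) = 1)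
    (hH₀_int : Integrable (fun ω => H₀ (A ω, W ω)) P)
    (f : ℝ × 𝒲 → ℝ) (hf_meas : Measurable f) (M : ℝ) (hM0 : 0 ≤ M)
    (hM : ∀ x, |f x| ≤ M) :
    ∫ ω, H₀ (A ω, W ω) * f (A ω, W ω) ∂P
      = ∫ ω, f (A ω + δ (W ω), W ω) ∂P := by
  have haeW : Measurable fun ω => (A ω, W ω) := hA.prodMk hW
  have hminnonneg : ∀ (n : ℕ) (x : ℝ × 𝒲), 0 ≤ min (H₀ x) (n:ℝ) :=
    fun n x => le_min (hH₀_nonneg x) (Nat.cast_nonneg n)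
  have hminmeas : ∀ n : ℕ, Measurable fun x => min (H₀ x) (n:ℝ) :=
    fun n => hH₀_meas.min measurable_const
  -- pointwise convergence of truncations
  have htend : ∀ x : ℝ × 𝒲, Tendsto (fun n : ℕ => min (H₀ x) (n:ℝ)) atTop (nhds (H₀ x)) := by
    intro x
    refine tendsto_const_nhds.congr' ?_
    filter_upwards [eventually_ge_atTop ⌈H₀ x⌉₊] with n hn
    exact (min_eq_left ((Nat.le_ceil _).trans (Nat.cast_le.2 hn))).symm
  -- the n-th identity from the density hypothesis
  have hEn : ∀ n : ℕ, ∫ ω, min (H₀ (A ω, W ω)) (n:ℝ) * f (A ω, W ω) ∂P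
      = ∫ ω, (∫ a, min (H₀ (a, W ω)) (n:ℝ) * f (a, W ω) * q₀ (a, W ω)) ∂P := by
    intro n
    exact hq₀_density (fun x => min (H₀ x) (n:ℝ) * f x)
      ((hminmeas n).mul hf_meas)
      ⟨n * M, fun x => by
        rw [abs_mul, abs_of_nonneg (hminnonneg n x)]
        exact mul_le_mul (min_le_right _ _) (hM x) (abs_nonneg _) (Nat.cast_nonneg n)⟩
  -- LHS limit
  have hL : Tendsto (fun n : ℕ => ∫ ω, min (H₀ (A ω, W ω)) (n:ℝ) * f (A ω, W ω) ∂P)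
      atTop (nhds (∫ ω, H₀ (A ω, W ω) * f (A ω, W ω) ∂P)) := by
    apply tendsto_integral_of_dominated_convergence
      (fun ω => M * H₀ (A ω, W ω))
    · exact fun n => (((hminmeas n).comp haeW).mul
        (hf_meas.comp haeW)).aestronglyMeasurable
    · exact hH₀_int.const_mul M
    · intro n
      refine Eventually.of_forall fun ω => ?_
      simp only [Real.norm_eq_abs, abs_mul]
      rw [abs_of_nonneg (hminnonneg n _)]
      calc min (H₀ (A ω, W ω)) (n:ℝ) * |f (A ω, W ω)|
          ≤ H₀ (A ω, W ω) * M :=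
            mul_le_mul (min_le_left _ _) (hM _) (abs_nonneg _) (hH₀_nonneg _)
        _ = M * H₀ (A ω, W ω) := mul_comm _ _
    · exact Eventually.of_forall fun ω => (htend _).mul_const _
  -- RHS limit
  have hR : Tendsto
      (fun n : ℕ => ∫ ω, (∫ a, min (H₀ (a, W ω)) (n:ℝ) * f (a, W ω) * q₀ (a, W ω)) ∂P)
      atTop (nhds (∫ ω, (∫ a, f (a, W ω) * q₀ (a - δ (W ω), W ω)) ∂P)) := by
    apply tendsto_integral_of_dominated_convergence (fun _ω => M)
    · intro n
      have hsm : StronglyMeasurable fun w : 𝒲 =>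
          ∫ a, min (H₀ (a, w)) (n:ℝ) * f (a, w) * q₀ (a, w) := by
        have h : StronglyMeasurable fun p : 𝒲 × ℝ =>
            min (H₀ (p.2, p.1)) (n:ℝ) * f (p.2, p.1) * q₀ (p.2, p.1) := by
          have hswap : Measurable fun p : 𝒲 × ℝ => (p.2, p.1) :=
            measurable_snd.prodMk measurable_fst
          exact ((((hminmeas n).comp hswap).mul (hf_meas.comp hswap)).mul
            (hq₀_meas.comp hswap)).stronglyMeasurable
        exact h.integral_prod_right'
      exact (hsm.comp_measurable hW).aestronglyMeasurable
    · exact integrable_const M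
    · intro n
      filter_upwards [hae] with ω hω
      calc ‖∫ a, min (H₀ (a, W ω)) (n:ℝ) * f (a, W ω) * q₀ (a, W ω)‖
          ≤ ∫ a, ‖min (H₀ (a, W ω)) (n:ℝ) * f (a, W ω) * q₀ (a, W ω)‖ :=
            norm_integral_le_integral_norm _
        _ ≤ ∫ a, M * q₀ (a - δ (W ω), W ω) := by
            apply integral_mono_of_nonneg
            · exact Eventually.of_forall fun a => norm_nonneg _
            · exact (hω.1.comp_sub_right (δ (W ω))).const_mul M
            · refine Eventually.of_forall fun a => ?_
              simp only [Real.norm_eq_abs, abs_mul]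
              rw [abs_of_nonneg (hminnonneg n _), abs_of_nonneg (hq₀_nonneg _)]
              calc min (H₀ (a, W ω)) (n:ℝ) * |f (a, W ω)| * q₀ (a, W ω)
                  ≤ H₀ (a, W ω) * M * q₀ (a, W ω) := by
                    apply mul_le_mul_of_nonneg_right _ (hq₀_nonneg _)
                    exact mul_le_mul (min_le_left _ _) (hM _) (abs_nonneg _)
                      (hH₀_nonneg _)
                _ = M * (H₀ (a, W ω) * q₀ (a, W ω)) := by ring
                _ = M * q₀ (a - δ (W ω), W ω) := by rw [hH₀q]
        _ = M * ∫ a, q₀ (a - δ (W ω), W ω) := integral_const_mul M _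
        _ = M * ∫ a, q₀ (a, W ω) := by
            rw [integral_sub_right_eq_self (fun a => q₀ (a, W ω)) (δ (W ω))]
        _ = M := by rw [hω.2, mul_one]
    · filter_upwards [hae] with ω hω
      apply tendsto_integral_of_dominated_convergence
        (fun a => M * q₀ (a - δ (W ω), W ω))
      · intro n
        have hm : Measurable fun a : ℝ =>
            min (H₀ (a, W ω)) (n:ℝ) * f (a, W ω) * q₀ (a, W ω) := by
          have hc : Measurable fun a : ℝ => (a, W ω) :=
            measurable_id.prodMk measurable_const
          exact (((hminmeas n).comp hc).mul (hf_meas.comp hc)).mul (hq₀_meas.comp hc)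
        exact hm.aestronglyMeasurable
      · exact (hω.1.comp_sub_right (δ (W ω))).const_mul M
      · intro n
        refine Eventually.of_forall fun a => ?_
        simp only [Real.norm_eq_abs, abs_mul]
        rw [abs_of_nonneg (hminnonneg n _), abs_of_nonneg (hq₀_nonneg _)]
        calc min (H₀ (a, W ω)) (n:ℝ) * |f (a, W ω)| * q₀ (a, W ω)
            ≤ H₀ (a, W ω) * M * q₀ (a, W ω) := by
              apply mul_le_mul_of_nonneg_right _ (hq₀_nonneg _)
              exact mul_le_mul (min_le_left _ _) (hM _) (abs_nonneg _) (hH₀_nonneg _)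
          _ = M * (H₀ (a, W ω) * q₀ (a, W ω)) := by ring
          _ = M * q₀ (a - δ (W ω), W ω) := by rw [hH₀q]
      · refine Eventually.of_forall fun a => ?_
        have h1 : Tendsto (fun n : ℕ => min (H₀ (a, W ω)) (n:ℝ) * f (a, W ω) * q₀ (a, W ω))
            atTop (nhds (H₀ (a, W ω) * f (a, W ω) * q₀ (a, W ω))) :=
          ((htend _).mul_const _).mul_const _
        have h2 : H₀ (a, W ω) * f (a, W ω) * q₀ (a, W ω)
            = f (a, W ω) * q₀ (a - δ (W ω), W ω) := by
          rw [← hH₀q a (W ω)]; ring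
        rwa [h2] at h1
  -- identify the RHS limit with the shifted integral
  have htrans : ∀ w : 𝒲, (∫ a, f (a, w) * q₀ (a - δ w, w))
      = ∫ a, f (a + δ w, w) * q₀ (a, w) := by
    intro w
    have h := integral_add_right_eq_self (μ := volume) (fun a => f (a, w) * q₀ (a - δ w, w)) (δ w)
    simp only [add_sub_cancel_right] at h
    exact h.symm
  have hshift_eq : ∫ ω, (∫ a, f (a, W ω) * q₀ (a - δ (W ω), W ω)) ∂P
      = ∫ ω, f (A ω + δ (W ω), W ω) ∂P := by
    have hd := hq₀_density (fun x => f (x.1 + δ x.2, x.2))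
      (hf_meas.comp ((measurable_fst.add (hδ.comp measurable_snd)).prodMk measurable_snd))
      ⟨M, fun x => hM _⟩
    rw [hd]
    exact integral_congr_ae (Eventually.of_forall fun ω => htrans (W ω))
  have hL' : Tendsto (fun n : ℕ => ∫ ω, min (H₀ (A ω, W ω)) (n:ℝ) * f (A ω, W ω) ∂P)
      atTop (nhds (∫ ω, (∫ a, f (a, W ω) * q₀ (a - δ (W ω), W ω)) ∂P)) := by
    simp only [hEn]; exact hR
  rw [← hshift_eq]
  exact tendsto_nhds_unique hL hL'

private lemma aux_pullout {Ω 𝒲 : Type*} [mΩ : MeasurableSpace Ω] [MeasurableSpace 𝒲]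
    (P : Measure Ω) [IsProbabilityMeasure P]
    (W : Ω → 𝒲) (hW : Measurable W) (A : Ω → ℝ) (hA : Measurable A)
    (Y : Ω → ℝ) (hY_int : Integrable Y P)
    (Qbar₀ : ℝ × 𝒲 → ℝ)
    (hQbar₀_condexp :
      P[Y | MeasurableSpace.comap (fun ω => (A ω, W ω)) inferInstance]
        =ᵐ[P] fun ω => Qbar₀ (A ω, W ω))
    (H' : ℝ × 𝒲 → ℝ) (hH'_meas : Measurable H')
    (hH'Y_int : Integrable (fun ω => H' (A ω, W ω) * Y ω) P) :
    ∫ ω, H' (A ω, W ω) * Y ω ∂P = ∫ ω, H' (A ω, W ω) * Qbar₀ (A ω, W ω) ∂P := by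
  set m := MeasurableSpace.comap (fun ω => (A ω, W ω)) inferInstance with hm_def
  have hm : m ≤ mΩ := (hA.prodMk hW).comap_le
  have hgm : @Measurable Ω (ℝ × 𝒲) m _ (fun ω => (A ω, W ω)) :=
    fun s hs => ⟨s, hs, rfl⟩
  have hfm : @StronglyMeasurable Ω ℝ _ m (fun ω => H' (A ω, W ω)) := by
    exact @Measurable.stronglyMeasurable Ω ℝ _ m _ _ _ _ _ (hH'_meas.comp hgm)
  have hfg : Integrable ((fun ω => H' (A ω, W ω)) * Y) P := by
    have h : ((fun ω => H' (A ω, W ω)) * Y) = fun ω => H' (A ω, W ω) * Y ω := rfl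
    rw [h]; exact hH'Y_int
  have hkey := condExp_mul_of_stronglyMeasurable_left (m := m) (μ := P) hfm hfg hY_int
  have h1 : ∫ ω, H' (A ω, W ω) * Y ω ∂P
      = ∫ ω, (P[(fun ω => H' (A ω, W ω)) * Y | m]) ω ∂P :=
    (integral_condExp (μ := P) (f := (fun ω => H' (A ω, W ω)) * Y) hm).symm
  rw [h1]
  apply integral_congr_ae
  filter_upwards [hkey, hQbar₀_condexp] with ω h₁ h₂
  rw [h₁]
  simp only [Pi.mul_apply]
  rw [h₂]

/-- Exact second-order remainder of the full-data efficient influence function: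
the bias of the uncentered influence-function functional is a product of the errors
in the density ratio and in the outcome regression. -/
theorem full_data_eif_second_order_remainder
    {Ω 𝒲 : Type*} [MeasurableSpace Ω] [MeasurableSpace 𝒲]
    (P : Measure Ω) [IsProbabilityMeasure P]
    (W : Ω → 𝒲) (hW : Measurable W)
    (A : Ω → ℝ) (hA : Measurable A)
    (Y : Ω → ℝ) (hY : Measurable Y) (hY_int : Integrable Y P)
    (q₀ : ℝ × 𝒲 → ℝ) (hq₀_meas : Measurable q₀)
    (hq₀_nonneg : ∀ x, 0 ≤ q₀ x)
    (hq₀_density : ∀ f : ℝ × 𝒲 → ℝ, Measurable f → (∃ M : ℝ, ∀ x, |f x| ≤ M) →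
      ∫ ω, f (A ω, W ω) ∂P = ∫ ω, (∫ a : ℝ, f (a, W ω) * q₀ (a, W ω)) ∂P)
    (Qbar₀ : ℝ × 𝒲 → ℝ) (hQbar₀_meas : Measurable Qbar₀)
    (hQbar₀_bd : ∃ M : ℝ, ∀ x, |Qbar₀ x| ≤ M)
    (hQbar₀_condexp :
      P[Y | MeasurableSpace.comap (fun ω => (A ω, W ω)) inferInstance]
        =ᵐ[P] fun ω => Qbar₀ (A ω, W ω))
    (δ : 𝒲 → ℝ) (hδ : Measurable δ)
    (ψ₀ : ℝ) (hψ₀ : ψ₀ = ∫ ω, Qbar₀ (A ω + δ (W ω), W ω) ∂P)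
    (hq₀_pos : ∀ x, 0 < q₀ x)
    (H₀ : ℝ × 𝒲 → ℝ)
    (hH₀ : ∀ a w, H₀ (a, w) = q₀ (a - δ w, w) / q₀ (a, w))
    (hH₀Y_int : Integrable (fun ω => H₀ (A ω, W ω) * Y ω) P)
    (Qbar : ℝ × 𝒲 → ℝ) (hQbar_meas : Measurable Qbar)
    (hQbar_bd : ∃ M : ℝ, ∀ x, |Qbar x| ≤ M)
    (H' : ℝ × 𝒲 → ℝ) (hH'_meas : Measurable H')
    (hH'Y_int : Integrable (fun ω => H' (A ω, W ω) * Y ω) P)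
    (hH'_int : Integrable (fun ω => H' (A ω, W ω)) P) :
    (∫ ω, (H' (A ω, W ω) * (Y ω - Qbar (A ω, W ω))
        + Qbar (A ω + δ (W ω), W ω)) ∂P) - ψ₀
      = ∫ ω, (H' (A ω, W ω) - H₀ (A ω, W ω))
          * (Qbar₀ (A ω, W ω) - Qbar (A ω, W ω)) ∂P := by
  obtain ⟨M₀, hM₀⟩ := hQbar₀_bd
  obtain ⟨M₁, hM₁⟩ := hQbar_bd
  have haeW : Measurable fun ω => (A ω, W ω) := hA.prodMk hW
  -- basic facts about H₀
  have hH₀x : ∀ x : ℝ × 𝒲, H₀ x = q₀ (x.1 - δ x.2, x.2) / q₀ x := by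
    rintro ⟨a, w⟩; exact hH₀ a w
  have hH₀_meas : Measurable H₀ := by
    have h : H₀ = fun x => q₀ (x.1 - δ x.2, x.2) / q₀ x := funext hH₀x
    rw [h]
    exact (hq₀_meas.comp ((measurable_fst.sub (hδ.comp measurable_snd)).prodMk
      measurable_snd)).div hq₀_meas
  have hH₀_nonneg : ∀ x, 0 ≤ H₀ x := fun x => by
    rw [hH₀x]; exact div_nonneg (hq₀_nonneg _) (hq₀_pos _).le
  have hH₀q : ∀ a w, H₀ (a, w) * q₀ (a, w) = q₀ (a - δ w, w) := by
    intro a w; rw [hH₀]; exact div_mul_cancel₀ _ (hq₀_pos _).ne'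
  -- a.e. facts about q₀
  have hae := aux_ae P W hW A q₀ hq₀_meas hq₀_nonneg hq₀_density
  have hH₀_int : Integrable (fun ω => H₀ (A ω, W ω)) P :=
    aux_H0int P W hW A hA q₀ hq₀_meas hq₀_nonneg hq₀_pos hq₀_density δ
      H₀ hH₀_meas hH₀_nonneg hH₀q hae
  have hN₀ : ∀ x, |Qbar₀ x| ≤ |M₀| := fun x => (hM₀ x).trans (le_abs_self M₀)
  have hN₁ : ∀ x, |Qbar x| ≤ |M₁| := fun x => (hM₁ x).trans (le_abs_self M₁)
  -- shift identities
  have hshift0 : ∫ ω, H₀ (A ω, W ω) * Qbar₀ (A ω, W ω) ∂P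
      = ∫ ω, Qbar₀ (A ω + δ (W ω), W ω) ∂P :=
    aux_shift P W hW A hA q₀ hq₀_meas hq₀_nonneg hq₀_pos hq₀_density δ hδ
      H₀ hH₀_meas hH₀_nonneg hH₀q hae hH₀_int Qbar₀ hQbar₀_meas |M₀|
      (abs_nonneg _) hN₀
  have hshift1 : ∫ ω, H₀ (A ω, W ω) * Qbar (A ω, W ω) ∂P
      = ∫ ω, Qbar (A ω + δ (W ω), W ω) ∂P :=
    aux_shift P W hW A hA q₀ hq₀_meas hq₀_nonneg hq₀_pos hq₀_density δ hδ
      H₀ hH₀_meas hH₀_nonneg hH₀q hae hH₀_int Qbar hQbar_meas |M₁|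
      (abs_nonneg _) hN₁
  -- conditional expectation pull-out
  have hpull : ∫ ω, H' (A ω, W ω) * Y ω ∂P
      = ∫ ω, H' (A ω, W ω) * Qbar₀ (A ω, W ω) ∂P :=
    aux_pullout P W hW A hA Y hY_int Qbar₀ hQbar₀_condexp H' hH'_meas hH'Y_int
  -- integrability facts
  have ibd : ∀ (g : ℝ × 𝒲 → ℝ), Measurable g → (∀ x, |g x| ≤ |M₀| ∨ |g x| ≤ |M₁|) →
      ∀ (h : Ω → ℝ), Integrable h P → Measurable h →
      Integrable (fun ω => h ω * g (A ω, W ω)) P := by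
    intro g hg hgb h hint hmeas
    refine hint.bdd_mul (c := max |M₀| |M₁|) ?_ ?_ |>.congr (Eventually.of_forall fun ω => mul_comm _ _)
    · exact (hg.comp haeW).aestronglyMeasurable
    · refine Eventually.of_forall fun ω => ?_
      rw [Real.norm_eq_abs]
      rcases hgb (A ω, W ω) with h' | h'
      · exact h'.trans (le_max_left _ _)
      · exact h'.trans (le_max_right _ _)
  have hH'_measΩ : Measurable (fun ω => H' (A ω, W ω)) := hH'_meas.comp haeW
  have hH₀_measΩ : Measurable (fun ω => H₀ (A ω, W ω)) := hH₀_meas.comp haeW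
  have iH'Q₀ : Integrable (fun ω => H' (A ω, W ω) * Qbar₀ (A ω, W ω)) P :=
    ibd Qbar₀ hQbar₀_meas (fun x => Or.inl (hN₀ x)) _ hH'_int hH'_measΩ
  have iH'Q : Integrable (fun ω => H' (A ω, W ω) * Qbar (A ω, W ω)) P :=
    ibd Qbar hQbar_meas (fun x => Or.inr (hN₁ x)) _ hH'_int hH'_measΩ
  have iH₀Q₀ : Integrable (fun ω => H₀ (A ω, W ω) * Qbar₀ (A ω, W ω)) P :=
    ibd Qbar₀ hQbar₀_meas (fun x => Or.inl (hN₀ x)) _ hH₀_int hH₀_measΩ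
  have iH₀Q : Integrable (fun ω => H₀ (A ω, W ω) * Qbar (A ω, W ω)) P :=
    ibd Qbar hQbar_meas (fun x => Or.inr (hN₁ x)) _ hH₀_int hH₀_measΩ
  have iQshift : Integrable (fun ω => Qbar (A ω + δ (W ω), W ω)) P := by
    refine (integrable_const |M₁|).mono' ?_ ?_
    · exact (hQbar_meas.comp ((hA.add (hδ.comp hW)).prodMk hW)).aestronglyMeasurable
    · exact Eventually.of_forall fun ω => by rw [Real.norm_eq_abs]; exact hN₁ _
  have iH'YQ : Integrable (fun ω => H' (A ω, W ω) * (Y ω - Qbar (A ω, W ω))) P := by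
    refine (hH'Y_int.sub iH'Q).congr (Eventually.of_forall fun ω => ?_)
    simp only [Pi.sub_apply]
    ring
  -- compute LHS
  have hLHS : ∫ ω, (H' (A ω, W ω) * (Y ω - Qbar (A ω, W ω))
      + Qbar (A ω + δ (W ω), W ω)) ∂P
      = (∫ ω, H' (A ω, W ω) * Y ω ∂P) - (∫ ω, H' (A ω, W ω) * Qbar (A ω, W ω) ∂P)
        + ∫ ω, Qbar (A ω + δ (W ω), W ω) ∂P := by
    rw [integral_add iH'YQ iQshift]
    congr 1
    rw [← integral_sub hH'Y_int iH'Q]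
    refine integral_congr_ae (Eventually.of_forall fun ω => ?_)
    simp only []
    ring
  -- compute RHS
  have hRHS : ∫ ω, (H' (A ω, W ω) - H₀ (A ω, W ω))
      * (Qbar₀ (A ω, W ω) - Qbar (A ω, W ω)) ∂P
      = (∫ ω, H' (A ω, W ω) * Qbar₀ (A ω, W ω) ∂P)
        - (∫ ω, H' (A ω, W ω) * Qbar (A ω, W ω) ∂P)
        - ((∫ ω, H₀ (A ω, W ω) * Qbar₀ (A ω, W ω) ∂P)
          - ∫ ω, H₀ (A ω, W ω) * Qbar (A ω, W ω) ∂P) := by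
    have hsplit : ∫ ω, (H' (A ω, W ω) - H₀ (A ω, W ω))
        * (Qbar₀ (A ω, W ω) - Qbar (A ω, W ω)) ∂P
        = ∫ ω, ((H' (A ω, W ω) * Qbar₀ (A ω, W ω) - H' (A ω, W ω) * Qbar (A ω, W ω))
            - (H₀ (A ω, W ω) * Qbar₀ (A ω, W ω) - H₀ (A ω, W ω) * Qbar (A ω, W ω))) ∂P :=
      integral_congr_ae (Eventually.of_forall fun ω => by simp only []; ring)
    have i1 : Integrable (fun ω => H' (A ω, W ω) * Qbar₀ (A ω, W ω)
        - H' (A ω, W ω) * Qbar (A ω, W ω)) P := iH'Q₀.sub iH'Q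
    have i2 : Integrable (fun ω => H₀ (A ω, W ω) * Qbar₀ (A ω, W ω)
        - H₀ (A ω, W ω) * Qbar (A ω, W ω)) P := iH₀Q₀.sub iH₀Q
    rw [hsplit, integral_sub i1 i2, integral_sub iH'Q₀ iH'Q, integral_sub iH₀Q₀ iH₀Q]
  rw [hLHS, hRHS, hψ₀, ← hshift0, ← hshift1, hpull]
  ring
end

section
/- Reweighting identity for the modified treatment policy with boundary truncation: define d(a, w) = a + δ(w) if a + δ(w) ≤ u(w) and d(a, w) = a otherwise, and define the auxiliary covariate H(a, w) = 1{a < u(w)}·q₀(a − δ(w), w)/q₀(a, w) + 1{a + δ(w) ≥ u(w)}. Then for every bounded measurable f : ℝ × 𝒲 → ℝ, E[H(A, W) f(A, W)] = E[f(d(A, W), W)]. -/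
open MeasureTheory

/-- Auxiliary: the density identity extended to all nonnegative measurable functions,
in `lintegral` form. -/
lemma density_lintegral
    {Ω 𝒲 : Type*} [MeasurableSpace Ω] [MeasurableSpace 𝒲]
    (P : Measure Ω) [IsProbabilityMeasure P]
    (W : Ω → 𝒲) (hW : Measurable W)
    (A : Ω → ℝ) (hA : Measurable A)
    (q₀ : ℝ × 𝒲 → ℝ) (hq₀_meas : Measurable q₀)
    (hq₀_nonneg : ∀ x, 0 ≤ q₀ x)
    (hq₀_density : ∀ f : ℝ × 𝒲 → ℝ, Measurable f → (∃ M : ℝ, ∀ x, |f x| ≤ M) →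
      ∫ ω, f (A ω, W ω) ∂P = ∫ ω, (∫ a : ℝ, f (a, W ω) * q₀ (a, W ω)) ∂P)
    (g : ℝ × 𝒲 → ℝ) (hg : Measurable g) (hg0 : ∀ x, 0 ≤ g x) :
    ∫⁻ ω, ENNReal.ofReal (g (A ω, W ω)) ∂P
      = ∫⁻ ω, (∫⁻ a : ℝ, ENNReal.ofReal (g (a, W ω)) * ENNReal.ofReal (q₀ (a, W ω))) ∂P := by
  classical
  -- measurability of the fiberwise lintegral of q₀
  have hm1 : Measurable fun w => ∫⁻ a, ENNReal.ofReal (q₀ (a, w)) := by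
    exact Measurable.lintegral_prod_left
      (f := fun a w => ENNReal.ofReal (q₀ (a, w)))
      (ENNReal.measurable_ofReal.comp hq₀_meas)
  set B : Set 𝒲 := {w | (∫⁻ a, ENNReal.ofReal (q₀ (a, w))) = ⊤} with hBdef
  have hB : MeasurableSet B := hm1 (measurableSet_singleton ⊤)
  have hint_of : ∀ w, w ∉ B → Integrable (fun a => q₀ (a, w)) := by
    intro w hw
    refine ⟨(hq₀_meas.comp measurable_prodMk_right).aestronglyMeasurable, ?_⟩
    rw [hasFiniteIntegral_iff_ofReal (Filter.Eventually.of_forall fun a => hq₀_nonneg _)]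
    exact lt_top_iff_ne_top.2 hw
  have hnint : ∀ w, w ∈ B → ¬ Integrable (fun a => q₀ (a, w)) := by
    intro w hw hint
    have := (hasFiniteIntegral_iff_ofReal
      (Filter.Eventually.of_forall fun a => hq₀_nonneg _)).1 hint.2
    exact this.ne hw
  -- the set of bad fibers is null
  have hWB : ∀ᵐ ω ∂P, W ω ∉ B := by
    have hfB : Measurable fun x : ℝ × 𝒲 => if x.2 ∈ B then (1 : ℝ) else 0 :=
      Measurable.ite (measurable_snd hB) measurable_const measurable_const
    have heq := hq₀_density _ hfB ⟨1, fun x => by split_ifs <;> simp⟩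
    have hR : ∫ ω, (∫ a, (if W ω ∈ B then (1 : ℝ) else 0) * q₀ (a, W ω)) ∂P = 0 := by
      have : ∀ ω, (∫ a, (if W ω ∈ B then (1 : ℝ) else 0) * q₀ (a, W ω)) = 0 := by
        intro ω
        by_cases h : W ω ∈ B
        · simp only [if_pos h, one_mul]
          exact integral_undef (hnint _ h)
        · simp [if_neg h]
      simp only [this, integral_zero]
    have hL : ∫ ω, (if W ω ∈ B then (1 : ℝ) else 0) ∂P = (P (W ⁻¹' B)).toReal := by
      have : (fun ω => if W ω ∈ B then (1 : ℝ) else 0)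
          = (W ⁻¹' B).indicator fun _ => (1 : ℝ) := by
        ext ω; by_cases h : W ω ∈ B <;> simp [Set.indicator_apply, h]
      rw [this, integral_indicator_const _ (hW hB)]; simp; rfl
    have h0 : (P (W ⁻¹' B)).toReal = 0 := by rw [← hL, heq, hR]
    have hP0 : P (W ⁻¹' B) = 0 :=
      (ENNReal.toReal_eq_zero_iff _).1 h0 |>.resolve_right (measure_ne_top P _)
    rw [ae_iff]
    convert hP0 using 2
    ext ω; simp
  -- integrability of ω ↦ ∫ q₀(a, W ω)
  have h1 : (1 : ℝ) = ∫ ω, (∫ a, q₀ (a, W ω)) ∂P := by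
    have := hq₀_density (fun _ => 1) measurable_const ⟨1, fun x => by simp⟩
    simpa using this
  have hc₁_sm : StronglyMeasurable fun w => ∫ a, q₀ (a, w) := by
    exact StronglyMeasurable.integral_prod_left
      (f := fun a w => q₀ (a, w)) hq₀_meas.stronglyMeasurable
  have hc₁_int : Integrable (fun ω => ∫ a, q₀ (a, W ω)) P := by
    by_contra h
    rw [integral_undef h] at h1
    exact one_ne_zero h1
  -- bounded case
  have bdd : ∀ g : ℝ × 𝒲 → ℝ, Measurable g → (∀ x, 0 ≤ g x) → ∀ M : ℝ, (∀ x, g x ≤ M) →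
      ∫⁻ ω, ENNReal.ofReal (g (A ω, W ω)) ∂P
        = ∫⁻ ω, (∫⁻ a : ℝ, ENNReal.ofReal (g (a, W ω)) * ENNReal.ofReal (q₀ (a, W ω))) ∂P := by
    intro g hg hg0 M hgM
    have hgAW_meas : Measurable fun ω => g (A ω, W ω) := hg.comp (hA.prodMk hW)
    have hgAW_int : Integrable (fun ω => g (A ω, W ω)) P := by
      refine Integrable.mono' (integrable_const M) hgAW_meas.aestronglyMeasurable
        (Filter.Eventually.of_forall fun ω => ?_)
      rw [Real.norm_eq_abs, abs_of_nonneg (hg0 _)]; exact hgM _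
    have hsec_meas : ∀ w : 𝒲, Measurable fun a => g (a, w) * q₀ (a, w) :=
      fun w => (hg.comp measurable_prodMk_right).mul (hq₀_meas.comp measurable_prodMk_right)
    have hsec_int : ∀ w : 𝒲, w ∉ B → Integrable (fun a => g (a, w) * q₀ (a, w)) := by
      intro w hw
      refine Integrable.mono' ((hint_of _ hw).const_mul M)
        (hsec_meas w).aestronglyMeasurable (Filter.Eventually.of_forall fun a => ?_)
      rw [Real.norm_eq_abs, abs_of_nonneg (mul_nonneg (hg0 _) (hq₀_nonneg _))]
      exact mul_le_mul_of_nonneg_right (hgM _) (hq₀_nonneg _)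
    have hcg_sm : StronglyMeasurable fun w => ∫ a, g (a, w) * q₀ (a, w) := by
      exact StronglyMeasurable.integral_prod_left
        (f := fun a w => g (a, w) * q₀ (a, w)) (hg.mul hq₀_meas).stronglyMeasurable
    have hcg_nonneg : ∀ ω, 0 ≤ ∫ a, g (a, W ω) * q₀ (a, W ω) :=
      fun ω => integral_nonneg fun a => mul_nonneg (hg0 _) (hq₀_nonneg _)
    have hcg_int : Integrable (fun ω => ∫ a, g (a, W ω) * q₀ (a, W ω)) P := by
      refine Integrable.mono' (hc₁_int.const_mul M)
        ((hcg_sm.comp_measurable hW).aestronglyMeasurable) ?_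
      filter_upwards [hWB] with ω hω
      rw [Real.norm_eq_abs, abs_of_nonneg (hcg_nonneg ω)]
      calc ∫ a, g (a, W ω) * q₀ (a, W ω)
          ≤ ∫ a, M * q₀ (a, W ω) :=
            integral_mono (hsec_int _ hω) ((hint_of _ hω).const_mul M)
              (fun a => mul_le_mul_of_nonneg_right (hgM _) (hq₀_nonneg _))
        _ = M * ∫ a, q₀ (a, W ω) := integral_const_mul M _
    calc ∫⁻ ω, ENNReal.ofReal (g (A ω, W ω)) ∂P
        = ENNReal.ofReal (∫ ω, g (A ω, W ω) ∂P) :=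
          (ofReal_integral_eq_lintegral_ofReal hgAW_int
            (Filter.Eventually.of_forall fun ω => hg0 _)).symm
      _ = ENNReal.ofReal (∫ ω, (∫ a, g (a, W ω) * q₀ (a, W ω)) ∂P) := by
          rw [hq₀_density g hg ⟨M, fun x => by rw [abs_of_nonneg (hg0 x)]; exact hgM x⟩]
      _ = ∫⁻ ω, ENNReal.ofReal (∫ a, g (a, W ω) * q₀ (a, W ω)) ∂P :=
          ofReal_integral_eq_lintegral_ofReal hcg_int
            (Filter.Eventually.of_forall fun ω => hcg_nonneg ω)
      _ = ∫⁻ ω, (∫⁻ a : ℝ, ENNReal.ofReal (g (a, W ω) * q₀ (a, W ω))) ∂P := by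
          refine lintegral_congr_ae ?_
          filter_upwards [hWB] with ω hω
          exact ofReal_integral_eq_lintegral_ofReal (hsec_int _ hω)
            (Filter.Eventually.of_forall fun a => mul_nonneg (hg0 _) (hq₀_nonneg _))
      _ = ∫⁻ ω, (∫⁻ a : ℝ, ENNReal.ofReal (g (a, W ω)) * ENNReal.ofReal (q₀ (a, W ω))) ∂P := by
          refine lintegral_congr fun ω => lintegral_congr fun a => ?_
          exact ENNReal.ofReal_mul (hg0 _)
  -- extension to unbounded g by monotone convergence
  have hsup : ∀ c : ℝ, 0 ≤ c → ⨆ n : ℕ, ENNReal.ofReal (min c n) = ENNReal.ofReal c := by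
    intro c hc
    apply le_antisymm
    · exact iSup_le fun n => ENNReal.ofReal_le_ofReal (min_le_left _ _)
    · exact le_iSup_of_le ⌈c⌉₊ (by rw [min_eq_left (Nat.le_ceil c)])
  have hkey_n : ∀ n : ℕ,
      ∫⁻ ω, ENNReal.ofReal (min (g (A ω, W ω)) n) ∂P
        = ∫⁻ ω, (∫⁻ a : ℝ, ENNReal.ofReal (min (g (a, W ω)) n)
            * ENNReal.ofReal (q₀ (a, W ω))) ∂P :=
    fun n => bdd _ (hg.min measurable_const)
      (fun x => le_min (hg0 x) (Nat.cast_nonneg n)) n (fun x => min_le_right _ _)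
  have hmin_meas : ∀ n : ℕ, Measurable fun x : ℝ × 𝒲 => min (g x) (n : ℝ) :=
    fun n => hg.min measurable_const
  have hmono_min : ∀ x : ℝ × 𝒲, Monotone fun n : ℕ => ENNReal.ofReal (min (g x) n) := by
    intro x m n hmn
    exact ENNReal.ofReal_le_ofReal (min_le_min le_rfl (Nat.cast_le.2 hmn))
  calc ∫⁻ ω, ENNReal.ofReal (g (A ω, W ω)) ∂P
      = ∫⁻ ω, ⨆ n : ℕ, ENNReal.ofReal (min (g (A ω, W ω)) n) ∂P :=
        lintegral_congr fun ω => (hsup _ (hg0 _)).symm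
    _ = ⨆ n : ℕ, ∫⁻ ω, ENNReal.ofReal (min (g (A ω, W ω)) n) ∂P :=
        lintegral_iSup
          (fun n => ENNReal.measurable_ofReal.comp
            (((hmin_meas n).comp (hA.prodMk hW))))
          (fun m n hmn ω => hmono_min _ hmn)
    _ = ⨆ n : ℕ, ∫⁻ ω, (∫⁻ a : ℝ, ENNReal.ofReal (min (g (a, W ω)) n)
          * ENNReal.ofReal (q₀ (a, W ω))) ∂P := by
        exact iSup_congr hkey_n
    _ = ∫⁻ ω, (⨆ n : ℕ, ∫⁻ a : ℝ, ENNReal.ofReal (min (g (a, W ω)) n)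
          * ENNReal.ofReal (q₀ (a, W ω))) ∂P := by
        refine (lintegral_iSup (fun n => ?_) (fun m n hmn ω => ?_)).symm
        · exact (Measurable.lintegral_prod_left
            (f := fun a w => ENNReal.ofReal (min (g (a, w)) n)
              * ENNReal.ofReal (q₀ (a, w)))
            ((ENNReal.measurable_ofReal.comp (hmin_meas n)).mul
              (ENNReal.measurable_ofReal.comp hq₀_meas))).comp hW
        · exact lintegral_mono fun a => mul_le_mul' (hmono_min _ hmn) le_rfl
    _ = ∫⁻ ω, (∫⁻ a : ℝ, ENNReal.ofReal (g (a, W ω)) * ENNReal.ofReal (q₀ (a, W ω))) ∂P := by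
        refine lintegral_congr fun ω => ?_
        have hmeasn : ∀ n : ℕ, Measurable fun a : ℝ =>
            ENNReal.ofReal (min (g (a, W ω)) n) * ENNReal.ofReal (q₀ (a, W ω)) :=
          fun n => (ENNReal.measurable_ofReal.comp
            ((hmin_meas n).comp measurable_prodMk_right)).mul
            (ENNReal.measurable_ofReal.comp (hq₀_meas.comp measurable_prodMk_right))
        calc (⨆ n : ℕ, ∫⁻ a : ℝ, ENNReal.ofReal (min (g (a, W ω)) n)
              * ENNReal.ofReal (q₀ (a, W ω)))
            = ∫⁻ a : ℝ, ⨆ n : ℕ, ENNReal.ofReal (min (g (a, W ω)) n)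
              * ENNReal.ofReal (q₀ (a, W ω)) :=
              (lintegral_iSup hmeasn (fun m n hmn a => mul_le_mul' (hmono_min _ hmn) le_rfl)).symm
          _ = ∫⁻ a : ℝ, ENNReal.ofReal (g (a, W ω)) * ENNReal.ofReal (q₀ (a, W ω)) := by
              refine lintegral_congr fun a => ?_
              rw [← ENNReal.iSup_mul, hsup _ (hg0 _)]

/-- Reweighting identity for the modified treatment policy with boundary truncation:
with `d(a,w) = a + δ(w)` if `a + δ(w) ≤ u(w)` and `d(a,w) = a` otherwise, and the
auxiliary covariate
`H(a,w) = 1{a < u(w)} q₀(a − δ(w), w)/q₀(a, w) + 1{a + δ(w) ≥ u(w)}`, we have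
`E[H(A,W) f(A,W)] = E[f(d(A,W), W)]` for every bounded measurable `f`. -/
theorem mtp_reweighting_identity
    {Ω 𝒲 : Type*} [MeasurableSpace Ω] [MeasurableSpace 𝒲]
    (P : Measure Ω) [IsProbabilityMeasure P]
    (W : Ω → 𝒲) (hW : Measurable W)
    (A : Ω → ℝ) (hA : Measurable A)
    (q₀ : ℝ × 𝒲 → ℝ) (hq₀_meas : Measurable q₀)
    (hq₀_nonneg : ∀ x, 0 ≤ q₀ x)
    (hq₀_density : ∀ f : ℝ × 𝒲 → ℝ, Measurable f → (∃ M : ℝ, ∀ x, |f x| ≤ M) →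
      ∫ ω, f (A ω, W ω) ∂P = ∫ ω, (∫ a : ℝ, f (a, W ω) * q₀ (a, W ω)) ∂P)
    (u : 𝒲 → ℝ) (hu : Measurable u)
    (hq₀_zero : ∀ a w, u w < a → q₀ (a, w) = 0)
    (hq₀_pos : ∀ a w, a ≤ u w → 0 < q₀ (a, w))
    (δ : 𝒲 → ℝ) (hδ : Measurable δ) (hδ_pos : ∀ w, 0 < δ w)
    (d : ℝ × 𝒲 → ℝ)
    (hd : ∀ a w, d (a, w) = if a + δ w ≤ u w then a + δ w else a)
    (H : ℝ × 𝒲 → ℝ)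
    (hH : ∀ a w, H (a, w) =
      (if a < u w then q₀ (a - δ w, w) / q₀ (a, w) else 0)
        + (if u w ≤ a + δ w then 1 else 0))
    (f : ℝ × 𝒲 → ℝ) (hf_meas : Measurable f) (hf_bd : ∃ M : ℝ, ∀ x, |f x| ≤ M) :
    ∫ ω, H (A ω, W ω) * f (A ω, W ω) ∂P
      = ∫ ω, f (d (A ω, W ω), W ω) ∂P := by
  obtain ⟨M, hM⟩ := hf_bd
  set N : ℝ := max M 0 with hNdef
  have hN : ∀ x, |f x| ≤ N := fun x => le_trans (hM x) (le_max_left _ _)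
  have hN0 : (0 : ℝ) ≤ N := le_max_right _ _
  -- measurability of d and H
  have hd' : d = fun x : ℝ × 𝒲 => if x.1 + δ x.2 ≤ u x.2 then x.1 + δ x.2 else x.1 :=
    funext fun x => hd x.1 x.2
  have hd_meas : Measurable d := by
    rw [hd']
    exact Measurable.ite
      (measurableSet_le (measurable_fst.add (hδ.comp measurable_snd)) (hu.comp measurable_snd))
      (measurable_fst.add (hδ.comp measurable_snd)) measurable_fst
  have hH' : H = fun x : ℝ × 𝒲 =>
      (if x.1 < u x.2 then q₀ (x.1 - δ x.2, x.2) / q₀ x else 0)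
        + (if u x.2 ≤ x.1 + δ x.2 then 1 else 0) :=
    funext fun x => hH x.1 x.2
  have hH_meas : Measurable H := by
    rw [hH']
    refine Measurable.add ?_ ?_
    · exact Measurable.ite (measurableSet_lt measurable_fst (hu.comp measurable_snd))
        ((hq₀_meas.comp ((measurable_fst.sub (hδ.comp measurable_snd)).prodMk
          measurable_snd)).div hq₀_meas) measurable_const
    · exact Measurable.ite
        (measurableSet_le (hu.comp measurable_snd) (measurable_fst.add (hδ.comp measurable_snd)))
        measurable_const measurable_const
  have hH0 : ∀ x : ℝ × 𝒲, 0 ≤ H x := by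
    intro x
    show 0 ≤ H (x.1, x.2)
    rw [hH x.1 x.2]
    refine add_nonneg ?_ ?_
    · split_ifs with h
      · exact div_nonneg (hq₀_nonneg _) (hq₀_nonneg _)
      · exact le_rfl
    · split_ifs <;> [exact zero_le_one; exact le_rfl]
  -- main identity for nonnegative bounded g
  have main : ∀ g : ℝ × 𝒲 → ℝ, Measurable g → (∀ x, 0 ≤ g x) → (∀ x, g x ≤ N) →
      ∫⁻ ω, ENNReal.ofReal (H (A ω, W ω) * g (A ω, W ω)) ∂P
        = ∫⁻ ω, ENNReal.ofReal (g (d (A ω, W ω), W ω)) ∂P := by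
    intro g hg hg0 hgN
    have h1 := density_lintegral P W hW A hA q₀ hq₀_meas hq₀_nonneg hq₀_density
      (fun x => H x * g x) (hH_meas.mul hg) (fun x => mul_nonneg (hH0 x) (hg0 x))
    have h2 := density_lintegral P W hW A hA q₀ hq₀_meas hq₀_nonneg hq₀_density
      (fun x => g (d x, x.2)) (hg.comp (hd_meas.prodMk measurable_snd)) (fun x => hg0 _)
    rw [h1, h2]
    refine lintegral_congr fun ω => ?_
    set w := W ω with hw
    -- pointwise decomposition
    have step1 : ∀ a : ℝ,
        ENNReal.ofReal (H (a, w) * g (a, w)) * ENNReal.ofReal (q₀ (a, w))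
          = ENNReal.ofReal ((if a < u w then q₀ (a - δ w, w) else 0) * g (a, w))
            + ENNReal.ofReal ((if u w ≤ a + δ w then (1:ℝ) else 0) * (g (a, w) * q₀ (a, w))) := by
      intro a
      rw [← ENNReal.ofReal_mul (mul_nonneg (hH0 (a, w)) (hg0 _)),
        ← ENNReal.ofReal_add
          (mul_nonneg (by split_ifs; exacts [hq₀_nonneg _, le_rfl]) (hg0 _))
          (mul_nonneg (by split_ifs; exacts [zero_le_one, le_rfl])
            (mul_nonneg (hg0 _) (hq₀_nonneg _)))]
      congr 1
      rw [hH a w]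
      have hcan : ∀ _ : q₀ (a, w) ≠ 0,
          q₀ (a - δ w, w) / q₀ (a, w) * q₀ (a, w) = q₀ (a - δ w, w) :=
        fun hpos => div_mul_cancel₀ _ hpos
      split_ifs with h h2 <;>
        first
          | ring1
          | linear_combination g (a, w) * hcan (hq₀_pos a w (le_of_lt h)).ne'
    have hP₁_meas : Measurable fun a : ℝ =>
        ENNReal.ofReal ((if a < u w then q₀ (a - δ w, w) else 0) * g (a, w)) := by
      refine ENNReal.measurable_ofReal.comp (Measurable.mul ?_ (hg.comp measurable_prodMk_right))
      exact Measurable.ite (measurableSet_lt measurable_id measurable_const)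
        (hq₀_meas.comp ((measurable_id.sub measurable_const).prodMk measurable_const))
        measurable_const
    have hP₁'_meas : Measurable fun a : ℝ =>
        ENNReal.ofReal ((if a + δ w < u w then q₀ (a, w) else 0) * g (a + δ w, w)) := by
      refine ENNReal.measurable_ofReal.comp (Measurable.mul ?_
        (hg.comp ((measurable_id.add_const (δ w)).prodMk measurable_const)))
      exact Measurable.ite
        (measurableSet_lt (measurable_id.add_const (δ w)) measurable_const)
        (hq₀_meas.comp measurable_prodMk_right) measurable_const
    calc ∫⁻ a, ENNReal.ofReal (H (a, w) * g (a, w)) * ENNReal.ofReal (q₀ (a, w))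
        = ∫⁻ a, (ENNReal.ofReal ((if a < u w then q₀ (a - δ w, w) else 0) * g (a, w))
            + ENNReal.ofReal ((if u w ≤ a + δ w then (1:ℝ) else 0) * (g (a, w) * q₀ (a, w)))) :=
          lintegral_congr step1
      _ = (∫⁻ a, ENNReal.ofReal ((if a < u w then q₀ (a - δ w, w) else 0) * g (a, w)))
            + ∫⁻ a, ENNReal.ofReal ((if u w ≤ a + δ w then (1:ℝ) else 0) * (g (a, w) * q₀ (a, w))) :=
          lintegral_add_left hP₁_meas _
      _ = (∫⁻ a, ENNReal.ofReal ((if a + δ w < u w then q₀ (a, w) else 0) * g (a + δ w, w)))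
            + ∫⁻ a, ENNReal.ofReal ((if u w ≤ a + δ w then (1:ℝ) else 0) * (g (a, w) * q₀ (a, w))) := by
          congr 1
          rw [← lintegral_add_right_eq_self
            (fun a => ENNReal.ofReal ((if a < u w then q₀ (a - δ w, w) else 0) * g (a, w))) (δ w)]
          refine lintegral_congr fun a => ?_
          simp [add_sub_cancel_right]
      _ = ∫⁻ a, (ENNReal.ofReal ((if a + δ w < u w then q₀ (a, w) else 0) * g (a + δ w, w))
            + ENNReal.ofReal ((if u w ≤ a + δ w then (1:ℝ) else 0) * (g (a, w) * q₀ (a, w)))) :=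
          (lintegral_add_left hP₁'_meas _).symm
      _ = ∫⁻ a, ENNReal.ofReal (g (d (a, w), w)) * ENNReal.ofReal (q₀ (a, w)) := by
          have hae : ∀ᵐ a : ℝ, a ≠ u w - δ w := by
            rw [ae_iff]
            have hs : {a : ℝ | ¬ a ≠ u w - δ w} = {u w - δ w} := by ext a; simp
            rw [hs]
            exact measure_singleton _
          refine lintegral_congr_ae ?_
          filter_upwards [hae] with a ha
          by_cases h : a + δ w ≤ u w
          · have hlt : a + δ w < u w :=
              lt_of_le_of_ne h (fun he => ha (by linarith))
            rw [hd a w, if_pos h, if_pos hlt, if_neg (not_le.2 hlt)]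
            simp only [zero_mul, ENNReal.ofReal_zero, add_zero]
            rw [mul_comm (q₀ (a, w)), ENNReal.ofReal_mul (hg0 _)]
          · have hle : u w ≤ a + δ w := le_of_not_ge h
            rw [hd a w, if_neg h, if_neg (fun hc : a + δ w < u w => h hc.le), if_pos hle]
            simp only [zero_mul, ENNReal.ofReal_zero, zero_add, one_mul]
            rw [ENNReal.ofReal_mul (hg0 _)]
  -- finiteness bound
  have fin : ∀ g : ℝ × 𝒲 → ℝ, (∀ x, g x ≤ N) →
      ∫⁻ ω, ENNReal.ofReal (g (d (A ω, W ω), W ω)) ∂P ≤ ENNReal.ofReal N := by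
    intro g hgN
    calc ∫⁻ ω, ENNReal.ofReal (g (d (A ω, W ω), W ω)) ∂P
        ≤ ∫⁻ _, ENNReal.ofReal N ∂P :=
          lintegral_mono fun ω => ENNReal.ofReal_le_ofReal (hgN _)
      _ = ENNReal.ofReal N := by simp
  -- positive and negative parts of f
  set fp : ℝ × 𝒲 → ℝ := fun x => max (f x) 0 with hfp
  set fm : ℝ × 𝒲 → ℝ := fun x => max (-f x) 0 with hfm
  have hfp_meas : Measurable fp := hf_meas.max measurable_const
  have hfm_meas : Measurable fm := hf_meas.neg.max measurable_const
  have hfp0 : ∀ x, 0 ≤ fp x := fun x => le_max_right _ _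
  have hfm0 : ∀ x, 0 ≤ fm x := fun x => le_max_right _ _
  have hfpN : ∀ x, fp x ≤ N := fun x => max_le (le_trans (le_abs_self _) (hN x)) hN0
  have hfmN : ∀ x, fm x ≤ N := fun x =>
    max_le (le_trans (neg_le_abs _) (hN x)) hN0
  have e₁ := main fp hfp_meas hfp0 hfpN
  have e₂ := main fm hfm_meas hfm0 hfmN
  -- measurability of the relevant compositions
  have hAW : Measurable fun ω => (A ω, W ω) := hA.prodMk hW
  have hdAW : Measurable fun ω => (d (A ω, W ω), W ω) := (hd_meas.comp hAW).prodMk hW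
  have hHp_meas : Measurable fun ω => H (A ω, W ω) * fp (A ω, W ω) :=
    (hH_meas.comp hAW).mul (hfp_meas.comp hAW)
  have hHm_meas : Measurable fun ω => H (A ω, W ω) * fm (A ω, W ω) :=
    (hH_meas.comp hAW).mul (hfm_meas.comp hAW)
  -- integrability of the two positive pieces on the left
  have intp : Integrable (fun ω => H (A ω, W ω) * fp (A ω, W ω)) P := by
    refine ⟨hHp_meas.aestronglyMeasurable, ?_⟩
    rw [hasFiniteIntegral_iff_ofReal
      (Filter.Eventually.of_forall fun ω => mul_nonneg (hH0 _) (hfp0 _))]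
    exact lt_of_le_of_lt (by rw [e₁]; exact fin fp hfpN) ENNReal.ofReal_lt_top
  have intm : Integrable (fun ω => H (A ω, W ω) * fm (A ω, W ω)) P := by
    refine ⟨hHm_meas.aestronglyMeasurable, ?_⟩
    rw [hasFiniteIntegral_iff_ofReal
      (Filter.Eventually.of_forall fun ω => mul_nonneg (hH0 _) (hfm0 _))]
    exact lt_of_le_of_lt (by rw [e₂]; exact fin fm hfmN) ENNReal.ofReal_lt_top
  -- integrability of the two positive pieces on the right
  have intp' : Integrable (fun ω => fp (d (A ω, W ω), W ω)) P := by
    refine Integrable.mono' (integrable_const N)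
      ((hfp_meas.comp hdAW).aestronglyMeasurable)
      (Filter.Eventually.of_forall fun ω => ?_)
    rw [Real.norm_eq_abs, abs_of_nonneg (hfp0 _)]; exact hfpN _
  have intm' : Integrable (fun ω => fm (d (A ω, W ω), W ω)) P := by
    refine Integrable.mono' (integrable_const N)
      ((hfm_meas.comp hdAW).aestronglyMeasurable)
      (Filter.Eventually.of_forall fun ω => ?_)
    rw [Real.norm_eq_abs, abs_of_nonneg (hfm0 _)]; exact hfmN _
  -- assembly
  calc ∫ ω, H (A ω, W ω) * f (A ω, W ω) ∂P
      = ∫ ω, (H (A ω, W ω) * fp (A ω, W ω) - H (A ω, W ω) * fm (A ω, W ω)) ∂P := by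
        refine integral_congr_ae (Filter.Eventually.of_forall fun ω => ?_)
        show H (A ω, W ω) * f (A ω, W ω)
            = H (A ω, W ω) * fp (A ω, W ω) - H (A ω, W ω) * fm (A ω, W ω)
        rw [← mul_sub]
        congr 1
        exact (max_zero_sub_max_neg_zero_eq_self _).symm
    _ = (∫ ω, H (A ω, W ω) * fp (A ω, W ω) ∂P) - ∫ ω, H (A ω, W ω) * fm (A ω, W ω) ∂P :=
        integral_sub intp intm
    _ = (∫⁻ ω, ENNReal.ofReal (H (A ω, W ω) * fp (A ω, W ω)) ∂P).toReal
          - (∫⁻ ω, ENNReal.ofReal (H (A ω, W ω) * fm (A ω, W ω)) ∂P).toReal := by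
        rw [integral_eq_lintegral_of_nonneg_ae
            (Filter.Eventually.of_forall fun ω => mul_nonneg (hH0 _) (hfp0 _))
            hHp_meas.aestronglyMeasurable,
          integral_eq_lintegral_of_nonneg_ae
            (Filter.Eventually.of_forall fun ω => mul_nonneg (hH0 _) (hfm0 _))
            hHm_meas.aestronglyMeasurable]
    _ = (∫⁻ ω, ENNReal.ofReal (fp (d (A ω, W ω), W ω)) ∂P).toReal
          - (∫⁻ ω, ENNReal.ofReal (fm (d (A ω, W ω), W ω)) ∂P).toReal := by
        rw [e₁, e₂]
    _ = (∫ ω, fp (d (A ω, W ω), W ω) ∂P) - ∫ ω, fm (d (A ω, W ω), W ω) ∂P := by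
        rw [integral_eq_lintegral_of_nonneg_ae
            (Filter.Eventually.of_forall fun ω => hfp0 _)
            ((hfp_meas.comp hdAW).aestronglyMeasurable),
          integral_eq_lintegral_of_nonneg_ae
            (Filter.Eventually.of_forall fun ω => hfm0 _)
            ((hfm_meas.comp hdAW).aestronglyMeasurable)]
    _ = ∫ ω, (fp (d (A ω, W ω), W ω) - fm (d (A ω, W ω), W ω)) ∂P :=
        (integral_sub intp' intm').symm
    _ = ∫ ω, f (d (A ω, W ω), W ω) ∂P := by
        refine integral_congr_ae (Filter.Eventually.of_forall fun ω => ?_)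
        show fp (d (A ω, W ω), W ω) - fm (d (A ω, W ω), W ω) = f (d (A ω, W ω), W ω)
        exact max_zero_sub_max_neg_zero_eq_self _
end

section
/- Inverse-probability-of-sampling identity: for every bounded measurable f : 𝒲 × ℝ × ℝ → ℝ, E[(C / g₀(Y, W)) · f(W, A, Y)] = E[f(W, A, Y)]. -/
open MeasureTheory ProbabilityTheory
open scoped ENNReal NNReal

theorem ipsw_aux {Ω 𝒲 : Type*} {m mΩ : MeasurableSpace Ω} [StandardBorelSpace Ω] [Nonempty Ω]
    [MeasurableSpace 𝒲]
    (P : Measure Ω) [IsProbabilityMeasure P]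
    (W : Ω → 𝒲) (hW : Measurable W)
    (A : Ω → ℝ) (hA : Measurable A)
    (Y : Ω → ℝ) (hY : Measurable Y)
    (C : Ω → ℝ) (hC : Measurable C) (hC01 : ∀ ω, C ω = 0 ∨ C ω = 1)
    (g₀ : ℝ × 𝒲 → ℝ) (hg₀_meas : Measurable g₀)
    (ε : ℝ) (hε : 0 < ε) (hg₀_bd : ∀ x, ε ≤ g₀ x ∧ g₀ x ≤ 1)
    (hm_eq : m = MeasurableSpace.comap (fun ω => (Y ω, W ω)) inferInstance)
    (hm : m ≤ mΩ)
    (hg₀_condexp : P[C | m] =ᵐ[P] fun ω => g₀ (Y ω, W ω))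
    (hCAR : CondIndepFun m hm C A P)
    (f : 𝒲 × ℝ × ℝ → ℝ) (hf_meas : Measurable f) :
    ∫ ω, (C ω / g₀ (Y ω, W ω)) * f (W ω, A ω, Y ω) ∂P
      = ∫ ω, f (W ω, A ω, Y ω) ∂P := by
  classical
  set YW : Ω → ℝ × 𝒲 := fun ω => (Y ω, W ω) with hYW_def
  have hYW : Measurable YW := hY.prodMk hW
  set g' : Ω → ℝ := fun ω => g₀ (YW ω) with hg'_def
  have hg'_meas : Measurable g' := hg₀_meas.comp hYW
  have hg'_pos : ∀ ω, 0 < g' ω := fun ω => lt_of_lt_of_le hε (hg₀_bd (YW ω)).1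
  have hg'_le1 : ∀ ω, g' ω ≤ 1 := fun ω => (hg₀_bd (YW ω)).2
  have hYW_m : Measurable[m] YW := by
    rw [hm_eq]; exact Measurable.of_comap_le le_rfl
  have hg'_m : StronglyMeasurable[m] g' := (hg₀_meas.comp hYW_m).stronglyMeasurable
  have hinv_m : StronglyMeasurable[m] (fun ω => 1 / g' ω) :=
    ((measurable_const.div (hg₀_meas.comp hYW_m))).stronglyMeasurable
  have hC01' : ∀ ω, 0 ≤ C ω ∧ C ω ≤ 1 := by
    intro ω; rcases hC01 ω with h | h <;> rw [h] <;> constructor <;> norm_num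
  have int_bdd : ∀ (u : Ω → ℝ), Measurable u → ∀ M : ℝ, (∀ ω, |u ω| ≤ M) → Integrable u P := by
    intro u hu M hM
    exact ⟨hu.aestronglyMeasurable,
      HasFiniteIntegral.of_bounded (C := M) (Filter.Eventually.of_forall fun ω => by
        simpa [Real.norm_eq_abs] using hM ω)⟩
  have hdiv_bd : ∀ ω, 0 ≤ C ω / g' ω ∧ C ω / g' ω ≤ 1 / ε := by
    intro ω
    refine ⟨div_nonneg (hC01' ω).1 (hg'_pos ω).le, ?_⟩
    exact div_le_div₀ zero_le_one (hC01' ω).2 hε (hg₀_bd (YW ω)).1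
  have hdiv_meas : Measurable (fun ω => C ω / g' ω) := hC.div hg'_meas
  -- Step A : key conditional expectation identity
  have stepA : ∀ t : Set ℝ, MeasurableSet t →
      P[fun ω => (1 / g' ω) * (C ω * Set.indicator (A ⁻¹' t) (fun _ => (1:ℝ)) ω) | m]
        =ᵐ[P] P[Set.indicator (A ⁻¹' t) (fun _ => (1:ℝ)) | m] := by
    intro t ht
    have hprod : (fun ω => C ω * Set.indicator (A ⁻¹' t) (fun _ => (1:ℝ)) ω)
        = Set.indicator (C ⁻¹' {1} ∩ A ⁻¹' t) (fun _ => (1:ℝ)) := by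
      funext ω
      rcases hC01 ω with h | h
      · have : ω ∉ C ⁻¹' {1} ∩ A ⁻¹' t := by
          simp [Set.mem_inter_iff, Set.mem_preimage, h]
        simp [h, this]
      · have hmem : ω ∈ C ⁻¹' {1} := by simp [Set.mem_preimage, h]
        by_cases h2 : ω ∈ A ⁻¹' t
        · simp [h, Set.indicator_of_mem, h2, Set.mem_inter_iff, hmem]
        · simp [h, Set.indicator_of_notMem, h2, Set.mem_inter_iff, hmem]
    have hCeq : Set.indicator (C ⁻¹' {1}) (fun _ => (1:ℝ)) = C := by
      funext ω
      rcases hC01 ω with h | h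
      · have : ω ∉ C ⁻¹' {1} := by simp [Set.mem_preimage, h]
        simp [this, h]
      · have : ω ∈ C ⁻¹' {1} := by simp [Set.mem_preimage, h]
        simp [this, h]
    have hCi := (condIndepFun_iff_condExp_inter_preimage_eq_mul (μ := P)
        (hm' := hm) hC hA).mp hCAR {1} t (measurableSet_singleton 1) ht
    have h1 : P[fun ω => C ω * Set.indicator (A ⁻¹' t) (fun _ => (1:ℝ)) ω | m]
        =ᵐ[P] fun ω => g' ω * (P⟦A ⁻¹' t | m⟧) ω := by
      rw [hprod]
      refine hCi.trans ?_
      have hg0c : (P⟦C ⁻¹' {1} | m⟧) =ᵐ[P] g' := by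
        rw [hCeq]; exact hg₀_condexp
      filter_upwards [hg0c] with ω hω
      rw [hω]
    have hbd1 : ∀ ω, |C ω * Set.indicator (A ⁻¹' t) (fun _ => (1:ℝ)) ω| ≤ 1 := by
      intro ω
      rw [abs_mul]
      calc |C ω| * |Set.indicator (A ⁻¹' t) (fun _ => (1:ℝ)) ω| ≤ 1 * 1 := by
            apply mul_le_mul
            · rw [abs_of_nonneg (hC01' ω).1]; exact (hC01' ω).2
            · by_cases h : ω ∈ A ⁻¹' t <;> simp [h]
            · exact abs_nonneg _
            · norm_num
        _ = 1 := by norm_num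
    have hint1 : Integrable (fun ω => C ω * Set.indicator (A ⁻¹' t) (fun _ => (1:ℝ)) ω) P :=
      int_bdd _ (hC.mul ((measurable_const).indicator (hA ht))) 1 hbd1
    have hint2 : Integrable (fun ω => (1 / g' ω) * (C ω * Set.indicator (A ⁻¹' t) (fun _ => (1:ℝ)) ω)) P := by
      refine int_bdd _ ((measurable_const.div hg'_meas).mul
        (hC.mul ((measurable_const).indicator (hA ht)))) (1/ε * 1) fun ω => ?_
      rw [abs_mul]
      have h1g : |1 / g' ω| ≤ 1 / ε := by
        rw [abs_of_nonneg (div_nonneg zero_le_one (hg'_pos ω).le)]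
        exact div_le_div₀ zero_le_one le_rfl hε (hg₀_bd (YW ω)).1
      exact mul_le_mul h1g (hbd1 ω) (abs_nonneg _) (div_pos one_pos hε).le
    have hpull := condExp_mul_of_stronglyMeasurable_left (μ := P) (m := m) hinv_m hint2 hint1
    refine hpull.trans ?_
    filter_upwards [h1] with ω hω
    show (1 / g' ω) * (P[fun ω => C ω * Set.indicator (A ⁻¹' t) (fun _ => (1:ℝ)) ω | m]) ω = _
    rw [hω]
    field_simp [(hg'_pos ω).ne']
  -- core set-integral identity
  have core : ∀ (B : Set (ℝ × 𝒲)) (t : Set ℝ), MeasurableSet B → MeasurableSet t →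
      ∫ ω in YW ⁻¹' B ∩ A ⁻¹' t, C ω / g' ω ∂P
        = (P (YW ⁻¹' B ∩ A ⁻¹' t)).toReal := by
    intro B t hB ht
    have hSB : MeasurableSet[m] (YW ⁻¹' B) := by
      rw [hm_eq]; exact ⟨B, hB, rfl⟩
    have hSB' : MeasurableSet (YW ⁻¹' B) := hm _ hSB
    have hSt : MeasurableSet (A ⁻¹' t) := hA ht
    have hXeq : ∀ ω, Set.indicator (A ⁻¹' t) (fun ω => C ω / g' ω) ω
        = (1 / g' ω) * (C ω * Set.indicator (A ⁻¹' t) (fun _ => (1:ℝ)) ω) := by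
      intro ω
      by_cases h : ω ∈ A ⁻¹' t
      · simp only [Set.indicator_of_mem h]
        rw [div_eq_mul_inv]; ring
      · simp [Set.indicator_of_notMem, h]
    have hint2 : Integrable (fun ω => (1 / g' ω) * (C ω * Set.indicator (A ⁻¹' t) (fun _ => (1:ℝ)) ω)) P := by
      refine int_bdd _ ((measurable_const.div hg'_meas).mul
        (hC.mul ((measurable_const).indicator hSt))) (1/ε) fun ω => ?_
      rw [← hXeq]
      by_cases h : ω ∈ A ⁻¹' t
      · rw [Set.indicator_of_mem h, abs_of_nonneg (hdiv_bd ω).1]; exact (hdiv_bd ω).2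
      · rw [Set.indicator_of_notMem h]
        simp only [mul_zero, abs_zero]
        exact (div_pos one_pos hε).le
    have hind_int : Integrable (Set.indicator (A ⁻¹' t) (fun _ => (1:ℝ))) P :=
      (integrable_const (1:ℝ)).indicator hSt
    calc ∫ ω in YW ⁻¹' B ∩ A ⁻¹' t, C ω / g' ω ∂P
        = ∫ ω in YW ⁻¹' B, Set.indicator (A ⁻¹' t) (fun ω => C ω / g' ω) ω ∂P := by
          rw [setIntegral_indicator hSt]
      _ = ∫ ω in YW ⁻¹' B, (1 / g' ω) * (C ω * Set.indicator (A ⁻¹' t) (fun _ => (1:ℝ)) ω) ∂P :=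
          setIntegral_congr_fun hSB' fun ω _ => hXeq ω
      _ = ∫ ω in YW ⁻¹' B,
            (P[fun ω => (1 / g' ω) * (C ω * Set.indicator (A ⁻¹' t) (fun _ => (1:ℝ)) ω) | m]) ω ∂P :=
          (setIntegral_condExp hm hint2 hSB).symm
      _ = ∫ ω in YW ⁻¹' B, (P[Set.indicator (A ⁻¹' t) (fun _ => (1:ℝ)) | m]) ω ∂P := by
          refine setIntegral_congr_ae hSB' ?_
          filter_upwards [stepA t ht] with ω hω _
          exact hω
      _ = ∫ ω in YW ⁻¹' B, Set.indicator (A ⁻¹' t) (fun _ => (1:ℝ)) ω ∂P :=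
          setIntegral_condExp hm hind_int hSB
      _ = ∫ ω in YW ⁻¹' B ∩ A ⁻¹' t, (1:ℝ) ∂P := setIntegral_indicator hSt
      _ = (P (YW ⁻¹' B ∩ A ⁻¹' t)).toReal := by
          rw [setIntegral_const]; simp; rfl
  -- density and mapped measures
  set d : Ω → ℝ≥0 := fun ω => Real.toNNReal (C ω / g' ω) with hd_def
  have hd_meas : Measurable d := hdiv_meas.real_toNNReal
  set ρ : Measure Ω := P.withDensity (fun ω => (d ω : ℝ≥0∞)) with hρ_def
  have hd_le : ∀ ω, (d ω : ℝ≥0∞) ≤ ENNReal.ofReal (1/ε) := by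
    intro ω
    rw [show ((d ω : ℝ≥0∞)) = ENNReal.ofReal (C ω / g' ω) from rfl]
    exact ENNReal.ofReal_le_ofReal (hdiv_bd ω).2
  haveI : IsFiniteMeasure ρ := by
    refine isFiniteMeasure_withDensity ?_
    have : ∫⁻ ω, (d ω : ℝ≥0∞) ∂P ≤ ∫⁻ _, ENNReal.ofReal (1/ε) ∂P := lintegral_mono hd_le
    refine ne_top_of_le_ne_top ?_ this
    simp
  set T : Ω → (ℝ × 𝒲) × ℝ := fun ω => (YW ω, A ω) with hT_def
  have hT : Measurable T := hYW.prodMk hA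
  have hrect : ∀ (B : Set (ℝ × 𝒲)) (t : Set ℝ), MeasurableSet B → MeasurableSet t →
      (ρ.map T) (B ×ˢ t) = (P.map T) (B ×ˢ t) := by
    intro B t hB ht
    have hpre : T ⁻¹' (B ×ˢ t) = YW ⁻¹' B ∩ A ⁻¹' t := by rw [hT_def]; exact Set.mk_preimage_prod YW A
    have hS : MeasurableSet (YW ⁻¹' B ∩ A ⁻¹' t) := (hYW hB).inter (hA ht)
    rw [Measure.map_apply hT (hB.prod ht), Measure.map_apply hT (hB.prod ht), hpre]
    rw [hρ_def, withDensity_apply _ hS]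
    have hnn : 0 ≤ᵐ[P.restrict (YW ⁻¹' B ∩ A ⁻¹' t)] fun ω => C ω / g' ω :=
      Filter.Eventually.of_forall fun ω => (hdiv_bd ω).1
    have hint : Integrable (fun ω => C ω / g' ω) (P.restrict (YW ⁻¹' B ∩ A ⁻¹' t)) := by
      refine Integrable.restrict ?_
      refine int_bdd _ hdiv_meas (1/ε) fun ω => ?_
      rw [abs_of_nonneg (hdiv_bd ω).1]; exact (hdiv_bd ω).2
    have hlin := ofReal_integral_eq_lintegral_ofReal hint hnn
    have heq : ∫⁻ ω in YW ⁻¹' B ∩ A ⁻¹' t, (d ω : ℝ≥0∞) ∂P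
        = ENNReal.ofReal (∫ ω in YW ⁻¹' B ∩ A ⁻¹' t, C ω / g' ω ∂P) := by
      rw [hlin]; rfl
    rw [heq, core B t hB ht, ENNReal.ofReal_toReal (measure_ne_top P _)]
  have hμeq : ρ.map T = P.map T := by
    refine ext_of_generate_finite _ generateFrom_prod.symm isPiSystem_prod ?_ ?_
    · rintro S ⟨B, hB, t, ht, rfl⟩
      exact hrect B t hB ht
    · have := hrect Set.univ Set.univ MeasurableSet.univ MeasurableSet.univ
      simpa [Set.univ_prod_univ] using this
  -- final assembly
  set F : (ℝ × 𝒲) × ℝ → ℝ := fun p => f (p.1.2, p.2, p.1.1) with hF_def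
  have hF_meas : Measurable F :=
    hf_meas.comp (((measurable_snd.comp measurable_fst).prodMk
      (measurable_snd.prodMk (measurable_fst.comp measurable_fst))))
  have h1 : ∫ p, F p ∂(ρ.map T) = ∫ ω, (C ω / g' ω) * f (W ω, A ω, Y ω) ∂P := by
    rw [integral_map hT.aemeasurable hF_meas.aestronglyMeasurable]
    rw [hρ_def, integral_withDensity_eq_integral_smul hd_meas]
    congr 1
    funext ω
    rw [NNReal.smul_def, smul_eq_mul, Real.coe_toNNReal _ (hdiv_bd ω).1]
  have h2 : ∫ p, F p ∂(P.map T) = ∫ ω, f (W ω, A ω, Y ω) ∂P := by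
    rw [integral_map hT.aemeasurable hF_meas.aestronglyMeasurable]
  rw [← h1, ← h2, hμeq]

/-- Inverse-probability-of-sampling identity under two-phase sampling with
coarsening at random: `E[(C / g₀(Y,W)) f(W,A,Y)] = E[f(W,A,Y)]`. -/
theorem ipsw_identity
    {Ω 𝒲 : Type*} [MeasurableSpace Ω] [StandardBorelSpace Ω] [Nonempty Ω]
    [MeasurableSpace 𝒲]
    (P : Measure Ω) [IsProbabilityMeasure P]
    (W : Ω → 𝒲) (hW : Measurable W)
    (A : Ω → ℝ) (hA : Measurable A)
    (Y : Ω → ℝ) (hY : Measurable Y) (hY_int : Integrable Y P)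
    (C : Ω → ℝ) (hC : Measurable C) (hC01 : ∀ ω, C ω = 0 ∨ C ω = 1)
    (g₀ : ℝ × 𝒲 → ℝ) (hg₀_meas : Measurable g₀)
    (ε : ℝ) (hε : 0 < ε) (hg₀_bd : ∀ x, ε ≤ g₀ x ∧ g₀ x ≤ 1)
    (hg₀_condexp :
      P[C | MeasurableSpace.comap (fun ω => (Y ω, W ω)) inferInstance]
        =ᵐ[P] fun ω => g₀ (Y ω, W ω))
    (hCAR : CondIndepFun
      (MeasurableSpace.comap (fun ω => (Y ω, W ω)) inferInstance)
      ((hY.prodMk hW).comap_le) C A P)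
    (f : 𝒲 × ℝ × ℝ → ℝ) (hf_meas : Measurable f) (hf_bd : ∃ M : ℝ, ∀ x, |f x| ≤ M) :
    ∫ ω, (C ω / g₀ (Y ω, W ω)) * f (W ω, A ω, Y ω) ∂P
      = ∫ ω, f (W ω, A ω, Y ω) ∂P := by
  exact ipsw_aux P W hW A hA Y hY C hC hC01 g₀ hg₀_meas ε hε hg₀_bd rfl
    ((hY.prodMk hW).comap_le) hg₀_condexp hCAR f hf_meas
end

section
/- The observed-data efficient influence function for two-phase sampling has mean zero at the truth: with D^F(w, a, y) := H₀(a, w)(y − Q̄₀(a, w)) + Q̄₀(a + δ(w), w) − ψ₀ and G₀ : ℝ × 𝒲 → ℝ a bounded measurable function satisfying G₀(Y, W) = E[D^F(W, A, Y) ∣ σ(Y, W)] a.s., one has E[(C / g₀(Y, W)) D^F(W, A, Y) − (C / g₀(Y, W) − 1) G₀(Y, W)] = 0. -/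
open MeasureTheory ProbabilityTheory
open scoped ENNReal NNReal

section Helpers

variable {Ω : Type*} [MeasurableSpace Ω]

/-- A bounded a.e.-strongly measurable function is integrable w.r.t. a finite measure. -/
lemma integrable_of_bdd' {P : Measure Ω} [IsFiniteMeasure P] {f : Ω → ℝ}
    (hf : AEStronglyMeasurable f P) {M : ℝ} (h : ∀ ω, |f ω| ≤ M) : Integrable f P :=
  Integrable.mono' (integrable_const M) hf
    (Filter.Eventually.of_forall fun ω => by simpa [Real.norm_eq_abs] using h ω)

end Helpers

/-- The observed-data efficient influence function for two-phase sampling has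
mean zero at the truth:
`E[(C/g₀(Y,W)) D^F(W,A,Y) − (C/g₀(Y,W) − 1) G₀(Y,W)] = 0`, where
`D^F(w,a,y) = H₀(a,w)(y − Q̄₀(a,w)) + Q̄₀(a + δ(w), w) − ψ₀` and
`G₀(Y,W) = E[D^F(W,A,Y) ∣ σ(Y,W)]` a.s. -/
theorem observed_data_eif_mean_zero
    {Ω 𝒲 : Type*} [MeasurableSpace Ω] [StandardBorelSpace Ω] [Nonempty Ω]
    [MeasurableSpace 𝒲]
    (P : Measure Ω) [IsProbabilityMeasure P]
    (W : Ω → 𝒲) (hW : Measurable W)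
    (A : Ω → ℝ) (hA : Measurable A)
    (Y : Ω → ℝ) (hY : Measurable Y) (hY_bd : ∃ M : ℝ, ∀ ω, |Y ω| ≤ M)
    (q₀ : ℝ × 𝒲 → ℝ) (hq₀_meas : Measurable q₀)
    (hq₀_nonneg : ∀ x, 0 ≤ q₀ x)
    (hq₀_density : ∀ f : ℝ × 𝒲 → ℝ, Measurable f → (∃ M : ℝ, ∀ x, |f x| ≤ M) →
      ∫ ω, f (A ω, W ω) ∂P = ∫ ω, (∫ a : ℝ, f (a, W ω) * q₀ (a, W ω)) ∂P)
    (Qbar₀ : ℝ × 𝒲 → ℝ) (hQbar₀_meas : Measurable Qbar₀)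
    (hQbar₀_bd : ∃ M : ℝ, ∀ x, |Qbar₀ x| ≤ M)
    (hQbar₀_condexp :
      P[Y | MeasurableSpace.comap (fun ω => (A ω, W ω)) inferInstance]
        =ᵐ[P] fun ω => Qbar₀ (A ω, W ω))
    (δ : 𝒲 → ℝ) (hδ : Measurable δ)
    (ψ₀ : ℝ) (hψ₀ : ψ₀ = ∫ ω, Qbar₀ (A ω + δ (W ω), W ω) ∂P)
    (hq₀_pos : ∀ x, 0 < q₀ x)
    (H₀ : ℝ × 𝒲 → ℝ)
    (hH₀ : ∀ a w, H₀ (a, w) = q₀ (a - δ w, w) / q₀ (a, w))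
    (hH₀_bd : ∃ M : ℝ, ∀ ω, |H₀ (A ω, W ω)| ≤ M)
    (C : Ω → ℝ) (hC : Measurable C) (hC01 : ∀ ω, C ω = 0 ∨ C ω = 1)
    (g₀ : ℝ × 𝒲 → ℝ) (hg₀_meas : Measurable g₀)
    (ε : ℝ) (hε : 0 < ε) (hg₀_bd : ∀ x, ε ≤ g₀ x ∧ g₀ x ≤ 1)
    (hg₀_condexp :
      P[C | MeasurableSpace.comap (fun ω => (Y ω, W ω)) inferInstance]
        =ᵐ[P] fun ω => g₀ (Y ω, W ω))
    (hCAR : CondIndepFun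
      (MeasurableSpace.comap (fun ω => (Y ω, W ω)) inferInstance)
      ((hY.prodMk hW).comap_le) C A P)
    (G₀ : ℝ × 𝒲 → ℝ) (hG₀_meas : Measurable G₀) (hG₀_bd : ∃ M : ℝ, ∀ x, |G₀ x| ≤ M)
    (hG₀_condexp :
      P[fun ω => H₀ (A ω, W ω) * (Y ω - Qbar₀ (A ω, W ω))
          + Qbar₀ (A ω + δ (W ω), W ω) - ψ₀
        | MeasurableSpace.comap (fun ω => (Y ω, W ω)) inferInstance]
        =ᵐ[P] fun ω => G₀ (Y ω, W ω)) :
    ∫ ω, ((C ω / g₀ (Y ω, W ω))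
          * (H₀ (A ω, W ω) * (Y ω - Qbar₀ (A ω, W ω))
            + Qbar₀ (A ω + δ (W ω), W ω) - ψ₀)
        - (C ω / g₀ (Y ω, W ω) - 1) * G₀ (Y ω, W ω)) ∂P = 0 := by
  classical
  obtain ⟨MY, hMY⟩ := hY_bd
  obtain ⟨MQ, hMQ⟩ := hQbar₀_bd
  obtain ⟨MH, hMH⟩ := hH₀_bd
  obtain ⟨MG, hMG⟩ := hG₀_bd
  have hΩ : Nonempty Ω := inferInstance
  have hMY0 : 0 ≤ MY := (abs_nonneg _).trans (hMY (Classical.arbitrary Ω))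
  have hMQ0 : 0 ≤ MQ := (abs_nonneg _).trans (hMQ (A (Classical.arbitrary Ω), W (Classical.arbitrary Ω)))
  have hMH0 : 0 ≤ MH := (abs_nonneg _).trans (hMH (Classical.arbitrary Ω))
  have hMG0 : 0 ≤ MG := (abs_nonneg _).trans (hMG (Y (Classical.arbitrary Ω), W (Classical.arbitrary Ω)))
  have hg_pos : ∀ x, 0 < g₀ x := fun x => lt_of_lt_of_le hε (hg₀_bd x).1
  have hC_nonneg : ∀ ω, 0 ≤ C ω := fun ω => by rcases hC01 ω with h | h <;> rw [h] <;> norm_num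
  have hC_le_one : ∀ ω, C ω ≤ 1 := fun ω => by rcases hC01 ω with h | h <;> rw [h] <;> norm_num
  -- measurability of H₀
  have hH₀_meas : Measurable H₀ := by
    have hfun : H₀ = fun x : ℝ × 𝒲 => q₀ (x.1 - δ x.2, x.2) / q₀ x :=
      funext fun x => by rcases x with ⟨a, w⟩; exact hH₀ a w
    rw [hfun]
    exact (hq₀_meas.comp
      ((measurable_fst.sub (hδ.comp measurable_snd)).prodMk measurable_snd)).div hq₀_meas
  -- abbreviations
  set D : Ω → ℝ := fun ω => H₀ (A ω, W ω) * (Y ω - Qbar₀ (A ω, W ω))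
      + Qbar₀ (A ω + δ (W ω), W ω) - ψ₀ with hD_def
  have hpair : Measurable fun ω => (Y ω, W ω) := hY.prodMk hW
  have hAW : Measurable fun ω => (A ω, W ω) := hA.prodMk hW
  have hm := hpair.comap_le
  have hmAW := hAW.comap_le
  -- measurability of composed maps
  have hQA_meas : Measurable fun ω => Qbar₀ (A ω, W ω) := hQbar₀_meas.comp hAW
  have hQδ_meas : Measurable fun ω => Qbar₀ (A ω + δ (W ω), W ω) :=
    hQbar₀_meas.comp ((hA.add (hδ.comp hW)).prodMk hW)
  have hHA_meas : Measurable fun ω => H₀ (A ω, W ω) := hH₀_meas.comp hAW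
  have hGp_meas : Measurable fun ω => G₀ (Y ω, W ω) := hG₀_meas.comp hpair
  have hgp_meas : Measurable fun ω => g₀ (Y ω, W ω) := hg₀_meas.comp hpair
  have hD_meas : Measurable D :=
    ((hHA_meas.mul (hY.sub hQA_meas)).add hQδ_meas).sub measurable_const
  -- bounds and integrability
  have hZ_bd : ∀ ω, |Y ω - Qbar₀ (A ω, W ω)| ≤ MY + MQ := fun ω =>
    (abs_sub _ _).trans (add_le_add (hMY ω) (hMQ _))
  have hD_bd : ∀ ω, |D ω| ≤ MH * (MY + MQ) + MQ + |ψ₀| := by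
    intro ω
    have h1 : |H₀ (A ω, W ω) * (Y ω - Qbar₀ (A ω, W ω))| ≤ MH * (MY + MQ) := by
      rw [abs_mul]
      exact mul_le_mul (hMH ω) (hZ_bd ω) (abs_nonneg _) hMH0
    calc |D ω| ≤ |H₀ (A ω, W ω) * (Y ω - Qbar₀ (A ω, W ω))
          + Qbar₀ (A ω + δ (W ω), W ω)| + |ψ₀| := abs_sub _ _
      _ ≤ (|H₀ (A ω, W ω) * (Y ω - Qbar₀ (A ω, W ω))|
          + |Qbar₀ (A ω + δ (W ω), W ω)|) + |ψ₀| := add_le_add (abs_add_le _ _) le_rfl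
      _ ≤ MH * (MY + MQ) + MQ + |ψ₀| := add_le_add (add_le_add h1 (hMQ _)) le_rfl
  have intY : Integrable Y P := integrable_of_bdd' hY.aestronglyMeasurable hMY
  have intQA : Integrable (fun ω => Qbar₀ (A ω, W ω)) P :=
    integrable_of_bdd' hQA_meas.aestronglyMeasurable (fun ω => hMQ _)
  have intQδ : Integrable (fun ω => Qbar₀ (A ω + δ (W ω), W ω)) P :=
    integrable_of_bdd' hQδ_meas.aestronglyMeasurable (fun ω => hMQ _)
  have intZ : Integrable (fun ω => Y ω - Qbar₀ (A ω, W ω)) P :=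
    integrable_of_bdd' (hY.sub hQA_meas).aestronglyMeasurable hZ_bd
  have intHZ : Integrable (fun ω => H₀ (A ω, W ω) * (Y ω - Qbar₀ (A ω, W ω))) P := by
    refine integrable_of_bdd' (hHA_meas.mul (hY.sub hQA_meas)).aestronglyMeasurable
      (M := MH * (MY + MQ)) fun ω => ?_
    rw [abs_mul]
    exact mul_le_mul (hMH ω) (hZ_bd ω) (abs_nonneg _) hMH0
  have intD : Integrable D P := integrable_of_bdd' hD_meas.aestronglyMeasurable hD_bd
  have intGp : Integrable (fun ω => G₀ (Y ω, W ω)) P :=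
    integrable_of_bdd' hGp_meas.aestronglyMeasurable (fun ω => hMG _)
  have intC : Integrable C P :=
    integrable_of_bdd' hC.aestronglyMeasurable (M := 1)
      (fun ω => by rw [abs_of_nonneg (hC_nonneg ω)]; exact hC_le_one ω)
  have intgp : Integrable (fun ω => g₀ (Y ω, W ω)) P :=
    integrable_of_bdd' hgp_meas.aestronglyMeasurable (M := 1)
      (fun ω => by rw [abs_of_nonneg (le_of_lt (hg_pos _))]; exact (hg₀_bd _).2)
  ----------------------------------------------------------------
  -- Part A : ∫ D = 0
  ----------------------------------------------------------------
  have hQA_sm : StronglyMeasurable[(MeasurableSpace.comap (fun ω => (A ω, W ω)) inferInstance : MeasurableSpace Ω)] fun ω => Qbar₀ (A ω, W ω) :=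
    (hQbar₀_meas.comp (measurable_iff_comap_le.mpr le_rfl)).stronglyMeasurable
  have hHA_sm : StronglyMeasurable[(MeasurableSpace.comap (fun ω => (A ω, W ω)) inferInstance : MeasurableSpace Ω)] fun ω => H₀ (A ω, W ω) :=
    (hH₀_meas.comp (measurable_iff_comap_le.mpr le_rfl)).stronglyMeasurable
  have hcondZ : P[(fun ω => Y ω - Qbar₀ (A ω, W ω)) | (MeasurableSpace.comap (fun ω => (A ω, W ω)) inferInstance : MeasurableSpace Ω)] =ᵐ[P] 0 := by
    have h1 := condExp_sub (m := (MeasurableSpace.comap (fun ω => (A ω, W ω)) inferInstance : MeasurableSpace Ω)) (μ := P) intY intQA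
    have h2 : P[(fun ω => Qbar₀ (A ω, W ω)) | (MeasurableSpace.comap (fun ω => (A ω, W ω)) inferInstance : MeasurableSpace Ω)] = fun ω => Qbar₀ (A ω, W ω) :=
      condExp_of_stronglyMeasurable hmAW hQA_sm intQA
    filter_upwards [h1, hQbar₀_condexp] with ω hω1 hω2
    show (P[Y - (fun ω => Qbar₀ (A ω, W ω)) | (MeasurableSpace.comap (fun ω => (A ω, W ω)) inferInstance : MeasurableSpace Ω)]) ω = 0
    simp only [Pi.sub_apply] at hω1
    rw [hω1, hω2, h2]
    simp
  have hintHZ : ∫ ω, H₀ (A ω, W ω) * (Y ω - Qbar₀ (A ω, W ω)) ∂P = 0 := by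
    have hpull := condExp_mul_of_stronglyMeasurable_left (μ := P) hHA_sm
      (by exact intHZ) intZ
    have h0 : P[(fun ω => H₀ (A ω, W ω)) * (fun ω => Y ω - Qbar₀ (A ω, W ω)) | (MeasurableSpace.comap (fun ω => (A ω, W ω)) inferInstance : MeasurableSpace Ω)]
        =ᵐ[P] 0 := by
      filter_upwards [hpull, hcondZ] with ω hω1 hω2
      simp only [Pi.mul_apply, Pi.zero_apply] at *
      rw [hω1, hω2, mul_zero]
    have h4 := integral_condExp (μ := P) hmAW
      (f := (fun ω => H₀ (A ω, W ω)) * (fun ω => Y ω - Qbar₀ (A ω, W ω)))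
    calc ∫ ω, H₀ (A ω, W ω) * (Y ω - Qbar₀ (A ω, W ω)) ∂P
        = ∫ ω, (P[(fun ω => H₀ (A ω, W ω)) * (fun ω => Y ω - Qbar₀ (A ω, W ω)) | (MeasurableSpace.comap (fun ω => (A ω, W ω)) inferInstance : MeasurableSpace Ω)]) ω ∂P :=
          h4.symm
      _ = ∫ ω, (0 : Ω → ℝ) ω ∂P := integral_congr_ae h0
      _ = 0 := by simp
  have hintD : ∫ ω, D ω ∂P = 0 := by
    have h1 : ∫ ω, D ω ∂P
        = ∫ ω, (H₀ (A ω, W ω) * (Y ω - Qbar₀ (A ω, W ω))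
            + Qbar₀ (A ω + δ (W ω), W ω)) ∂P - ∫ _ω, ψ₀ ∂P := by
      exact integral_sub (intHZ.add intQδ) (integrable_const ψ₀)
    rw [h1, integral_add intHZ intQδ, hintHZ, integral_const]
    simp [hψ₀]
  ----------------------------------------------------------------
  -- Part B : ∫ G₀(Y,W) = ∫ D
  ----------------------------------------------------------------
  have hintG : ∫ ω, G₀ (Y ω, W ω) ∂P = ∫ ω, D ω ∂P := by
    rw [← integral_congr_ae hG₀_condexp]
    exact integral_condExp hm
  ----------------------------------------------------------------
  -- Part C : for (MeasurableSpace.comap (fun ω => ((Y ω, W ω), A ω)) inferInstance : MeasurableSpace Ω)-measurable bounded Ψ, ∫ C·Ψ = ∫ g₀(Y,W)·Ψ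
  ----------------------------------------------------------------
  have hm' := (hpair.prodMk hA).comap_le
  set 𝒞 : Set (Set Ω) := {u | ∃ s t, MeasurableSet s ∧ MeasurableSet t ∧
      u = (fun ω => (Y ω, W ω)) ⁻¹' s ∩ A ⁻¹' t} with h𝒞_def
  have hmem𝒞 : ∀ u ∈ 𝒞, MeasurableSet[(MeasurableSpace.comap (fun ω => ((Y ω, W ω), A ω)) inferInstance : MeasurableSpace Ω)] u := by
    rintro u ⟨s, t, hs, ht, rfl⟩
    refine ⟨s ×ˢ t, hs.prod ht, ?_⟩
    ext ω; simp [Set.mem_prod]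
  have hgen : (MeasurableSpace.comap (fun ω => ((Y ω, W ω), A ω)) inferInstance : MeasurableSpace Ω) = MeasurableSpace.generateFrom 𝒞 := by
    apply le_antisymm
    · have h1 : @Measurable Ω (ℝ × 𝒲) (MeasurableSpace.generateFrom 𝒞) _
          fun ω => (Y ω, W ω) := fun s hs =>
        MeasurableSpace.measurableSet_generateFrom
          ⟨s, Set.univ, hs, MeasurableSet.univ, by simp⟩
      have h2 : @Measurable Ω ℝ (MeasurableSpace.generateFrom 𝒞) _ A := fun t ht =>
        MeasurableSpace.measurableSet_generateFrom
          ⟨Set.univ, t, MeasurableSet.univ, ht, by simp⟩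
      exact measurable_iff_comap_le.mp (h1.prodMk h2)
    · exact MeasurableSpace.generateFrom_le hmem𝒞
  have hpi : IsPiSystem 𝒞 := by
    rintro u ⟨s₁, t₁, hs₁, ht₁, rfl⟩ v ⟨s₂, t₂, hs₂, ht₂, rfl⟩ -
    refine ⟨s₁ ∩ s₂, t₁ ∩ t₂, hs₁.inter hs₂, ht₁.inter ht₂, ?_⟩
    ext ω; simp; tauto
  -- key set-integral identity
  have hkey : ∀ s t, MeasurableSet s → MeasurableSet t →
      ∫ ω in (fun ω => (Y ω, W ω)) ⁻¹' s ∩ A ⁻¹' t, C ω ∂P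
        = ∫ ω in (fun ω => (Y ω, W ω)) ⁻¹' s ∩ A ⁻¹' t, g₀ (Y ω, W ω) ∂P := by
    intro s t hs ht
    have hAt : MeasurableSet (A ⁻¹' t) := hA ht
    have hsP : MeasurableSet ((fun ω => (Y ω, W ω)) ⁻¹' s) := hpair hs
    have hsm : MeasurableSet[(MeasurableSpace.comap (fun ω => (Y ω, W ω)) inferInstance : MeasurableSpace Ω)] ((fun ω => (Y ω, W ω)) ⁻¹' s) := ⟨s, hs, rfl⟩
    set χ : Ω → ℝ := (A ⁻¹' t).indicator fun _ => (1 : ℝ) with hχ_def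
    have hχ_meas : Measurable χ := measurable_const.indicator hAt
    have hχ01 : ∀ ω, χ ω = 0 ∨ χ ω = 1 := fun ω => by
      by_cases hω : ω ∈ A ⁻¹' t <;> simp [hχ_def, Set.indicator_apply, hω]
    have intχ : Integrable χ P :=
      integrable_of_bdd' hχ_meas.aestronglyMeasurable (M := 1)
        (fun ω => by rcases hχ01 ω with h | h <;> rw [h] <;> norm_num)
    have intCχ : Integrable (fun ω => C ω * χ ω) P :=
      integrable_of_bdd' (hC.mul hχ_meas).aestronglyMeasurable (M := 1)
        (fun ω => by
          rcases hχ01 ω with h | h <;> rcases hC01 ω with h' | h' <;>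
            rw [h, h'] <;> norm_num)
    have intgχ : Integrable ((fun ω => g₀ (Y ω, W ω)) * χ) P :=
      integrable_of_bdd' (hgp_meas.mul hχ_meas).aestronglyMeasurable (M := 1)
        (fun ω => by
          show |g₀ (Y ω, W ω) * χ ω| ≤ 1
          rw [abs_mul]
          rcases hχ01 ω with h | h <;> rw [h] <;>
            simp [abs_of_nonneg (le_of_lt (hg_pos (Y ω, W ω))), (hg₀_bd (Y ω, W ω)).2])
    -- C·χ as an indicator
    have hCχ : (fun ω => C ω * χ ω)
        = (C ⁻¹' {1} ∩ A ⁻¹' t).indicator fun _ => (1 : ℝ) := by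
      funext ω
      rcases hC01 ω with h | h <;> by_cases hω : ω ∈ A ⁻¹' t <;>
        simp [hχ_def, Set.indicator_apply, Set.mem_inter_iff, Set.mem_preimage, h, hω]
    have hCind : C = (C ⁻¹' {1}).indicator fun _ => (1 : ℝ) := by
      funext ω
      rcases hC01 ω with h | h <;> simp [Set.indicator_apply, Set.mem_preimage, h]
    -- conditional-independence product formula
    have hprod := (condIndepFun_iff_condExp_inter_preimage_eq_mul
      (m' := (MeasurableSpace.comap (fun ω => (Y ω, W ω)) inferInstance : MeasurableSpace Ω)) (hm' := hm) (μ := P) hC hA).mp hCAR {1} t (measurableSet_singleton 1) ht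
    have e2 : (P⟦C ⁻¹' {1} | (MeasurableSpace.comap (fun ω => (Y ω, W ω)) inferInstance : MeasurableSpace Ω)⟧) =ᵐ[P] fun ω => g₀ (Y ω, W ω) :=
      (condExp_congr_ae (Filter.EventuallyEq.of_eq hCind.symm)).trans hg₀_condexp
    have e1 : P[(fun ω => C ω * χ ω) | (MeasurableSpace.comap (fun ω => (Y ω, W ω)) inferInstance : MeasurableSpace Ω)]
        =ᵐ[P] fun ω => (P⟦C ⁻¹' {1} | (MeasurableSpace.comap (fun ω => (Y ω, W ω)) inferInstance : MeasurableSpace Ω)⟧) ω * (P⟦A ⁻¹' t | (MeasurableSpace.comap (fun ω => (Y ω, W ω)) inferInstance : MeasurableSpace Ω)⟧) ω := by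
      rw [hCχ]; exact hprod
    have eL : P[(fun ω => C ω * χ ω) | (MeasurableSpace.comap (fun ω => (Y ω, W ω)) inferInstance : MeasurableSpace Ω)]
        =ᵐ[P] fun ω => g₀ (Y ω, W ω) * (P⟦A ⁻¹' t | (MeasurableSpace.comap (fun ω => (Y ω, W ω)) inferInstance : MeasurableSpace Ω)⟧) ω := by
      filter_upwards [e1, e2] with ω h1 h2
      rw [h1, h2]
    -- pull-out on the right
    have hgm_sm : StronglyMeasurable[(MeasurableSpace.comap (fun ω => (Y ω, W ω)) inferInstance : MeasurableSpace Ω)] fun ω => g₀ (Y ω, W ω) :=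
      (hg₀_meas.comp (measurable_iff_comap_le.mpr le_rfl)).stronglyMeasurable
    have eR : P[((fun ω => g₀ (Y ω, W ω)) * χ) | (MeasurableSpace.comap (fun ω => (Y ω, W ω)) inferInstance : MeasurableSpace Ω)]
        =ᵐ[P] fun ω => g₀ (Y ω, W ω) * (P⟦A ⁻¹' t | (MeasurableSpace.comap (fun ω => (Y ω, W ω)) inferInstance : MeasurableSpace Ω)⟧) ω := by
      have := condExp_mul_of_stronglyMeasurable_left (μ := P) hgm_sm intgχ intχ
      filter_upwards [this] with ω hω
      rw [hω]; rfl
    -- assemble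
    have lhs : ∫ ω in (fun ω => (Y ω, W ω)) ⁻¹' s ∩ A ⁻¹' t, C ω ∂P
        = ∫ ω in (fun ω => (Y ω, W ω)) ⁻¹' s,
            (fun ω => g₀ (Y ω, W ω) * (P⟦A ⁻¹' t | (MeasurableSpace.comap (fun ω => (Y ω, W ω)) inferInstance : MeasurableSpace Ω)⟧) ω) ω ∂P := by
      rw [← setIntegral_indicator hAt]
      have : ∫ ω in (fun ω => (Y ω, W ω)) ⁻¹' s, (A ⁻¹' t).indicator C ω ∂P
          = ∫ ω in (fun ω => (Y ω, W ω)) ⁻¹' s, C ω * χ ω ∂P := by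
        refine setIntegral_congr_ae hsP (Filter.Eventually.of_forall fun ω _ => ?_)
        by_cases hω : ω ∈ A ⁻¹' t <;> simp [hχ_def, Set.indicator_apply, hω]
      rw [this, ← setIntegral_condExp hm intCχ hsm]
      exact setIntegral_congr_ae (hm _ hsm) (eL.mono fun ω h _ => h)
    have rhs : ∫ ω in (fun ω => (Y ω, W ω)) ⁻¹' s ∩ A ⁻¹' t, g₀ (Y ω, W ω) ∂P
        = ∫ ω in (fun ω => (Y ω, W ω)) ⁻¹' s,
            (fun ω => g₀ (Y ω, W ω) * (P⟦A ⁻¹' t | (MeasurableSpace.comap (fun ω => (Y ω, W ω)) inferInstance : MeasurableSpace Ω)⟧) ω) ω ∂P := by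
      rw [← setIntegral_indicator hAt]
      have : ∫ ω in (fun ω => (Y ω, W ω)) ⁻¹' s,
            (A ⁻¹' t).indicator (fun ω => g₀ (Y ω, W ω)) ω ∂P
          = ∫ ω in (fun ω => (Y ω, W ω)) ⁻¹' s,
            ((fun ω => g₀ (Y ω, W ω)) * χ) ω ∂P := by
        refine setIntegral_congr_ae hsP (Filter.Eventually.of_forall fun ω _ => ?_)
        by_cases hω : ω ∈ A ⁻¹' t <;> simp [hχ_def, Set.indicator_apply, hω]
      rw [this, ← setIntegral_condExp hm intgχ hsm]
      exact setIntegral_congr_ae (hm _ hsm) (eR.mono fun ω h _ => h)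
    rw [lhs, rhs]
  -- the two withDensity measures agree on (MeasurableSpace.comap (fun ω => ((Y ω, W ω), A ω)) inferInstance : MeasurableSpace Ω)
  set μ₁ : Measure Ω := P.withDensity fun ω => ENNReal.ofReal (C ω) with hμ₁_def
  set μ₂ : Measure Ω := P.withDensity fun ω => ENNReal.ofReal (g₀ (Y ω, W ω)) with hμ₂_def
  have hμeq : ∀ u ∈ 𝒞, μ₁ u = μ₂ u := by
    rintro u ⟨s, t, hs, ht, rfl⟩
    have hu : MeasurableSet ((fun ω => (Y ω, W ω)) ⁻¹' s ∩ A ⁻¹' t) :=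
      (hpair hs).inter (hA ht)
    rw [hμ₁_def, hμ₂_def, withDensity_apply _ hu, withDensity_apply _ hu,
      ← ofReal_integral_eq_lintegral_ofReal intC.restrict
        (Filter.Eventually.of_forall hC_nonneg),
      ← ofReal_integral_eq_lintegral_ofReal intgp.restrict
        (Filter.Eventually.of_forall fun ω => le_of_lt (hg_pos _)),
      hkey s t hs ht]
  haveI hμ₁fin : IsFiniteMeasure μ₁ := by
    constructor
    rw [hμ₁_def, withDensity_apply _ MeasurableSet.univ, Measure.restrict_univ]
    refine lt_of_le_of_lt
      (lintegral_mono (g := fun _ => 1) fun ω => ENNReal.ofReal_le_one.mpr (hC_le_one ω)) ?_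
    simp [lintegral_const]
  haveI hμ₂fin : IsFiniteMeasure μ₂ := by
    constructor
    rw [hμ₂_def, withDensity_apply _ MeasurableSet.univ, Measure.restrict_univ]
    refine lt_of_le_of_lt
      (lintegral_mono (g := fun _ => 1) fun ω => ENNReal.ofReal_le_one.mpr (hg₀_bd _).2) ?_
    simp [lintegral_const]
  have htrim : μ₁.trim hm' = μ₂.trim hm' := by
    refine @MeasureTheory.ext_of_generate_finite Ω (MeasurableSpace.comap (fun ω => ((Y ω, W ω), A ω)) inferInstance : MeasurableSpace Ω) (μ₁.trim hm') (μ₂.trim hm') 𝒞 hgen hpi ?_ ?_ ?_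
    · infer_instance
    · intro u hu
      rw [trim_measurableSet_eq hm' (hgen ▸ MeasurableSpace.measurableSet_generateFrom hu),
        trim_measurableSet_eq hm' (hgen ▸ MeasurableSpace.measurableSet_generateFrom hu)]
      exact hμeq u hu
    · have huniv : (Set.univ : Set Ω)
          = (fun ω => (Y ω, W ω)) ⁻¹' Set.univ ∩ A ⁻¹' Set.univ := by simp
      rw [trim_measurableSet_eq hm' MeasurableSet.univ,
        trim_measurableSet_eq hm' MeasurableSet.univ, huniv]
      exact hμeq _ ⟨Set.univ, Set.univ, MeasurableSet.univ, MeasurableSet.univ, rfl⟩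
  -- the function Ψ
  set Φ : (ℝ × 𝒲) × ℝ → ℝ := fun p =>
    (g₀ p.1)⁻¹ * (H₀ (p.2, p.1.2) * (p.1.1 - Qbar₀ (p.2, p.1.2))
      + Qbar₀ (p.2 + δ p.1.2, p.1.2) - ψ₀ - G₀ p.1) with hΦ_def
  have hΦ_meas : Measurable Φ := by
    apply Measurable.mul
    · exact (hg₀_meas.comp measurable_fst).inv
    · refine Measurable.sub (Measurable.sub (Measurable.add ?_ ?_) measurable_const)
        (hG₀_meas.comp measurable_fst)
      · exact (hH₀_meas.comp (measurable_snd.prodMk measurable_fst.snd)).mul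
          (measurable_fst.fst.sub
            (hQbar₀_meas.comp (measurable_snd.prodMk measurable_fst.snd)))
      · exact hQbar₀_meas.comp
          ((measurable_snd.add (hδ.comp measurable_fst.snd)).prodMk measurable_fst.snd)
  set Ψ : Ω → ℝ := fun ω => Φ ((Y ω, W ω), A ω) with hΨ_def
  have hΨ_eq : ∀ ω, Ψ ω = (g₀ (Y ω, W ω))⁻¹ * (D ω - G₀ (Y ω, W ω)) := by
    intro ω
    show (g₀ (Y ω, W ω))⁻¹ * (H₀ (A ω, W ω) * (Y ω - Qbar₀ (A ω, W ω))
        + Qbar₀ (A ω + δ (W ω), W ω) - ψ₀ - G₀ (Y ω, W ω))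
      = (g₀ (Y ω, W ω))⁻¹ * ((H₀ (A ω, W ω) * (Y ω - Qbar₀ (A ω, W ω))
        + Qbar₀ (A ω + δ (W ω), W ω) - ψ₀) - G₀ (Y ω, W ω))
    ring
  have hΨ_meas : Measurable Ψ := hΦ_meas.comp (hpair.prodMk hA)
  have hΨ_sm : StronglyMeasurable[(MeasurableSpace.comap (fun ω => ((Y ω, W ω), A ω)) inferInstance : MeasurableSpace Ω)] Ψ :=
    (hΦ_meas.comp (measurable_iff_comap_le.mpr le_rfl)).stronglyMeasurable
  have hΨ_bd : ∀ ω, |Ψ ω| ≤ ε⁻¹ * (MH * (MY + MQ) + MQ + |ψ₀| + MG) := by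
    intro ω
    rw [hΨ_eq, abs_mul]
    have h1 : |(g₀ (Y ω, W ω))⁻¹| ≤ ε⁻¹ := by
      rw [abs_of_nonneg (inv_nonneg.mpr (le_of_lt (hg_pos _)))]
      exact inv_anti₀ hε (hg₀_bd _).1
    have h2 : |D ω - G₀ (Y ω, W ω)| ≤ MH * (MY + MQ) + MQ + |ψ₀| + MG :=
      (abs_sub _ _).trans (add_le_add (hD_bd ω) (hMG _))
    exact mul_le_mul h1 h2 (abs_nonneg _) (inv_nonneg.mpr (le_of_lt hε))
  have intΨ : Integrable Ψ P := integrable_of_bdd' hΨ_meas.aestronglyMeasurable hΨ_bd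
  have intCΨ : Integrable (fun ω => C ω * Ψ ω) P := by
    refine integrable_of_bdd' (hC.mul hΨ_meas).aestronglyMeasurable
      (M := ε⁻¹ * (MH * (MY + MQ) + MQ + |ψ₀| + MG)) fun ω => ?_
    rw [abs_mul]
    calc |C ω| * |Ψ ω| ≤ 1 * (ε⁻¹ * (MH * (MY + MQ) + MQ + |ψ₀| + MG)) := by
          refine mul_le_mul ?_ (hΨ_bd ω) (abs_nonneg _) (by norm_num)
          rw [abs_of_nonneg (hC_nonneg ω)]; exact hC_le_one ω
      _ = _ := one_mul _
  -- ∫ C·Ψ = ∫ g₀(Y,W)·Ψ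
  have hswap : ∫ ω, C ω * Ψ ω ∂P = ∫ ω, g₀ (Y ω, W ω) * Ψ ω ∂P := by
    have h1 : ∫ ω, Ψ ω ∂μ₁ = ∫ ω, C ω * Ψ ω ∂P := by
      have hwd := integral_withDensity_eq_integral_smul (μ := P)
        (f := fun ω => (C ω).toNNReal) (measurable_real_toNNReal.comp hC) Ψ
      have hwd' : ∫ ω, Ψ ω ∂μ₁ = ∫ x, (fun ω => (C ω).toNNReal) x • Ψ x ∂P := hwd
      rw [hwd']
      refine integral_congr_ae (Filter.Eventually.of_forall fun ω => ?_)
      simp [NNReal.smul_def, Real.coe_toNNReal _ (hC_nonneg ω)]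
    have h2 : ∫ ω, Ψ ω ∂μ₂ = ∫ ω, g₀ (Y ω, W ω) * Ψ ω ∂P := by
      have hwd := integral_withDensity_eq_integral_smul (μ := P)
        (f := fun ω => (g₀ (Y ω, W ω)).toNNReal) (measurable_real_toNNReal.comp hgp_meas) Ψ
      have hwd' : ∫ ω, Ψ ω ∂μ₂ = ∫ x, (fun ω => (g₀ (Y ω, W ω)).toNNReal) x • Ψ x ∂P := hwd
      rw [hwd']
      refine integral_congr_ae (Filter.Eventually.of_forall fun ω => ?_)
      simp [NNReal.smul_def, Real.coe_toNNReal _ (le_of_lt (hg_pos (Y ω, W ω)))]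
    have h3 : ∫ ω, Ψ ω ∂μ₁ = ∫ ω, Ψ ω ∂μ₂ := by
      rw [integral_trim hm' hΨ_sm (μ := μ₁), integral_trim hm' hΨ_sm (μ := μ₂), htrim]
    rw [← h1, h3, h2]
  -- evaluate ∫ g₀(Y,W)·Ψ
  have hgΨ : ∫ ω, g₀ (Y ω, W ω) * Ψ ω ∂P = 0 := by
    have hptw : (fun ω => g₀ (Y ω, W ω) * Ψ ω) = fun ω => D ω - G₀ (Y ω, W ω) := by
      funext ω
      rw [hΨ_eq, mul_inv_cancel_left₀ (ne_of_gt (hg_pos (Y ω, W ω)))]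
    rw [hptw, integral_sub intD intGp, hintG, sub_self]
  ----------------------------------------------------------------
  -- final assembly
  ----------------------------------------------------------------
  have hfinal : (fun ω => C ω / g₀ (Y ω, W ω) * D ω
        - (C ω / g₀ (Y ω, W ω) - 1) * G₀ (Y ω, W ω))
      = fun ω => C ω * Ψ ω + G₀ (Y ω, W ω) := by
    funext ω
    rw [hΨ_eq]
    have hg0 : g₀ (Y ω, W ω) ≠ 0 := ne_of_gt (hg_pos _)
    field_simp
    ring
  calc ∫ ω, ((C ω / g₀ (Y ω, W ω)) * D ω
        - (C ω / g₀ (Y ω, W ω) - 1) * G₀ (Y ω, W ω)) ∂P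
      = ∫ ω, (C ω * Ψ ω + G₀ (Y ω, W ω)) ∂P := by rw [hfinal]
    _ = (∫ ω, C ω * Ψ ω ∂P) + ∫ ω, G₀ (Y ω, W ω) ∂P := integral_add intCΨ intGp
    _ = 0 + ∫ ω, D ω ∂P := by rw [hswap, hgΨ, hintG]
    _ = 0 := by rw [zero_add, hintD]
end
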